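/- arXiv:1510.01613 — 9 statements merged into one kernel-verified Lean document; each statement's English description precedes it below -/
import Mathlib

section
/- Let G be a Polish group. Then the Haar meager subsets of G form a σ-ideal: every subset of a Haar meager set is Haar meager, and the union of countably many Haar meager sets is Haar meager. -/
open Topology Filter Set TopologicalSpace Pointwise ENNReal

/-- A set `A` in a Polish group `G` is *Haar meager* if there are a Borel set `B ⊇ A`,
a nonempty compact metrizable space `K` and a continuous map `f : K → G` such that
`f ⁻¹' (g • B • h)` is meager in `K` for all `g, h ∈ G`. -/
def IsHaarMeager {G : Type*} [Group G] [TopologicalSpace G] (A : Set G) : Prop :=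
  ∃ B : Set G, A ⊆ B ∧ @MeasurableSet G (borel G) B ∧
    ∃ (K : Type) (tK : TopologicalSpace K),
      @CompactSpace K tK ∧ @TopologicalSpace.MetrizableSpace K tK ∧ Nonempty K ∧
      ∃ f : K → G, @Continuous K G tK _ f ∧
        ∀ g h : G, @IsMeagre K tK (f ⁻¹' ((fun b => g * b * h) '' B))


section MeagerTransfer

/-- Preimage of a meager set under a homeomorphism is meager. -/
lemma HM.isMeagre_preimage_homeomorph {α β : Type*} [TopologicalSpace α] [TopologicalSpace β]
    (e : α ≃ₜ β) {s : Set β} (hs : IsMeagre s) : IsMeagre (e ⁻¹' s) := by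
  rw [IsMeagre, ← Set.preimage_compl]
  rw [IsMeagre, ← e.residual_map_eq, Filter.mem_map] at hs
  exact hs

lemma HM.isMeagre_union {α : Type*} [TopologicalSpace α] {s t : Set α}
    (hs : IsMeagre s) (ht : IsMeagre t) : IsMeagre (s ∪ t) := by
  rw [IsMeagre, Set.compl_union]
  exact Filter.inter_mem hs ht

end MeagerTransfer

section KuratowskiUlam

variable {X Y : Type*} [TopologicalSpace X] [TopologicalSpace Y]

/-- Kuratowski-Ulam, easy direction: if `M` is meager in `X × Y`, then the set of `x` whose
section is meager is residual. -/
lemma HM.ku1 [SecondCountableTopology Y] {M : Set (X × Y)} (hM : IsMeagre M) :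
    ∃ R ∈ residual X, ∀ x ∈ R, IsMeagre {y : Y | (x, y) ∈ M} := by
  rw [IsMeagre] at hM
  obtain ⟨S, hSo, hSd, hSc, hSsub⟩ := mem_residual_iff.1 hM
  set 𝔅 : Set (Set Y) := {V | V ∈ countableBasis Y ∧ V.Nonempty} with h𝔅
  have h𝔅c : 𝔅.Countable := (countable_countableBasis Y).mono fun V hV => hV.1
  set A : Set (X × Y) → Set Y → Set X := fun W V => Prod.fst '' (W ∩ (univ ×ˢ V)) with hA
  have hAopen : ∀ W ∈ S, ∀ V ∈ 𝔅, IsOpen (A W V) := by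
    intro W hW V hV
    exact isOpenMap_fst _ ((hSo W hW).inter (isOpen_univ.prod (isOpen_of_mem_countableBasis hV.1)))
  have hAdense : ∀ W ∈ S, ∀ V ∈ 𝔅, Dense (A W V) := by
    intro W hW V hV
    rw [dense_iff_inter_open]
    intro O hO hOne
    have hne : (O ×ˢ V).Nonempty := hOne.prod hV.2
    obtain ⟨p, hpOV, hpW⟩ := (hSd W hW).inter_open_nonempty (O ×ˢ V)
      (hO.prod (isOpen_of_mem_countableBasis hV.1)) hne
    exact ⟨p.1, hpOV.1, ⟨p, ⟨hpW, ⟨trivial, hpOV.2⟩⟩, rfl⟩⟩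
  refine ⟨⋂ W ∈ S, ⋂ V ∈ 𝔅, A W V, ?_, ?_⟩
  · refine (countable_bInter_mem hSc).2 fun W hW => (countable_bInter_mem h𝔅c).2 fun V hV => ?_
    exact residual_of_dense_open (hAopen W hW V hV) (hAdense W hW V hV)
  · intro x hx
    simp only [mem_iInter] at hx
    rw [IsMeagre]
    have hsec : (⋂ W ∈ S, {y : Y | (x, y) ∈ W}) ⊆ {y : Y | (x, y) ∈ M}ᶜ := by
      intro y hy
      simp only [mem_iInter, mem_setOf_eq] at hy
      intro hyM
      exact absurd (hSsub (by exact fun W hW => hy W hW) : (x, y) ∈ Mᶜ) (by simpa using hyM)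
    refine mem_of_superset ((countable_bInter_mem hSc).2 fun W hW => ?_) hsec
    refine residual_of_dense_open ((hSo W hW).preimage (Continuous.prodMk_right x)) ?_
    -- density of the section of W at x
    have hbasis := isBasis_countableBasis Y
    rw [hbasis.dense_iff]
    intro V hV hVne
    obtain ⟨p, ⟨hpW, ⟨_, hpV⟩⟩, hp1⟩ := hx W hW V ⟨hV, hVne⟩
    have hpx : (x, p.2) = p := by rw [← hp1]
    exact ⟨p.2, hpV, by rw [mem_setOf_eq, hpx]; exact hpW⟩



/-- Kuratowski-Ulam, hard direction: a Baire measurable set all of whose sections are meager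
is meager. -/
lemma HM.ku2 [SecondCountableTopology Y] [BaireSpace X] [BaireSpace Y]
    {S : Set (X × Y)} (hS : BaireMeasurableSet S)
    (h : ∀ x : X, IsMeagre {y : Y | (x, y) ∈ S}) : IsMeagre S := by
  obtain ⟨U, hUo, hSU⟩ := hS.residualEq_isOpen
  set M : Set (X × Y) := {p | ¬ ((p ∈ S) ↔ (p ∈ U))} with hMdef
  have hM : IsMeagre M := by
    rw [IsMeagre]
    have h2 : {p : X × Y | (p ∈ S) = (p ∈ U)} ∈ residual _ := hSU
    refine mem_of_superset h2 ?_
    intro p hp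
    simp only [mem_setOf_eq] at hp
    simp only [hMdef, mem_compl_iff, mem_setOf_eq, not_not]
    exact iff_of_eq hp
  have hUS : U ⊆ S ∪ M := fun p hp => by
    by_cases hpM : p ∈ M
    · exact Or.inr hpM
    · simp only [hMdef, mem_setOf_eq, not_not] at hpM; exact Or.inl (hpM.2 hp)
  have hSUM : S ⊆ U ∪ M := fun p hp => by
    by_cases hpM : p ∈ M
    · exact Or.inr hpM
    · simp only [hMdef, mem_setOf_eq, not_not] at hpM; exact Or.inl (hpM.1 hp)
  have hUempty : U = ∅ := by
    by_contra hne
    obtain ⟨p, hp⟩ := nonempty_iff_ne_empty.2 hne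
    obtain ⟨O, V, hOo, hVo, hpO, hpV, hOV⟩ := isOpen_prod_iff.1 hUo p.1 p.2 hp
    obtain ⟨R, hR, hRsec⟩ := HM.ku1 hM
    obtain ⟨x, hxO, hxR⟩ := (dense_of_mem_residual hR).inter_open_nonempty O hOo ⟨p.1, hpO⟩
    have hVsub : V ⊆ {y : Y | (x, y) ∈ S} ∪ {y : Y | (x, y) ∈ M} := by
      intro y hy
      exact hUS (hOV ⟨hxO, hy⟩)
    have hVme : IsMeagre V :=
      (HM.isMeagre_union (h x) (hRsec x hxR)).mono hVsub
    obtain ⟨y, hyV, hyVc⟩ := (dense_of_mem_residual hVme).inter_open_nonempty V hVo ⟨p.2, hpV⟩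
    exact hyVc hyV
  refine hM.mono ?_
  intro p hp
  rcases hSUM hp with h1 | h1
  · rw [hUempty] at h1; exact absurd h1 (notMem_empty p)
  · exact h1

end KuratowskiUlam

/-- A meager set of `α` pulls back to a meager set of the subspace `closure U`, `U` open. -/
lemma HM.isMeagre_restrict_closure {α : Type*} [TopologicalSpace α] {U : Set α} (hU : IsOpen U)
    {M : Set α} (hM : IsMeagre M) :
    IsMeagre ((fun x : closure U => (x : α)) ⁻¹' M) := by
  obtain ⟨S, hSnwd, hSc, hSsub⟩ := isMeagre_iff_countable_union_isNowhereDense.1 hM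
  rw [isMeagre_iff_countable_union_isNowhereDense]
  refine ⟨(fun t => (fun x : closure U => (x : α)) ⁻¹' closure t) '' S, ?_, hSc.image _, ?_⟩
  · rintro _ ⟨t, htS, rfl⟩
    have htnwd : interior (closure t) = (∅ : Set α) := hSnwd t htS
    have hcl : IsClosed ((fun x : closure U => (x : α)) ⁻¹' closure t) :=
      isClosed_closure.preimage continuous_subtype_val
    rw [hcl.isNowhereDense_iff, eq_empty_iff_forall_notMem]
    rintro z hz
    obtain ⟨O, hOsub, hOo, hzO⟩ := mem_interior.1 hz
    obtain ⟨W, hWo, hWeq⟩ := isOpen_induced_iff.1 hOo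
    have hzW : (z : α) ∈ W := by rw [← hWeq] at hzO; exact hzO
    obtain ⟨w, hwW, hwU⟩ : (W ∩ U).Nonempty := mem_closure_iff.1 z.2 W hWo hzW
    have hsub : W ∩ U ⊆ closure t := by
      intro w' hw'
      have hw'cl : w' ∈ closure U := subset_closure hw'.2
      have hmem : (⟨w', hw'cl⟩ : closure U) ∈ O := by
        rw [← hWeq]; exact hw'.1
      exact hOsub hmem
    have hmem2 := interior_maximal hsub (hWo.inter hU) ⟨hwW, hwU⟩
    rw [htnwd] at hmem2
    exact hmem2
  · intro z hz
    have hzM : (z : α) ∈ M := hz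
    obtain ⟨t, htS, hzt⟩ := hSsub hzM
    exact ⟨_, ⟨t, htS, rfl⟩, subset_closure hzt⟩

section Convolution

variable {G : Type*} [Group G] [MetricSpace G] [IsTopologicalGroup G]
  {K : ℕ → Type} [∀ n, TopologicalSpace (K n)] [∀ n, CompactSpace (K n)]
  (f : ∀ n, K n → G)

/-- compact "test block" associated to a piece of a witness. -/
def hmE (n : ℕ) (t : Set (K n) × G) : Set G :=
  (fun x => t.2⁻¹ * f n x) '' closure t.1 ∪ {1}

/-- property of a chosen pair at step `n`, relative to the compact set `D` of previous
partial products. -/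
def hmP (n : ℕ) (D : Set G) (t : Set (K n) × G) : Prop :=
  IsOpen t.1 ∧ t.1.Nonempty ∧
    ∀ a ∈ D, ∀ x ∈ closure t.1, dist (a * (t.2⁻¹ * f n x)) a ≤ (1/2) ^ n

lemma hmE_compact (hf : ∀ n, Continuous (f n)) (n : ℕ) (t : Set (K n) × G) : IsCompact (hmE f n t) :=
  ((isClosed_closure.isCompact).image (continuous_const.mul (hf n))).union isCompact_singleton

lemma one_mem_hmE (n : ℕ) (t : Set (K n) × G) : (1 : G) ∈ hmE f n t := Or.inr rfl

variable (hf : ∀ n, Continuous (f n))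
  (step : ∀ (n : ℕ) (D : Set G), IsCompact D → {t : Set (K n) × G // hmP f n D t})

/-- The compact set of partial products available before step `n`. -/
noncomputable def hmD (hf : ∀ n, Continuous (f n))
    (step : ∀ (n : ℕ) (D : Set G), IsCompact D → {t : Set (K n) × G // hmP f n D t}) :
    ℕ → {D : Set G // IsCompact D}
  | 0 => ⟨{1}, isCompact_singleton⟩
  | n+1 => ⟨(hmD hf step n).1 * hmE f n (step n (hmD hf step n).1 (hmD hf step n).2).1,
      (hmD hf step n).2.mul (hmE_compact f hf n _)⟩

/-- The chosen pair (open set, translation) at step `n`. -/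
noncomputable def hmT (n : ℕ) : {t : Set (K n) × G // hmP f n (hmD f hf step n).1 t} :=
  step n (hmD f hf step n).1 (hmD f hf step n).2

lemma hmD_succ (n : ℕ) :
    (hmD f hf step (n+1)).1 = (hmD f hf step n).1 * hmE f n (hmT f hf step n).1 := rfl

lemma one_mem_hmD (n : ℕ) : (1 : G) ∈ (hmD f hf step n).1 := by
  induction n with
  | zero => exact rfl
  | succ n ih =>
      rw [hmD_succ]
      simpa using Set.mul_mem_mul ih (one_mem_hmE f n _)

lemma hmD_mono {m n : ℕ} (h : m ≤ n) :
    (hmD f hf step m).1 ⊆ (hmD f hf step n).1 := by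
  induction n with
  | zero => simpa [Nat.le_zero.mp h] using Set.Subset.rfl
  | succ n ih =>
      rcases Nat.lt_or_ge m (n+1) with h' | h'
      · refine (ih (Nat.lt_succ_iff.mp h')).trans ?_
        intro a ha
        rw [hmD_succ]
        simpa using Set.mul_mem_mul ha (one_mem_hmE f n _)
      · have : m = n + 1 := le_antisymm h h'
        subst this; exact Set.Subset.rfl

/-- The fiber at index `n` of the space on which the final test function will live. -/
abbrev hmKfam (n : ℕ) := {x : K n // x ∈ closure (hmT f hf step n).1.1}

/-- The space on which the final test function will live. -/
abbrev hmK := ∀ n, hmKfam f hf step n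

/-- The `n`-th term of the infinite product. -/
noncomputable def hmg (n : ℕ) (x : hmK f hf step) : G :=
  (hmT f hf step n).1.2⁻¹ * f n (x n).1

lemma hmg_mem (n : ℕ) (x : hmK f hf step) :
    hmg f hf step n x ∈ hmE f n (hmT f hf step n).1 :=
  Or.inl ⟨(x n).1, (x n).2, rfl⟩

lemma hmg_continuous (n : ℕ) : Continuous (hmg f hf step n) :=
  continuous_const.mul ((hf n).comp (continuous_subtype_val.comp (continuous_apply n)))

/-- Partial product of `k` terms starting at index `j`. -/
noncomputable def hmR (hf : ∀ n, Continuous (f n))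
    (step : ∀ (n : ℕ) (D : Set G), IsCompact D → {t : Set (K n) × G // hmP f n D t})
    (x : hmK f hf step) (j : ℕ) : ℕ → G
  | 0 => 1
  | k+1 => hmR hf step x j k * hmg f hf step (j+k) x

lemma hmR_mem (x : hmK f hf step) (j k : ℕ) :
    hmR f hf step x j k ∈ (hmD f hf step (j+k)).1 := by
  induction k with
  | zero => exact one_mem_hmD f hf step j
  | succ k ih =>
      show hmR f hf step x j k * hmg f hf step (j+k) x ∈ _
      rw [show j + (k+1) = (j+k) + 1 from rfl, hmD_succ]
      exact Set.mul_mem_mul ih (hmg_mem f hf step (j+k) x)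

lemma hmR_dist (x : hmK f hf step) (j k : ℕ) :
    dist (hmR f hf step x j k) (hmR f hf step x j (k+1)) ≤ (1/2)^j * (1/2)^k := by
  rw [dist_comm]
  have h := (hmT f hf step (j+k)).2.2.2 _ (hmR_mem f hf step x j k) (x (j+k)).1 (x (j+k)).2
  calc dist (hmR f hf step x j (k+1)) (hmR f hf step x j k) ≤ (1/2)^(j+k) := h
    _ = (1/2)^j * (1/2)^k := pow_add _ _ _

lemma hmR_cauchy (x : hmK f hf step) (j : ℕ) : CauchySeq (hmR f hf step x j) :=
  cauchySeq_of_le_geometric (1/2) ((1/2)^j) (by norm_num) (hmR_dist f hf step x j)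

lemma hmR_split (x : hmK f hf step) (j k l : ℕ) :
    hmR f hf step x j (k+l) = hmR f hf step x j k * hmR f hf step x (j+k) l := by
  induction l with
  | zero => simp [hmR]
  | succ l ih =>
      show hmR f hf step x j (k+l) * hmg f hf step (j+(k+l)) x = _
      rw [ih, show j + (k+l) = (j+k) + l by omega]
      show _ = _ * (hmR f hf step x (j+k) l * hmg f hf step ((j+k)+l) x)
      rw [mul_assoc]

lemma hmR_congr {x y : hmK f hf step} (j k : ℕ)
    (h : ∀ m, j ≤ m → m < j + k → x m = y m) :
    hmR f hf step x j k = hmR f hf step y j k := by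
  induction k with
  | zero => rfl
  | succ k ih =>
      show hmR f hf step x j k * hmg f hf step (j+k) x
          = hmR f hf step y j k * hmg f hf step (j+k) y
      rw [ih (fun m h1 h2 => h m h1 (by omega)), hmg, hmg,
        h (j+k) (by omega) (by omega)]

lemma hmR_continuous (j k : ℕ) : Continuous (fun x => hmR f hf step x j k) := by
  induction k with
  | zero => exact continuous_const
  | succ k ih => exact ih.mul (hmg_continuous f hf step (j+k))

end Convolution

section Translate

lemma HM.translate_iff {G : Type*} [Group G] (a c z g h w : G) (B : Set G) :
    a * (c⁻¹ * w) * z ∈ (fun b => g * b * h) '' B ↔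
      w ∈ (fun b => (c * a⁻¹ * g) * b * (h * z⁻¹)) '' B := by
  constructor
  · rintro ⟨b, hb, he⟩
    refine ⟨b, hb, ?_⟩
    simp only at he ⊢
    have hw : w = c * a⁻¹ * (g * b * h) * z⁻¹ := by rw [he]; group
    rw [hw]; group
  · rintro ⟨b, hb, he⟩
    refine ⟨b, hb, ?_⟩
    simp only at he ⊢
    rw [← he]
    group

end Translate

/-- Normalization: every Haar-meager witness can be realized on a compact subset of `ℓ^∞(ℕ)`. -/
theorem HM.normalize {G : Type*} [Group G] [TopologicalSpace G] {B : Set G}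
    (h : ∃ (K : Type) (tK : TopologicalSpace K),
      @CompactSpace K tK ∧ @TopologicalSpace.MetrizableSpace K tK ∧ Nonempty K ∧
      ∃ f : K → G, @Continuous K G tK _ f ∧
        ∀ g h : G, @IsMeagre K tK (f ⁻¹' ((fun b => g * b * h) '' B))) :
    ∃ Cs : Set (lp (fun _ : ℕ => ℝ) ∞), IsCompact Cs ∧ Cs.Nonempty ∧
      ∃ f : ↥Cs → G, Continuous f ∧
        ∀ g h : G, IsMeagre (f ⁻¹' ((fun b => g * b * h) '' B)) := by
  obtain ⟨K, tK, hcomp, hmetr, hne, f, hfc, hfm⟩ := h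
  letI := tK
  haveI := hcomp
  haveI := hmetr
  haveI := hne
  letI : MetricSpace K := TopologicalSpace.metrizableSpaceMetric K
  haveI : SeparableSpace K := inferInstance
  have he : Isometry (kuratowskiEmbedding K) := kuratowskiEmbedding.isometry K
  let φ : K ≃ₜ ↥(range (kuratowskiEmbedding K)) := he.isometryEquivOnRange.toHomeomorph
  refine ⟨range (kuratowskiEmbedding K), isCompact_range he.continuous, range_nonempty _,
    f ∘ φ.symm, hfc.comp φ.symm.continuous, ?_⟩
  intro g h
  have : (f ∘ φ.symm) ⁻¹' ((fun b => g * b * h) '' B)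
      = φ.symm ⁻¹' (f ⁻¹' ((fun b => g * b * h) '' B)) := rfl
  rw [this]
  exact HM.isMeagre_preimage_homeomorph φ.symm (hfm g h)

/-- Main auxiliary theorem: a countable union of Borel sets, each of which admits a (normalized)
Haar-meager witness, is Haar meager. -/
theorem HM.aux_union {G : Type*} [Group G] [TopologicalSpace G] [IsTopologicalGroup G]
    [PolishSpace G] {X₀ : Type} [MetricSpace X₀]
    (C : ℕ → Set X₀) (hCc : ∀ n, IsCompact (C n)) (hCne : ∀ n, (C n).Nonempty)
    (f : ∀ n, ↥(C n) → G) (hf : ∀ n, Continuous (f n))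
    (Bs : ℕ → Set G) (hB : ∀ n, @MeasurableSet G (borel G) (Bs n))
    (hmgr : ∀ (n : ℕ) (g h : G), IsMeagre (f n ⁻¹' ((fun b => g * b * h) '' Bs n))) :
    IsHaarMeager (⋃ n, Bs n) := by
  classical
  letI := upgradeIsCompletelyMetrizable G
  haveI hcs : ∀ n, CompactSpace (C n) := fun n => isCompact_iff_compactSpace.1 (hCc n)
  haveI hcne : ∀ n, Nonempty (C n) := fun n => (hCne n).to_subtype
  -- the basic step: choosing a small piece of each witness
  have stepex : ∀ (n : ℕ) (D : Set G), IsCompact D → ∃ t : Set ↥(C n) × G, hmP f n D t := by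
    intro n D hD
    obtain ⟨p⟩ : Nonempty ↥(C n) := hcne n
    have hNopen : IsOpen {q : G × G | dist (q.1 * q.2) q.1 < (1/2 : ℝ)^n} := by
      have hcont : Continuous fun q : G × G => dist (q.1 * q.2) q.1 :=
        (continuous_fst.mul continuous_snd).dist continuous_fst
      exact isOpen_lt hcont continuous_const
    have hDsub : D ×ˢ ({1} : Set G) ⊆ {q : G × G | dist (q.1 * q.2) q.1 < (1/2 : ℝ)^n} := by
      rintro ⟨a, b⟩ ⟨ha, hb⟩
      simp only [mem_singleton_iff] at hb
      subst hb
      simp only [mem_setOf_eq, mul_one, dist_self]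
      positivity
    obtain ⟨u, v, huo, hvo, hDu, h1v, huv⟩ :=
      generalized_tube_lemma hD isCompact_singleton hNopen hDsub
    refine ⟨((fun x : ↥(C n) => (f n p)⁻¹ * f n x) ⁻¹' v, f n p), ?_, ⟨p, ?_⟩, ?_⟩
    · exact (continuous_const.mul (hf n)).isOpen_preimage v hvo
    · simp only [mem_preimage, inv_mul_cancel]
      exact h1v rfl
    · intro a ha x hx
      have h1 : (f n p)⁻¹ * f n x ∈ closure v :=
        (continuous_const.mul (hf n)).closure_preimage_subset v hx
      have h2 : IsClosed {w : G | dist (a * w) a ≤ (1/2:ℝ)^n} :=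
        isClosed_le ((continuous_const.mul continuous_id).dist continuous_const) continuous_const
      have h3 : v ⊆ {w : G | dist (a * w) a ≤ (1/2:ℝ)^n} := by
        intro w hw
        have : dist (a * w) a < (1/2:ℝ)^n := huv (Set.mk_mem_prod (hDu ha) hw)
        exact le_of_lt this
      exact closure_minimal h3 h2 h1
  let step : ∀ (n : ℕ) (D : Set G), IsCompact D → {t : Set ↥(C n) × G // hmP f n D t} :=
    fun n D hD => ⟨(stepex n D hD).choose, (stepex n D hD).choose_spec⟩
  haveI hLne : ∀ m, Nonempty (hmKfam f hf step m) := by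
    intro m
    obtain ⟨p, hp⟩ := (hmT f hf step m).2.2.1
    exact ⟨⟨p, subset_closure hp⟩⟩
  haveI hLcomp : ∀ m, CompactSpace (hmKfam f hf step m) :=
    fun m => isCompact_iff_compactSpace.1 isClosed_closure.isCompact
  -- limits of the partial products
  have hZex : ∀ (j : ℕ) (x : hmK f hf step), ∃ z : G,
      Tendsto (fun k => hmR f hf step x j k) atTop (𝓝 z) :=
    fun j x => cauchySeq_tendsto_of_complete (hmR_cauchy f hf step x j)
  choose Z hZ using hZex
  have hZsplit : ∀ (j k : ℕ) (x : hmK f hf step),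
      Z j x = hmR f hf step x j k * Z (j+k) x := by
    intro j k x
    have h1 : Tendsto (fun l => hmR f hf step x j (l+k)) atTop (𝓝 (Z j x)) :=
      (hZ j x).comp (tendsto_add_atTop_nat k)
    have heq : (fun l => hmR f hf step x j (l+k))
        = fun l => hmR f hf step x j k * hmR f hf step x (j+k) l := by
      funext l
      rw [Nat.add_comm l k, hmR_split f hf step x j k l]
    rw [heq] at h1
    exact tendsto_nhds_unique h1 ((hZ (j+k) x).const_mul _)
  have hZcongr : ∀ (j : ℕ) (x y : hmK f hf step),
      (∀ m, j ≤ m → x m = y m) → Z j x = Z j y := by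
    intro j x y hxy
    have heq : (fun k => hmR f hf step x j k) = fun k => hmR f hf step y j k :=
      funext fun k => hmR_congr f hf step j k (fun m h1 _ => hxy m h1)
    exact tendsto_nhds_unique (heq ▸ hZ j x) (hZ j y)
  set F : hmK f hf step → G := Z 0 with hF
  have hFdist : ∀ (k : ℕ) (x : hmK f hf step),
      dist (hmR f hf step x 0 k) (F x) ≤ (1/2)^k * 2 := by
    intro k x
    have hle := dist_le_of_le_geometric_of_tendsto (1/2) ((1/2:ℝ)^0) (by norm_num)
        (hmR_dist f hf step x 0) (hZ 0 x) k
    calc dist (hmR f hf step x 0 k) (F x) ≤ (1/2:ℝ)^0 * (1/2)^k / (1 - 1/2) := hle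
      _ = (1/2)^k * 2 := by ring
  have hFcont : Continuous F := by
    have htu : TendstoUniformly (fun k (x : hmK f hf step) => hmR f hf step x 0 k) F atTop := by
      rw [Metric.tendstoUniformly_iff]
      intro ε hε
      have h2 : Tendsto (fun k : ℕ => (1/2:ℝ)^k * 2) atTop (𝓝 0) := by
        simpa using (tendsto_pow_atTop_nhds_zero_of_lt_one (r := (1/2:ℝ)) (by norm_num) (by norm_num)).mul_const (2:ℝ)
      filter_upwards [h2.eventually (gt_mem_nhds hε)] with k hk x
      calc dist (F x) (hmR f hf step x 0 k) = dist (hmR f hf step x 0 k) (F x) := dist_comm _ _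
        _ ≤ (1/2)^k * 2 := hFdist k x
        _ < ε := hk
    exact htu.continuous (Filter.Eventually.of_forall fun k => hmR_continuous f hf step 0 k).frequently
  -- the key meagerness fact for each translate of each `Bs n`
  have key : ∀ (n : ℕ) (g h : G), IsMeagre (F ⁻¹' ((fun b => g * b * h) '' Bs n)) := by
    intro n g h
    set T : Set G := (fun b => g * b * h) '' Bs n with hTdef
    set ψ : (hmK f hf step) ≃ₜ ((∀ m : {m // m ≠ n}, hmKfam f hf step m.1) × hmKfam f hf step n) :=
      (Homeomorph.piSplitAt n (hmKfam f hf step)).trans (Homeomorph.prodComm _ _) with hψ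
    -- coordinates of ψ.symm
    have hcoordn : ∀ (r : ∀ m : {m // m ≠ n}, hmKfam f hf step m.1) (y : hmKfam f hf step n),
        (ψ.symm (r, y)) n = y := by
      intro r y
      show ((Homeomorph.piSplitAt n (hmKfam f hf step)).symm
        ((Homeomorph.prodComm _ _).symm (r, y))) n = y
      simp [Homeomorph.piSplitAt, Equiv.piSplitAt]
    have hcoordm : ∀ (r : ∀ m : {m // m ≠ n}, hmKfam f hf step m.1) (y : hmKfam f hf step n)
        (m : ℕ) (hm : m ≠ n), (ψ.symm (r, y)) m = r ⟨m, hm⟩ := by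
      intro r y m hm
      show ((Homeomorph.piSplitAt n (hmKfam f hf step)).symm
        ((Homeomorph.prodComm _ _).symm (r, y))) m = r ⟨m, hm⟩
      simp [Homeomorph.piSplitAt, Equiv.piSplitAt, hm]
    -- Baire-category instances
    letI : MetricSpace (∀ m : {m // m ≠ n}, hmKfam f hf step m.1) :=
      TopologicalSpace.metrizableSpaceMetric _
    borelize G
    have hT : MeasurableSet T := by
      have he : (fun b : G => g * b * h)
          = ⇑((Homeomorph.mulLeft g).trans (Homeomorph.mulRight h)) := rfl
      rw [hTdef, he]
      exact (Homeomorph.measurableEmbedding _).measurableSet_image.2 (hB n)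
    borelize ((∀ m : {m // m ≠ n}, hmKfam f hf step m.1) × hmKfam f hf step n)
    have hS'meas : MeasurableSet (ψ.symm ⁻¹' (F ⁻¹' T)) :=
      ((hFcont.comp ψ.symm.continuous).measurable) hT
    have hsec : ∀ r : (∀ m : {m // m ≠ n}, hmKfam f hf step m.1),
        IsMeagre {y : hmKfam f hf step n | (r, y) ∈ ψ.symm ⁻¹' (F ⁻¹' T)} := by
      intro r
      obtain ⟨y₀⟩ : Nonempty (hmKfam f hf step n) := hLne n
      set x₀ : hmK f hf step := ψ.symm (r, y₀) with hx₀
      set ar := hmR f hf step x₀ 0 n with har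
      set zr := Z (n+1) x₀ with hzr
      set cn := (hmT f hf step n).1.2 with hcn
      have hFy : ∀ y : hmKfam f hf step n,
          F (ψ.symm (r, y)) = ar * (cn⁻¹ * f n (y : ↥(C n))) * zr := by
        intro y
        set xy : hmK f hf step := ψ.symm (r, y) with hxy
        have e1 : F xy = hmR f hf step xy 0 (n+1) * Z (n+1) xy := by
          have := hZsplit 0 (n+1) xy
          rwa [Nat.zero_add] at this
        have e2 : hmR f hf step xy 0 (n+1)
            = hmR f hf step xy 0 n * (cn⁻¹ * f n (xy n).1) := by
          simp only [hmR]
          rw [Nat.zero_add]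
          simp only [hmg, hcn]
        have e3 : hmR f hf step xy 0 n = ar := by
          rw [har]
          exact hmR_congr f hf step 0 n fun m _ hml => by
            have hmn : m ≠ n := by omega
            rw [hxy, hx₀, hcoordm r y m hmn, hcoordm r y₀ m hmn]
        have e4 : Z (n+1) xy = zr := by
          rw [hzr]
          refine hZcongr (n+1) xy x₀ fun m hm => ?_
          have hmn : m ≠ n := by omega
          rw [hxy, hx₀, hcoordm r y m hmn, hcoordm r y₀ m hmn]
        have e5 : (xy n).1 = (y : ↥(C n)) := by rw [hxy, hcoordn r y]
        rw [e1, e2, e3, e4, e5]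
      have hset : {y : hmKfam f hf step n | (r, y) ∈ ψ.symm ⁻¹' (F ⁻¹' T)}
          = (fun y : hmKfam f hf step n => (y : ↥(C n))) ⁻¹'
            (f n ⁻¹' ((fun b => (cn * ar⁻¹ * g) * b * (h * zr⁻¹)) '' Bs n)) := by
        ext y
        simp only [mem_setOf_eq, mem_preimage, hFy y, hTdef]
        exact HM.translate_iff ar cn zr g h (f n (y : ↥(C n))) (Bs n)
      rw [hset]
      exact HM.isMeagre_restrict_closure (hmT f hf step n).2.1
        (hmgr n (cn * ar⁻¹ * g) (h * zr⁻¹))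
    have hS'me : IsMeagre (ψ.symm ⁻¹' (F ⁻¹' T)) := HM.ku2 hS'meas.baireMeasurableSet hsec
    have hpre : F ⁻¹' T = ψ ⁻¹' (ψ.symm ⁻¹' (F ⁻¹' T)) := by
      ext x; simp
    rw [hpre]
    exact HM.isMeagre_preimage_homeomorph ψ hS'me
  -- assemble the witness
  refine ⟨⋃ n, Bs n, subset_rfl, ?_, hmK f hf step, inferInstance,
    inferInstance, inferInstance, inferInstance, F, hFcont, ?_⟩
  · letI : MeasurableSpace G := borel G
    exact MeasurableSet.iUnion hB
  · intro g h
    have himg : (fun b => g * b * h) '' (⋃ n, Bs n) = ⋃ n, (fun b => g * b * h) '' Bs n :=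
      image_iUnion
    rw [himg, preimage_iUnion]
    exact isMeagre_iUnion fun n => key n g h

/-- The Haar meager subsets of a Polish group form a σ-ideal. -/
theorem haarMeager_sigma_ideal {G : Type*} [Group G] [TopologicalSpace G]
    [IsTopologicalGroup G] [PolishSpace G] :
    (∀ A B : Set G, A ⊆ B → IsHaarMeager B → IsHaarMeager A) ∧
    (∀ A : ℕ → Set G, (∀ n, IsHaarMeager (A n)) → IsHaarMeager (⋃ n, A n)) := by
  constructor
  · rintro A B hAB ⟨B', hBB', hmeas, rest⟩
    exact ⟨B', hAB.trans hBB', hmeas, rest⟩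
  · intro A hA
    have h1 : ∀ n, ∃ Bn : Set G, A n ⊆ Bn ∧ @MeasurableSet G (borel G) Bn ∧
        ∃ Cs : Set (lp (fun _ : ℕ => ℝ) ∞), IsCompact Cs ∧ Cs.Nonempty ∧
          ∃ f : ↥Cs → G, Continuous f ∧
            ∀ g h : G, IsMeagre (f ⁻¹' ((fun b => g * b * h) '' Bn)) := by
      intro n
      obtain ⟨Bn, hsub, hmeas, hw⟩ := hA n
      exact ⟨Bn, hsub, hmeas, HM.normalize hw⟩
    choose Bs hsub hmeas Cs hCc hCne F hFc hFm using h1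
    obtain ⟨B', hB'sub, rest⟩ := HM.aux_union Cs hCc hCne F hFc Bs hmeas hFm
    exact ⟨B', (Set.iUnion_mono hsub).trans hB'sub, rest⟩
end

section
/- Let G be a Polish group. Then every Haar meager subset of G is meager in G. -/
lemma isMeagre_union_aux {X : Type*} [TopologicalSpace X] {s t : Set X}
    (hs : IsMeagre s) (ht : IsMeagre t) : IsMeagre (s ∪ t) := by
  rw [IsMeagre, Set.compl_union]
  exact Filter.inter_mem hs ht

/-- Every Haar meager subset of a Polish group is meager. -/
theorem isMeagre_of_isHaarMeager {G : Type*} [Group G] [TopologicalSpace G]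
    [IsTopologicalGroup G] [PolishSpace G] (A : Set G) (hA : IsHaarMeager A) :
    IsMeagre A := by
  obtain ⟨B, hAB, hBmeas, K, tK, hKcomp, hKmetr, hKne, f, hf, hm⟩ := hA
  letI := tK
  haveI := hKcomp; haveI := hKmetr; haveI := hKne
  letI : MetricSpace K := TopologicalSpace.metrizableSpaceMetric K
  letI := TopologicalSpace.upgradeIsCompletelyMetrizable G
  letI : MeasurableSpace G := borel G
  haveI : BorelSpace G := ⟨rfl⟩
  suffices hB : IsMeagre B from hB.mono hAB
  obtain ⟨U, hUopen, hBU⟩ := hBmeas.baireMeasurableSet.residualEq_isOpen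
  -- the symmetric difference is meager
  set M : Set G := (B \ U) ∪ (U \ B) with hMdef
  have hM : IsMeagre M := by
    rw [IsMeagre]
    refine Filter.mem_of_superset (Filter.eventuallyEq_set.mp hBU) ?_
    intro x hx
    have hx' : x ∈ B ↔ x ∈ U := hx
    simp only [hMdef, Set.mem_compl_iff, Set.mem_union, Set.mem_diff]
    tauto
  rcases Set.eq_empty_or_nonempty U with hUe | ⟨u, hu⟩
  · refine hM.mono fun x hx => ?_
    simp only [hMdef, Set.mem_union, Set.mem_diff, hUe]
    exact Or.inl ⟨hx, by simp⟩
  · exfalso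
    obtain ⟨k₀⟩ := hKne
    -- translate the hypothesis
    have hm' : ∀ g : G, IsMeagre {k | g * f k ∈ B} := by
      intro g
      have h1 := hm g⁻¹ 1
      have heq : f ⁻¹' ((fun b => g⁻¹ * b * 1) '' B) = {k | g * f k ∈ B} := by
        ext k
        simp only [Set.mem_preimage, Set.mem_image, Set.mem_setOf_eq, mul_one]
        constructor
        · rintro ⟨b, hb, h⟩
          have : g * f k = b := by rw [← h]; group
          rwa [this]
        · intro h
          exact ⟨g * f k, h, by group⟩
      rwa [heq] at h1
    -- cover M by closed nowhere dense sets
    obtain ⟨S, hSnwd, hScount, hMS⟩ :=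
      isMeagre_iff_countable_union_isNowhereDense.mp hM
    set S' : Set (Set G) := closure '' S with hS'def
    have hS'count : S'.Countable := hScount.image _
    have hS'closed : ∀ F ∈ S', IsClosed F := by
      rintro F ⟨s, -, rfl⟩; exact isClosed_closure
    have hS'nwd : ∀ F ∈ S', IsNowhereDense F := by
      rintro F ⟨s, hs, rfl⟩; exact (hSnwd s hs).closure
    have hMS' : M ⊆ ⋃₀ S' := by
      refine hMS.trans ?_
      rintro x ⟨s, hs, hxs⟩
      exact ⟨closure s, ⟨s, hs, rfl⟩, subset_closure hxs⟩
    -- countable basis of K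
    set 𝒱 : Set (Set K) := {V ∈ TopologicalSpace.countableBasis K | V.Nonempty} with h𝒱def
    have h𝒱count : 𝒱.Countable :=
      (TopologicalSpace.countable_countableBasis K).mono (Set.sep_subset _ _)
    -- the bad sets
    set D : Set G × Set K → Set G := fun p => {g | ∀ k ∈ p.2, g * f k ∈ p.1} with hDdef
    have hDnwd : ∀ F ∈ S', ∀ V ∈ 𝒱, IsNowhereDense (D (F, V)) := by
      intro F hF V hV
      have hclosed : IsClosed (D (F, V)) := by
        have : D (F, V) = ⋂ k ∈ V, (fun g => g * f k) ⁻¹' F := by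
          ext g; simp [hDdef]
        rw [this]
        exact isClosed_biInter fun k _ => (hS'closed F hF).preimage (continuous_mul_right (f k))
      rw [hclosed.isNowhereDense_iff]
      by_contra hne
      obtain ⟨g, hg⟩ := Set.nonempty_iff_ne_empty.mpr hne
      obtain ⟨k, hk⟩ := hV.2
      have himg : (fun g => g * f k) '' interior (D (F, V)) ⊆ F := by
        rintro x ⟨g', hg', rfl⟩
        exact interior_subset hg' k hk
      have hopen : IsOpen ((fun g => g * f k) '' interior (D (F, V))) :=
        (Homeomorph.mulRight (f k)).isOpenMap _ isOpen_interior
      have hsub : (fun g => g * f k) '' interior (D (F, V)) ⊆ interior F :=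
        hopen.subset_interior_iff.mpr himg
      have : g * f k ∈ interior F := hsub ⟨g, hg, rfl⟩
      rw [(hS'closed F hF).isNowhereDense_iff.mp (hS'nwd F hF)] at this
      exact this
    -- the union of the bad sets is meager in G
    set Bad : Set G := ⋃₀ (D '' (S' ×ˢ 𝒱)) with hBaddef
    have hBad : IsMeagre Bad := by
      rw [isMeagre_iff_countable_union_isNowhereDense]
      refine ⟨D '' (S' ×ˢ 𝒱), ?_, (hS'count.prod h𝒱count).image _, subset_rfl⟩
      rintro t ⟨⟨F, V⟩, ⟨hF, hV⟩, rfl⟩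
      exact hDnwd F hF V hV
    -- find a good translate g
    set W : Set G := (fun g => g * f k₀) ⁻¹' U with hWdef
    have hWopen : IsOpen W := hUopen.preimage (continuous_mul_right (f k₀))
    have hWne : W.Nonempty := ⟨u * (f k₀)⁻¹, by simp [hWdef, hu]⟩
    obtain ⟨g, hgBad, hgW⟩ := (dense_of_mem_residual hBad).exists_mem_open hWopen hWne
    -- for this g, the preimage of the meager part is meager in K
    have hMg : IsMeagre {k | g * f k ∈ M} := by
      rw [isMeagre_iff_countable_union_isNowhereDense]
      refine ⟨(fun F => {k | g * f k ∈ F}) '' S', ?_, hS'count.image _, ?_⟩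
      · rintro t ⟨F, hF, rfl⟩
        have hTclosed : IsClosed {k | g * f k ∈ F} :=
          (hS'closed F hF).preimage ((continuous_const.mul hf))
        rw [hTclosed.isNowhereDense_iff]
        by_contra hne
        obtain ⟨k, hk⟩ := Set.nonempty_iff_ne_empty.mpr hne
        obtain ⟨V, hVb, hkV, hVsub⟩ :=
          (TopologicalSpace.isBasis_countableBasis K).exists_subset_of_mem_open
            hk isOpen_interior
        have hV𝒱 : V ∈ 𝒱 := ⟨hVb, ⟨k, hkV⟩⟩
        have : g ∈ D (F, V) := by
          intro k' hk'
          have h2 : k' ∈ {k | g * f k ∈ F} := interior_subset (hVsub hk')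
          exact h2
        exact hgBad ⟨D (F, V), ⟨(F, V), ⟨hF, hV𝒱⟩, rfl⟩, this⟩
      · intro k hk
        obtain ⟨F, hF, hkF⟩ := hMS' hk
        exact ⟨{k' | g * f k' ∈ F}, ⟨F, hF, rfl⟩, hkF⟩
    -- the preimage of U is open, nonempty, but meager: contradiction
    have hTmeager : IsMeagre {k | g * f k ∈ U} := by
      refine (isMeagre_union_aux (hm' g) hMg).mono ?_
      intro k hk
      by_cases hkB : g * f k ∈ B
      · exact Or.inl hkB
      · exact Or.inr (Or.inr ⟨hk, hkB⟩)
    have hTopen : IsOpen {k | g * f k ∈ U} := hUopen.preimage (continuous_const.mul hf)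
    have hTne : ({k | g * f k ∈ U}).Nonempty := ⟨k₀, hgW⟩
    obtain ⟨k, hk1, hk2⟩ := (dense_of_mem_residual hTmeager).exists_mem_open hTopen hTne
    exact hk1 hk2
end

section
/- There exist a Gδ set A ⊆ ℝ, a nonempty compact metrizable topological space K, and a continuous map f : K → ℝ such that f⁻¹(z + A) is meager in K for every z ∈ ℝ (so f witnesses that A is Haar meager in the additive group ℝ), while A ∩ f(K) is comeager in the subspace f(K). -/
open Finset Filter Set

namespace HMaux

open Finset Filter Set


/-- sum of bits `x 0, …, x (k-1)` in binary. -/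
def bitsum (k : ℕ) (x : ℕ → Bool) : ℕ := ∑ i ∈ Finset.range k, if x i then 2^i else 0

lemma bitsum_lt (k : ℕ) (x : ℕ → Bool) : bitsum k x < 2^k := by
  induction k with
  | zero => simp [bitsum]
  | succ n ih =>
    have : (if x n then 2^n else 0) ≤ 2^n := by split <;> simp
    have h2 : bitsum (n+1) x = bitsum n x + (if x n then 2^n else 0) := by
      simp [bitsum, Finset.sum_range_succ]
    have : bitsum (n+1) x < 2^n + 2^n := by omega
    have hp : 2^n + 2^n = 2^(n+1) := by ring
    omega

lemma bitsum_inj : ∀ (k : ℕ) (x y : ℕ → Bool), bitsum k x = bitsum k y → ∀ i < k, x i = y i := by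
  intro k
  induction k with
  | zero => intro x y _ i hi; omega
  | succ n ih =>
    intro x y h i hi
    have hx : bitsum (n+1) x = 2 * bitsum n (fun j => x (j+1)) + (if x 0 then 1 else 0) := by
      rw [bitsum, Finset.sum_range_succ']
      have : ∀ j, (if x (j+1) then 2^(j+1) else 0) = 2 * (if x (j+1) then 2^j else 0) := by
        intro j; split <;> ring
      rw [Finset.sum_congr rfl (fun j _ => this j)]
      rw [← Finset.mul_sum]
      simp [bitsum]
    have hy : bitsum (n+1) y = 2 * bitsum n (fun j => y (j+1)) + (if y 0 then 1 else 0) := by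
      rw [bitsum, Finset.sum_range_succ']
      have : ∀ j, (if y (j+1) then 2^(j+1) else 0) = 2 * (if y (j+1) then 2^j else 0) := by
        intro j; split <;> ring
      rw [Finset.sum_congr rfl (fun j _ => this j)]
      rw [← Finset.mul_sum]
      simp [bitsum]
    have c0x : (if x 0 then 1 else 0) ≤ 1 := by split <;> simp
    have c0y : (if y 0 then 1 else 0) ≤ 1 := by split <;> simp
    have heq : (if x 0 then 1 else 0 : ℕ) = (if y 0 then 1 else 0) ∧
        bitsum n (fun j => x (j+1)) = bitsum n (fun j => y (j+1)) := by
      rw [hx, hy] at h; omega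
    match i with
    | 0 =>
      rcases heq with ⟨h0, -⟩
      cases hx0 : x 0 <;> cases hy0 : y 0 <;> simp [hx0, hy0] at h0 ⊢
    | (j+1) =>
      exact ih _ _ heq.2 j (by omega)

/-- the position code of the length-`n+1` prefix of `x`. -/
def code (n : ℕ) (x : ℕ → Bool) : ℕ := 2^(n+1) + bitsum (n+1) x

lemma le_code (n : ℕ) (x : ℕ → Bool) : 2^(n+1) ≤ code n x := Nat.le_add_right _ _

lemma code_lt (n : ℕ) (x : ℕ → Bool) : code n x < 2^(n+2) := by
  have := bitsum_lt (n+1) x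
  have h2 : 2^(n+1) + 2^(n+1) = 2^(n+2) := by ring
  unfold code; omega

lemma lt_code (n : ℕ) (x : ℕ → Bool) : n + 1 < code n x :=
  lt_of_lt_of_le ((Nat.lt_two_pow_self (n := n+1))) (le_code n x)

lemma code_inj {n n' : ℕ} {x y : ℕ → Bool} (h : code n x = code n' y) :
    n = n' ∧ ∀ i ≤ n, x i = y i := by
  have hnn : n = n' := by
    by_contra hne
    rcases Nat.lt_or_ge n n' with hlt | hge
    · have h1 : code n x < 2^(n+2) := code_lt n x
      have h2 : (2:ℕ)^(n+2) ≤ 2^(n'+1) := Nat.pow_le_pow_right (by norm_num) (by omega)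
      have h3 := le_code n' y
      omega
    · have hlt : n' < n := by omega
      have h1 : code n' y < 2^(n'+2) := code_lt n' y
      have h2 : (2:ℕ)^(n'+2) ≤ 2^(n+1) := Nat.pow_le_pow_right (by norm_num) (by omega)
      have h3 := le_code n x
      omega
  subst hnn
  refine ⟨rfl, fun i hi => ?_⟩
  have hb : bitsum (n+1) x = bitsum (n+1) y := by unfold code at h; omega
  exact bitsum_inj (n+1) x y hb i (by omega)

open Classical in
/-- indicator of whether `m` is a code position of `x`. -/
noncomputable def dig (x : ℕ → Bool) (m : ℕ) : ℕ := if ∃ n, code n x = m then 1 else 0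

lemma dig_le_one (x : ℕ → Bool) (m : ℕ) : dig x m ≤ 1 := by
  unfold dig; split <;> simp

lemma dig_code (x : ℕ → Bool) (n : ℕ) : dig x (code n x) = 1 := by
  unfold dig; rw [if_pos ⟨n, rfl⟩]

lemma exists_of_dig {x : ℕ → Bool} {m : ℕ} (h : dig x m = 1) : ∃ n, code n x = m := by
  unfold dig at h; by_contra hc; rw [if_neg hc] at h; omega

lemma dig_congr {x y : ℕ → Bool} {m : ℕ} (h : ∀ j ≤ m, x j = y j) : dig x m = dig y m := by
  have key : ∀ (u v : ℕ → Bool), (∀ j ≤ m, u j = v j) → (∃ n, code n u = m) → ∃ n, code n v = m := by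
    rintro u v huv ⟨n, hn⟩
    refine ⟨n, ?_⟩
    have hnm : n + 1 < m := hn ▸ lt_code n u
    have : bitsum (n+1) v = bitsum (n+1) u := by
      unfold bitsum
      refine Finset.sum_congr rfl fun i hi => ?_
      rw [Finset.mem_range] at hi
      rw [huv i (by omega)]
    unfold code at hn ⊢
    omega
  unfold dig
  by_cases h1 : ∃ n, code n x = m
  · rw [if_pos h1, if_pos (key x y h h1)]
  · rw [if_neg h1, if_neg (fun h2 => h1 (key y x (fun j hj => (h j hj).symm) h2))]



lemma summable_digser (d : ℕ → ℕ) (C : ℕ) (h : ∀ m, d m ≤ C) :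
    Summable (fun m => (d m : ℝ) * (1/16)^m) := by
  refine Summable.of_nonneg_of_le (fun m => by positivity) (fun m => ?_)
    (((summable_geometric_of_lt_one (by norm_num) (by norm_num : (1/16:ℝ) < 1))).mul_left (C:ℝ))
  have : (d m : ℝ) ≤ C := by exact_mod_cast h m
  have hp : (0:ℝ) ≤ (1/16)^m := by positivity
  nlinarith

lemma digits_unique {d e : ℕ → ℕ} (hd : ∀ m, d m ≤ 2) (he : ∀ m, e m ≤ 2)
    (h : ∑' m, (d m : ℝ) * (1/16)^m = ∑' m, (e m : ℝ) * (1/16)^m) : d = e := by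
  by_contra hne
  have hex : ∃ m, d m ≠ e m := by
    by_contra hc
    push_neg at hc
    exact hne (funext hc)
  set N := Nat.find hex with hN
  have hNspec : d N ≠ e N := Nat.find_spec hex
  have hNmin : ∀ i < N, d i = e i := fun i hi => by
    by_contra hc; exact Nat.find_min hex hi hc
  set f : ℕ → ℝ := fun m => ((d m : ℝ) - e m) * (1/16)^m with hf
  have hsd := summable_digser d 2 hd
  have hse := summable_digser e 2 he
  have hfs : Summable f := by
    have : f = fun m => (d m : ℝ) * (1/16)^m - (e m : ℝ) * (1/16)^m := by
      funext m; simp only [hf]; ring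
    rw [this]; exact hsd.sub hse
  have hsum0 : ∑' m, f m = 0 := by
    have : ∑' m, f m = (∑' m, (d m : ℝ) * (1/16)^m) - ∑' m, (e m : ℝ) * (1/16)^m := by
      rw [← Summable.tsum_sub hsd hse]
      congr 1; funext m; simp only [hf]; ring
    rw [this, h, sub_self]
  have hsplit := Summable.sum_add_tsum_nat_add (f := f) (N+1) hfs
  have hhead : ∑ i ∈ Finset.range (N+1), f i = f N := by
    rw [Finset.sum_range_succ]
    have : ∑ i ∈ Finset.range N, f i = 0 := by
      refine Finset.sum_eq_zero fun i hi => ?_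
      rw [Finset.mem_range] at hi
      simp [hf, hNmin i hi]
    rw [this, zero_add]
  have htails : Summable (fun m => f (m + (N+1))) := (summable_nat_add_iff (N+1)).mpr hfs
  have habs : ∀ k, ‖f k‖ ≤ 2 * (1/16)^k := by
    intro k
    have hdm : (d k : ℝ) ≤ 2 := by exact_mod_cast hd k
    have hem : (e k : ℝ) ≤ 2 := by exact_mod_cast he k
    have h0d : (0:ℝ) ≤ (d k : ℝ) := Nat.cast_nonneg _
    have h0e : (0:ℝ) ≤ (e k : ℝ) := Nat.cast_nonneg _
    have h1 : |((d k : ℝ) - e k)| ≤ 2 := by rw [abs_le]; constructor <;> linarith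
    have : ‖f k‖ = |((d k : ℝ) - e k)| * (1/16)^k := by
      rw [hf]; rw [Real.norm_eq_abs, abs_mul, abs_of_nonneg (by positivity : (0:ℝ) ≤ (1/16)^k)]
    rw [this]
    have hp : (0:ℝ) ≤ (1/16)^k := by positivity
    nlinarith
  have hgeo : Summable (fun m => 2 * (1/16)^(N+1) * (1/16:ℝ)^m) :=
    ((summable_geometric_of_lt_one (by norm_num) (by norm_num : (1/16:ℝ) < 1))).mul_left _
  have hbound : ‖∑' m, f (m + (N+1))‖ ≤ 2 * (1/16)^(N+1) * (1 - 1/16)⁻¹ := by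
    have hnorms : Summable (fun m => ‖f (m + (N+1))‖) := by
      refine Summable.of_nonneg_of_le (fun m => norm_nonneg _) (fun m => ?_) hgeo
      calc ‖f (m + (N+1))‖ ≤ 2 * (1/16)^(m + (N+1)) := habs _
        _ = 2 * (1/16)^(N+1) * (1/16)^m := by rw [pow_add]; ring
    calc ‖∑' m, f (m + (N+1))‖ ≤ ∑' m, ‖f (m + (N+1))‖ := norm_tsum_le_tsum_norm hnorms
      _ ≤ ∑' m, 2 * (1/16)^(N+1) * (1/16:ℝ)^m := by
          refine Summable.tsum_le_tsum (fun m => ?_) hnorms hgeo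
          calc ‖f (m + (N+1))‖ ≤ 2 * (1/16)^(m + (N+1)) := habs _
            _ = 2 * (1/16)^(N+1) * (1/16)^m := by rw [pow_add]; ring
      _ = 2 * (1/16)^(N+1) * (1 - 1/16)⁻¹ := by
          rw [tsum_mul_left, tsum_geometric_of_lt_one (by norm_num) (by norm_num : (1/16:ℝ) < 1)]
  have hfNlarge : (1/16:ℝ)^N ≤ ‖f N‖ := by
    have h1 : (1:ℝ) ≤ |((d N : ℝ) - e N)| := by
      rcases Nat.lt_or_ge (d N) (e N) with hlt | hge
      · have : (d N : ℝ) + 1 ≤ e N := by exact_mod_cast hlt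
        calc (1:ℝ) ≤ (e N : ℝ) - d N := by linarith
          _ ≤ |((d N : ℝ) - e N)| := by rw [abs_sub_comm]; exact le_abs_self _
      · have hlt : e N < d N := by omega
        have : (e N : ℝ) + 1 ≤ d N := by exact_mod_cast hlt
        calc (1:ℝ) ≤ (d N : ℝ) - e N := by linarith
          _ ≤ |((d N : ℝ) - e N)| := le_abs_self _
    have : ‖f N‖ = |((d N : ℝ) - e N)| * (1/16)^N := by
      rw [hf]; rw [Real.norm_eq_abs, abs_mul, abs_of_nonneg (by positivity : (0:ℝ) ≤ (1/16:ℝ)^N)]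
    rw [this]
    have hp : (0:ℝ) ≤ (1/16:ℝ)^N := by positivity
    nlinarith
  have hfN : f N = - ∑' m, f (m + (N+1)) := by
    rw [hhead] at hsplit
    linarith [hsplit, hsum0]
  have : ‖f N‖ ≤ 2 * (1/16)^(N+1) * (1 - 1/16)⁻¹ := by
    rw [hfN, norm_neg]; exact hbound
  have hp : (0:ℝ) < (1/16:ℝ)^N := by positivity
  have hcalc : 2 * (1/16:ℝ)^(N+1) * (1 - 1/16)⁻¹ = (2/15) * (1/16)^N := by
    rw [pow_succ]; ring
  rw [hcalc] at this
  nlinarith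

/-- the embedding of `2^ℕ` into `ℝ`. -/
noncomputable def Phi (x : ℕ → Bool) : ℝ := ∑' m, (dig x m : ℝ) * (1/16)^m

lemma phi_digits_eq {x y x' y' : ℕ → Bool} (h : Phi x + Phi y' = Phi x' + Phi y) :
    ∀ m, dig x m + dig y' m = dig x' m + dig y m := by
  have hsx := summable_digser (dig x) 1 (dig_le_one x)
  have hsy' := summable_digser (dig y') 1 (dig_le_one y')
  have hsx' := summable_digser (dig x') 1 (dig_le_one x')
  have hsy := summable_digser (dig y) 1 (dig_le_one y)
  have e1 : ∑' m, ((dig x m + dig y' m : ℕ) : ℝ) * (1/16)^m = Phi x + Phi y' := by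
    rw [show (fun m => ((dig x m + dig y' m : ℕ) : ℝ) * (1/16)^m)
        = fun m => (dig x m : ℝ) * (1/16)^m + (dig y' m : ℝ) * (1/16)^m from
      funext fun m => by push_cast; ring]
    exact Summable.tsum_add hsx hsy'
  have e2 : ∑' m, ((dig x' m + dig y m : ℕ) : ℝ) * (1/16)^m = Phi x' + Phi y := by
    rw [show (fun m => ((dig x' m + dig y m : ℕ) : ℝ) * (1/16)^m)
        = fun m => (dig x' m : ℝ) * (1/16)^m + (dig y m : ℝ) * (1/16)^m from
      funext fun m => by push_cast; ring]
    exact Summable.tsum_add hsx' hsy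
  have := digits_unique (d := fun m => dig x m + dig y' m) (e := fun m => dig x' m + dig y m)
    (fun m => by show dig x m + dig y' m ≤ 2
                 have := dig_le_one x m; have := dig_le_one y' m; omega)
    (fun m => by show dig x' m + dig y m ≤ 2
                 have := dig_le_one x' m; have := dig_le_one y m; omega)
    (by rw [e1, e2, h])
  exact fun m => congrFun this m

lemma phi_inj : Function.Injective Phi := by
  intro x y h
  have hd : dig x = dig y :=
    digits_unique (fun m => by have := dig_le_one x m; omega)
      (fun m => by have := dig_le_one y m; omega) h
  funext i
  have h1 : dig y (code i x) = 1 := by rw [← hd]; exact dig_code x i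
  obtain ⟨n, hn⟩ := exists_of_dig h1
  obtain ⟨hnn, hagree⟩ := code_inj hn
  exact (hagree i hnn.ge).symm

/-- Key combinatorial lemma: two representations of the same nonzero translation
coincide on the left. -/
lemma key_lemma {x y x' y' : ℕ → Bool} (h : Phi x - Phi y = Phi x' - Phi y') (hxx : x ≠ x') :
    y = x := by
  have hsum : Phi x + Phi y' = Phi x' + Phi y := by linarith
  have hm := phi_digits_eq hsum
  have hex : ∃ n, x n ≠ x' n := by
    by_contra hc; push_neg at hc; exact hxx (funext hc)
  set n₀ := Nat.find hex with hn₀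
  have hn₀spec : x n₀ ≠ x' n₀ := Nat.find_spec hex
  have hstep : ∀ n, n₀ ≤ n → ∀ j ≤ n, y j = x j := by
    intro n hn j hj
    have h1 : dig x (code n x) = 1 := dig_code x n
    have h2 : dig x' (code n x) = 0 := by
      by_contra hc
      have h2' : dig x' (code n x) = 1 := by
        have := dig_le_one x' (code n x); omega
      obtain ⟨n', hn'⟩ := exists_of_dig h2'
      obtain ⟨hnn, hagree⟩ := code_inj hn'
      subst hnn
      exact hn₀spec ((hagree n₀ (by omega)).symm)
    have h3 := hm (code n x)
    have h4 : dig y (code n x) = 1 := by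
      have := dig_le_one y (code n x)
      have := dig_le_one y' (code n x)
      omega
    obtain ⟨n', hn'⟩ := exists_of_dig h4
    obtain ⟨hnn, hagree⟩ := code_inj hn'
    subst hnn
    exact hagree j hj
  funext j
  exact hstep (max n₀ j) (le_max_left _ _) j (le_max_right _ _)

end HMaux

namespace HMaux

open Filter Function

/-- functions on `2^ℕ` depending on finitely many coordinates are continuous. -/
lemma continuous_of_local {α : Type*} [TopologicalSpace α] (φ : (ℕ → Bool) → α) (m : ℕ)
    (h : ∀ u w : ℕ → Bool, (∀ j < m, u j = w j) → φ u = φ w) : Continuous φ := by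
  have hfac : φ = (fun v : Fin m → Bool => φ (fun j => if hj : j < m then v ⟨j, hj⟩ else false))
      ∘ (fun u (j : Fin m) => u (j : ℕ)) := by
    funext u
    exact h u _ (fun j hj => by simp [hj])
  rw [hfac]
  exact continuous_of_discreteTopology.comp (continuous_pi fun j => continuous_apply _)

lemma continuous_dig (m : ℕ) : Continuous (fun x : ℕ → Bool => (dig x m : ℝ)) :=
  continuous_of_local _ (m+1) (fun u w h => by rw [dig_congr (fun j hj => h j (by omega))])

lemma continuous_phi : Continuous Phi := by
  show Continuous fun x => ∑' m, (dig x m : ℝ) * (1/16)^m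
  apply continuous_tsum (u := fun m => (1/16:ℝ)^m)
    (f := fun m (x : ℕ → Bool) => (dig x m : ℝ) * (1/16)^m)
  · intro m; exact (continuous_dig m).mul continuous_const
  · exact summable_geometric_of_lt_one (by norm_num) (by norm_num)
  · intro m x
    have h1 : (dig x m : ℝ) ≤ 1 := by exact_mod_cast dig_le_one x m
    have h0 : (0:ℝ) ≤ (dig x m : ℝ) := Nat.cast_nonneg _
    have hp : (0:ℝ) ≤ (1/16:ℝ)^m := by positivity
    rw [Real.norm_eq_abs, abs_mul, abs_of_nonneg h0, abs_of_nonneg hp]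
    nlinarith

open Classical in
/-- our collapsing map on `2^ℕ`. -/
noncomputable def gMap (u : ℕ → Bool) : ℕ → Bool := fun i =>
  if Even i ∧ ∃ n, n ≤ i ∧ u (2*n) = true then false else u (2*i+1)

lemma continuous_gMap : Continuous gMap := by
  refine continuous_pi fun i => continuous_of_local (fun u => gMap u i) (2*i+2) ?_
  intro u w h
  have hcond : (Even i ∧ ∃ n, n ≤ i ∧ u (2*n) = true) ↔ (Even i ∧ ∃ n, n ≤ i ∧ w (2*n) = true) := by
    constructor
    · rintro ⟨he, n, hn, hu⟩
      exact ⟨he, n, hn, by rw [← h (2*n) (by omega)]; exact hu⟩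
    · rintro ⟨he, n, hn, hw⟩
      exact ⟨he, n, hn, by rw [h (2*n) (by omega)]; exact hw⟩
  simp only [gMap]
  rw [if_congr hcond rfl (h (2*i+1) (by omega))]

lemma gMap_surjective : Function.Surjective gMap := by
  intro x
  refine ⟨fun j => if j % 2 = 1 then x (j / 2) else false, ?_⟩
  funext i
  have hcond : ¬(Even i ∧ ∃ n, n ≤ i ∧
      (fun j => if j % 2 = 1 then x (j / 2) else false) (2*n) = true) := by
    rintro ⟨-, n, -, hn⟩
    have h2 : (2*n) % 2 = 0 := by omega
    simp [h2] at hn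
  simp only [gMap]
  rw [if_neg hcond]
  have h1 : (2*i+1) % 2 = 1 := by omega
  have h2 : (2*i+1) / 2 = i := by omega
  simp [h1, h2]

/-- the `N`-th closed piece of the meagre "hull" in `2^ℕ`. -/
def DN (N : ℕ) : Set (ℕ → Bool) := {x | ∀ i, N ≤ i → Even i → x i = false}

/-- the sequences whose even coordinates are all `false`. -/
def Dinf : Set (ℕ → Bool) := {u | ∀ n, u (2*n) = false}

/-- the meagre hull. -/
def Btil : Set (ℕ → Bool) := ⋃ N, DN N

lemma isClosed_DN (N : ℕ) : IsClosed (DN N) := by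
  have hDN : DN N = ⋂ i, {x : ℕ → Bool | N ≤ i → Even i → x i = false} := by
    ext x; simp [DN, Set.mem_iInter]
  rw [hDN]
  refine isClosed_iInter fun i => ?_
  by_cases h : N ≤ i ∧ Even i
  · have : {x : ℕ → Bool | N ≤ i → Even i → x i = false}
        = (fun x : ℕ → Bool => x i) ⁻¹' {false} := by
      ext x; simp [h.1, h.2]
    rw [this]
    exact IsClosed.preimage (continuous_apply i) isClosed_singleton
  · have : {x : ℕ → Bool | N ≤ i → Even i → x i = false} = Set.univ := by
      ext x; simp only [Set.mem_setOf_eq, Set.mem_univ, iff_true]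
      intro h1 h2; exact absurd ⟨h1, h2⟩ h
    rw [this]; exact isClosed_univ

lemma isClosed_Dinf : IsClosed Dinf := by
  have hD : Dinf = ⋂ n, (fun u : ℕ → Bool => u (2*n)) ⁻¹' {false} := by
    ext u; simp [Dinf, Set.mem_iInter]
  rw [hD]
  exact isClosed_iInter fun n => IsClosed.preimage (continuous_apply _) isClosed_singleton

lemma interior_empty_of_flip {S : Set (ℕ → Bool)}
    (h : ∀ u ∈ S, ∀ M : ℕ, ∃ v, v ∉ S ∧ ∀ j < M, v j = u j) : interior S = ∅ := by
  by_contra hne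
  obtain ⟨u, hu⟩ := Set.nonempty_iff_ne_empty.mpr hne
  have huS : u ∈ S := interior_subset hu
  choose v hv1 hv2 using h u huS
  have htend : Tendsto v atTop (nhds u) := by
    rw [tendsto_pi_nhds]
    intro j
    rw [congrFun (nhds_discrete Bool) (u j), tendsto_pure]
    filter_upwards [eventually_ge_atTop (j+1)] with M hM
    exact hv2 M j (by omega)
  have hS : S ∈ nhds u := mem_interior_iff_mem_nhds.mp hu
  obtain ⟨M, hM⟩ := (htend.eventually_mem hS).exists
  exact hv1 M hM

lemma interior_DN (N : ℕ) : interior (DN N) = ∅ := by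
  refine interior_empty_of_flip fun u _ M => ?_
  refine ⟨Function.update u (2*(N+M)) true, ?_, fun j hj => Function.update_of_ne (by omega) _ _⟩
  intro hv
  have := hv (2*(N+M)) (by omega) ⟨N+M, by ring⟩
  rw [Function.update_self] at this
  simp at this

lemma interior_Dinf : interior Dinf = ∅ := by
  refine interior_empty_of_flip fun u _ M => ?_
  refine ⟨Function.update u (2*M) true, ?_, fun j hj => Function.update_of_ne (by omega) _ _⟩
  intro hv
  have := hv M
  rw [Function.update_self] at this
  simp at this

lemma gMap_apply_odd (w : ℕ → Bool) (M : ℕ) : gMap w (2*M+1) = w (4*M+3) := by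
  have hodd : ¬ Even (2*M+1) := by rintro ⟨k, hk⟩; omega
  simp only [gMap]
  rw [if_neg (fun hc => hodd hc.1)]
  congr 1
  omega

lemma interior_fiber (x : ℕ → Bool) : interior (gMap ⁻¹' {x}) = ∅ := by
  refine interior_empty_of_flip fun u hu M => ?_
  refine ⟨Function.update u (4*M+3) (!(u (4*M+3))), ?_,
    fun j hj => Function.update_of_ne (by omega) _ _⟩
  intro hv
  have heq : gMap (Function.update u (4*M+3) (!(u (4*M+3)))) = gMap u := by
    rw [show gMap u = x from hu, show gMap _ = x from hv]
  have h1 := congrFun heq (2*M+1)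
  rw [gMap_apply_odd, gMap_apply_odd, Function.update_self] at h1
  exact (Bool.not_ne_self _) h1

lemma isMeagre_of_closed {X : Type*} [TopologicalSpace X] {s : Set X}
    (hc : IsClosed s) (hi : interior s = ∅) : IsMeagre s := by
  rw [IsMeagre]
  exact residual_of_dense_open hc.isOpen_compl (interior_eq_empty_iff_dense_compl.mp hi)

end HMaux

open HMaux in
/-- There are a `Gδ` set `A ⊆ ℝ`, a nonempty compact metrizable space `K` and a continuous
map `f : K → ℝ` such that `f ⁻¹' (z + A)` is meager in `K` for every `z ∈ ℝ` (so `f`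
witnesses that `A` is Haar meager in `(ℝ, +)`), while `A ∩ f '' K` is comeager in the
subspace `f '' K = Set.range f`. -/
theorem exists_gdelta_haarMeager_comeager_in_image :
    ∃ A : Set ℝ, IsGδ A ∧
      ∃ (K : Type) (tK : TopologicalSpace K),
        @CompactSpace K tK ∧ @TopologicalSpace.MetrizableSpace K tK ∧ Nonempty K ∧
        ∃ f : K → ℝ, @Continuous K ℝ tK _ f ∧
          (∀ z : ℝ, @IsMeagre K tK (f ⁻¹' ((fun b => z + b) '' A))) ∧
          IsMeagre {y : Set.range f | (y : ℝ) ∉ A} := by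
  refine ⟨Phi '' (Btil)ᶜ, ?_, (ℕ → Bool), inferInstance, inferInstance, inferInstance,
    ⟨fun _ => false⟩, Phi ∘ gMap, continuous_phi.comp continuous_gMap, ?_, ?_⟩
  · -- IsGδ
    have hAeq : Phi '' (Btil)ᶜ = Set.range Phi ∩ ⋂ N, (Phi '' DN N)ᶜ := by
      ext y
      constructor
      · rintro ⟨x, hx, rfl⟩
        refine ⟨⟨x, rfl⟩, Set.mem_iInter.mpr fun N => ?_⟩
        rintro ⟨x', hx', hxx⟩
        exact hx (Set.mem_iUnion.mpr ⟨N, (phi_inj hxx) ▸ hx'⟩)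
      · rintro ⟨⟨x, rfl⟩, hmem⟩
        refine ⟨x, ?_, rfl⟩
        intro hx
        obtain ⟨N, hN⟩ := Set.mem_iUnion.mp hx
        exact (Set.mem_iInter.mp hmem N) ⟨x, hN, rfl⟩
    rw [hAeq]
    refine IsGδ.inter ((isCompact_range continuous_phi).isClosed.isGδ)
      (IsGδ.iInter_of_isOpen fun N => ?_)
    exact isOpen_compl_iff.mpr (((isClosed_DN N).isCompact.image continuous_phi).isClosed)
  · -- Haar-meagerness witness conditions
    intro z
    by_cases hz : z = 0
    · subst hz
      have himg : (fun b => (0:ℝ) + b) '' (Phi '' (Btil)ᶜ) = Phi '' (Btil)ᶜ := by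
        simp [Set.image_id']
      rw [himg]
      refine (isMeagre_of_closed isClosed_Dinf interior_Dinf).mono ?_
      intro u hu
      obtain ⟨x, hx, hxu⟩ := hu
      have hxg : x = gMap u := phi_inj hxu
      intro n
      by_contra hun
      have hutrue : u (2*n) = true := by
        cases h : u (2*n)
        · exact absurd h hun
        · rfl
      apply hx
      rw [hxg]
      refine Set.mem_iUnion.mpr ⟨n, fun i hni hev => ?_⟩
      show gMap u i = false
      simp only [gMap]
      rw [if_pos ⟨hev, n, hni, hutrue⟩]
    · rcases Set.eq_empty_or_nonempty
        ((Phi ∘ gMap) ⁻¹' ((fun b => z + b) '' (Phi '' (Btil)ᶜ))) with hT | ⟨u₀, hu₀⟩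
      · rw [hT]; exact IsMeagre.empty
      · refine (isMeagre_of_closed (IsClosed.preimage continuous_gMap isClosed_singleton)
          (interior_fiber (gMap u₀))).mono ?_
        intro u hu
        obtain ⟨a, ⟨v, hv, rfl⟩, hfu⟩ := hu
        obtain ⟨a₀, ⟨v₀, hv₀, rfl⟩, hfu₀⟩ := hu₀
        simp only [Set.mem_preimage, Set.mem_singleton_iff]
        have he1 : Phi (gMap u) - Phi v = z := by
          have : z + Phi v = Phi (gMap u) := hfu
          linarith
        have he0 : Phi (gMap u₀) - Phi v₀ = z := by
          have : z + Phi v₀ = Phi (gMap u₀) := hfu₀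
          linarith
        by_contra hne
        have hne' : gMap u ≠ gMap u₀ := by simpa using hne
        have hvx := key_lemma (he1.trans he0.symm) hne'
        rw [hvx, sub_self] at he1
        exact hz he1.symm
  · -- comeagerness of A in the range
    have hrange : Set.range (Phi ∘ gMap) = Set.range Phi := by
      rw [Set.range_comp, Set.range_eq_univ.mpr gMap_surjective, Set.image_univ]
    set φ' : (ℕ → Bool) → ↥(Set.range (Phi ∘ gMap)) :=
      fun x => ⟨Phi x, by rw [hrange]; exact ⟨x, rfl⟩⟩ with hφ'
    have hbij : Function.Bijective φ' := by
      constructor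
      · intro a b hab
        exact phi_inj (congrArg Subtype.val hab)
      · rintro ⟨yv, hy⟩
        rw [hrange] at hy
        obtain ⟨x, hx⟩ := hy
        exact ⟨x, Subtype.ext hx⟩
    let e : (ℕ → Bool) ≃ₜ ↥(Set.range (Phi ∘ gMap)) :=
      Continuous.homeoOfEquivCompactToT2 (f := Equiv.ofBijective φ' hbij)
        (continuous_phi.subtype_mk _)
    have hecoe : ∀ x : ℕ → Bool, ((e x : ↥(Set.range (Phi ∘ gMap))) : ℝ) = Phi x :=
      fun _ => rfl
    have hset : {y : Set.range (Phi ∘ gMap) | (y : ℝ) ∉ Phi '' (Btil)ᶜ}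
        = ⋃ N, (Subtype.val ⁻¹' (Phi '' DN N) : Set ↥(Set.range (Phi ∘ gMap))) := by
      ext y
      simp only [Set.mem_setOf_eq, Set.mem_iUnion, Set.mem_preimage]
      constructor
      · intro hy
        have hy2 : (y : ℝ) ∈ Set.range Phi := hrange ▸ y.2
        obtain ⟨x, hx⟩ := hy2
        have hxB : x ∈ Btil := by
          by_contra hxB
          exact hy ⟨x, hxB, hx⟩
        obtain ⟨N, hN⟩ := Set.mem_iUnion.mp hxB
        exact ⟨N, ⟨x, hN, hx⟩⟩
      · rintro ⟨N, x', hx', hval⟩ hyA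
        obtain ⟨v, hv, hveq⟩ := hyA
        have hvx : v = x' := phi_inj (hveq.trans hval.symm)
        exact hv (Set.mem_iUnion.mpr ⟨N, hvx ▸ hx'⟩)
    rw [hset]
    refine isMeagre_iUnion fun N => isMeagre_of_closed ?_ ?_
    · exact IsClosed.preimage continuous_subtype_val
        (((isClosed_DN N).isCompact.image continuous_phi).isClosed)
    · by_contra hne
      obtain ⟨y, hy⟩ := Set.nonempty_iff_ne_empty.mpr hne
      have h1 : e.symm y ∈ e ⁻¹' interior (Subtype.val ⁻¹' (Phi '' DN N)) := by
        simp only [Set.mem_preimage, Homeomorph.apply_symm_apply]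
        exact hy
      rw [e.preimage_interior] at h1
      have h2 : e ⁻¹' (Subtype.val ⁻¹' (Phi '' DN N)) = DN N := by
        ext x
        simp only [Set.mem_preimage]
        constructor
        · rintro ⟨x', hx', hxx⟩
          rw [hecoe x] at hxx
          exact (phi_inj hxx) ▸ hx'
        · intro hx
          exact ⟨x, hx, (hecoe x).symm⟩
      rw [h2, interior_DN] at h1
      exact h1
end

section
/- Let G be an abelian Polish group, let P ⊆ G be a nonempty perfect set, and let C ⊆ G be a comeager set. Then there exists g ∈ G such that the intersection C ∩ (g + P) has cardinality of the continuum. -/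
open Set Filter Topology TopologicalSpace Cardinal

/-- If `x ∈ S` is an accumulation point of `S`, then in the subtype `↥S` the punctured
neighborhood filter at `x` is nontrivial. -/
lemma aux_nhdsNE_neBot_subtype {X : Type*} [TopologicalSpace X] {S : Set X} {x : ↥S}
    (h : AccPt (↑x) (𝓟 S)) : (𝓝[≠] x).NeBot := by
  have himg : (Subtype.val : ↥S → X) '' ({x}ᶜ) = S \ {(x : X)} := by
    ext y
    constructor
    · rintro ⟨z, hz, rfl⟩
      exact ⟨z.2, fun hzx => hz (Subtype.ext hzx)⟩
    · rintro ⟨hyS, hyx⟩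
      exact ⟨⟨y, hyS⟩, fun hzx => hyx (congrArg Subtype.val hzx), rfl⟩
  have key : 𝓝[≠] x = Filter.comap (Subtype.val : ↥S → X) (𝓝[S \ {(x : X)}] (x : X)) := by
    rw [nhdsWithin_subtype, himg]
  have h1 : (𝓝[S \ {(x : X)}] (x : X)).NeBot := by
    have : 𝓝[S \ {(x : X)}] (x : X) = 𝓝[{(x : X)}ᶜ] (x : X) ⊓ 𝓟 S := by
      rw [nhdsWithin, nhdsWithin, inf_assoc, inf_principal]
      congr 1
      rw [Set.diff_eq, Set.inter_comm]
    rw [this]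
    exact h
  rw [key]
  exact h1.comap_of_range_mem
    (by rw [Subtype.range_val]
        exact mem_of_superset self_mem_nhdsWithin diff_subset)

/-- Any Polish space has cardinality at most continuum. -/
lemma aux_polish_mk_le_continuum (X : Type*) [TopologicalSpace X] [PolishSpace X] :
    Cardinal.mk X ≤ Cardinal.continuum := by
  rcases isEmpty_or_nonempty X with hX | hX
  · simp [Cardinal.mk_eq_zero]
  · obtain ⟨f, -, hfsurj⟩ := PolishSpace.exists_nat_nat_continuous_surjective X
    have hinj : Function.Injective (Function.surjInv hfsurj) :=
      Function.injective_surjInv hfsurj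
    have h := Cardinal.lift_mk_le'.mpr ⟨⟨Function.surjInv hfsurj, hinj⟩⟩
    have hNN : Cardinal.mk (ℕ → ℕ) = Cardinal.continuum := by
      rw [← Cardinal.power_def, Cardinal.mk_nat, Cardinal.aleph0_power_aleph0]
    rwa [Cardinal.lift_uzero, hNN, Cardinal.lift_continuum] at h

/-- Every Polish space is a Baire space. -/
lemma aux_baireSpace (X : Type*) [TopologicalSpace X] [PolishSpace X] : BaireSpace X := by
  letI := upgradeIsCompletelyMetrizable X
  exact inferInstance

/-- If `P` is a nonempty perfect subset of an abelian Polish group `G` and `C ⊆ G` is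
comeager, then some translate `g + P` meets `C` in a set of cardinality continuum. -/
theorem exists_translate_inter_comeager_continuum {G : Type*} [AddCommGroup G]
    [TopologicalSpace G] [IsTopologicalAddGroup G] [PolishSpace G]
    (P : Set G) (hPne : P.Nonempty) (hP : Perfect P)
    (C : Set G) (hC : IsMeagre Cᶜ) :
    ∃ g : G, Cardinal.mk ↥(C ∩ ((fun p => g + p) '' P)) = Cardinal.continuum := by
  classical
  haveI : BaireSpace G := aux_baireSpace G
  -- extract a dense Gδ inside C
  have hC' : C ∈ residual G := compl_compl C ▸ hC
  obtain ⟨t, htC, htGδ, htd⟩ := mem_residual.mp hC'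
  obtain ⟨U, hUo, rfl⟩ := htGδ.eq_iInter_nat
  have hUd : ∀ n, Dense (U n) := fun n => Dense.mono (iInter_subset U n) htd
  -- the subtype of P is a nonempty Polish space
  haveI : PolishSpace (↥P) := hP.closed.polishSpace
  haveI : Nonempty (↥P) := hPne.to_subtype
  -- pick points in each member of a countable basis of ↥P
  have hpt : ∀ b : ↥(countableBasis ↥P), (b : Set ↥P).Nonempty :=
    fun b => nonempty_of_mem_countableBasis b.2
  choose pt hptmem using hpt
  haveI : Countable ↥(countableBasis ↥P) := (countable_countableBasis ↥P).to_subtype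
  -- translated dense open sets in G
  set D : ℕ × ↥(countableBasis ↥P) → Set G :=
    fun nb => (fun g : G => g + ↑(pt nb.2)) ⁻¹' U nb.1 with hD
  have hDo : ∀ nb, IsOpen (D nb) := fun nb =>
    (hUo nb.1).preimage (continuous_add_right _)
  have hDd : ∀ nb, Dense (D nb) := fun nb =>
    (hUd nb.1).preimage (Homeomorph.addRight (↑(pt nb.2) : G)).isOpenMap
  obtain ⟨g, hg⟩ := (dense_iInter_of_isOpen hDo hDd).nonempty
  simp only [mem_iInter] at hg
  refine ⟨g, ?_⟩
  -- the sections in ↥P are dense open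
  set W : ℕ → Set ↥P := fun n => (fun p : ↥P => g + (p : G)) ⁻¹' U n with hW
  have hWo : ∀ n, IsOpen (W n) := fun n =>
    (hUo n).preimage (continuous_const.add continuous_subtype_val)
  have hWd : ∀ n, Dense (W n) := by
    intro n
    rw [(isBasis_countableBasis ↥P).dense_iff]
    intro o ho hone
    exact ⟨pt ⟨o, ho⟩, hptmem ⟨o, ho⟩, hg (n, ⟨o, ho⟩)⟩
  haveI : BaireSpace (↥P) := aux_baireSpace ↥P
  haveI : T2Space (↥P) := inferInstance
  set T : Set ↥P := ⋂ n, W n with hT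
  have hTd : Dense T := dense_iInter_of_isOpen hWo hWd
  -- every point of ↥P is an accumulation point
  haveI hPacc : ∀ y : ↥P, (𝓝[≠] y).NeBot := fun y =>
    aux_nhdsNE_neBot_subtype (hP.acc (↑y) y.2)
  -- T is not countable
  have hunc : ¬ T.Countable := by
    intro hcnt
    haveI := hcnt.to_subtype
    have hdense : Dense (⋂ i : ℕ ⊕ ↥T,
        Sum.elim W (fun p : ↥T => ({(p : ↥P)}ᶜ : Set ↥P)) i) := by
      apply dense_iInter_of_isOpen
      · rintro (n | p)
        · exact hWo n
        · exact isClosed_singleton.isOpen_compl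
      · rintro (n | p)
        · exact hWd n
        · exact dense_compl_singleton _
    obtain ⟨y, hy⟩ := hdense.nonempty
    simp only [mem_iInter] at hy
    have hyT : y ∈ T := by
      rw [hT, mem_iInter]
      exact fun n => hy (Sum.inl n)
    have := hy (Sum.inr ⟨y, hyT⟩)
    simp at this
  -- T is clopenable (it is a Gδ set), hence closed in a finer Polish topology
  have hclop : PolishSpace.IsClopenable T := by
    have h1 : PolishSpace.IsClopenable (⋃ n, (W n)ᶜ) :=
      PolishSpace.IsClopenable.iUnion (fun n => (hWo n).isClosed_compl.isClopenable)
    have h2 := h1.compl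
    rwa [Set.compl_iUnion, funext fun n => compl_compl (W n)] at h2
  obtain ⟨τ', hle, hpol, hclosed, -⟩ := hclop
  obtain ⟨f, hfr, -, hfinj⟩ :=
    @IsClosed.exists_nat_bool_injection_of_not_countable ↥P τ' hpol T hclosed hunc
  -- build an embedding of the Cantor space into the intersection
  have hmem : ∀ x : ℕ → Bool, g + ↑(f x) ∈ C ∩ ((fun p => g + p) '' P) := by
    intro x
    have hfx : f x ∈ T := hfr (mem_range_self x)
    rw [hT, mem_iInter] at hfx
    refine ⟨htC (mem_iInter.mpr fun n => hfx n), ⟨↑(f x), (f x).2, rfl⟩⟩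
  have hembinj : Function.Injective
      (fun x : ℕ → Bool => (⟨g + ↑(f x), hmem x⟩ : ↥(C ∩ ((fun p => g + p) '' P)))) := by
    intro x y hxy
    apply hfinj
    apply Subtype.ext
    have := congrArg Subtype.val hxy
    exact add_left_cancel this
  have hlower := Cardinal.lift_mk_le'.mpr
    ⟨⟨fun x : ℕ → Bool => (⟨g + ↑(f x), hmem x⟩ : ↥(C ∩ ((fun p => g + p) '' P))), hembinj⟩⟩
  have hCantor : Cardinal.mk (ℕ → Bool) = Cardinal.continuum := by
    rw [← Cardinal.power_def, Cardinal.mk_bool, Cardinal.mk_nat, Cardinal.two_power_aleph0]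
  rw [hCantor, Cardinal.lift_continuum, Cardinal.lift_uzero] at hlower
  exact le_antisymm ((Cardinal.mk_set_le _).trans (aux_polish_mk_le_continuum G)) hlower
end

section
/- Every uncountable Polish group G has an uncountable Borel subgroup H of uncountable index, i.e., a subgroup H of G whose underlying set is Borel and uncountable, and such that the set of cosets G/H is uncountable. -/
open Set Metric

noncomputable section AuxM


/-- Word product: `wprod [a₀,…,a_{m-1}] h = h 0 ^ a₀ * ⋯ * h (m-1) ^ a_{m-1}`. -/
def wprod {G : Type*} [Group G] : List ℤ → (ℕ → G) → G
  | [], _ => 1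
  | a :: L, h => h 0 ^ a * wprod L (fun i => h (i + 1))

theorem wprod_congr {G : Type*} [Group G] :
    ∀ (L : List ℤ) (h h' : ℕ → G), (∀ i < L.length, h i = h' i) → wprod L h = wprod L h'
  | [], _, _, _ => rfl
  | a :: L, h, h', he => by
      simp only [wprod]
      rw [he 0 (by simp), wprod_congr L (fun i => h (i+1)) (fun i => h' (i+1))
        (fun i hi => he (i+1) (by simpa using Nat.succ_lt_succ hi))]

theorem continuous_wprod {G : Type*} [Group G] [TopologicalSpace G] [IsTopologicalGroup G]
    {ι : Type*} : ∀ (L : List ℤ) (z : ℕ → ι),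
      Continuous fun v : ι → G => wprod L (fun i => v (z i))
  | [], _ => continuous_const
  | a :: L, z => by
      simp only [wprod]
      exact ((continuous_apply (z 0)).zpow a).mul (continuous_wprod L (fun i => z (i+1)))

/-- `ℕ → Bool` is uncountable. -/
theorem uncountable_nat_bool : Uncountable (ℕ → Bool) := by
  rw [← Cardinal.aleph0_lt_mk_iff]
  have : Cardinal.mk (ℕ → Bool) = 2 ^ Cardinal.aleph0 := by
    rw [Cardinal.mk_arrow, Cardinal.mk_bool, Cardinal.mk_nat]
    simp
  rw [this]
  exact Cardinal.cantor _

/-- In an uncountable Polish (topological) group, every nonempty open set has two points. -/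
theorem two_point_of_uncountable {G : Type*} [Group G] [TopologicalSpace G]
    [IsTopologicalGroup G] [PolishSpace G] (hG : ¬ Countable G) :
    ∀ U : Set G, IsOpen U → U.Nonempty → ∃ a ∈ U, ∃ b ∈ U, a ≠ b := by
  intro U hU ⟨a, ha⟩
  by_contra hcon
  push_neg at hcon
  have hUa : U = {a} := by
    ext x; constructor
    · intro hx; exact hcon x hx a ha
    · rintro rfl; exact ha
  -- every singleton is open
  have hop : ∀ g : G, IsOpen ({g} : Set G) := by
    intro g
    have : ({g} : Set G) = (Homeomorph.mulLeft (g * a⁻¹)) '' {a} := by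
      ext x; simp [Homeomorph.mulLeft, mul_assoc]
    rw [this]
    exact (Homeomorph.mulLeft (g * a⁻¹)).isOpenMap _ (hUa ▸ hU)
  obtain ⟨D, hDc, hDd⟩ := TopologicalSpace.exists_countable_dense G
  have : (Set.univ : Set G).Countable := by
    refine Set.Countable.mono ?_ hDc
    intro g _
    obtain ⟨x, hx1, hx2⟩ := hDd.inter_open_nonempty {g} (hop g) ⟨g, rfl⟩
    rwa [show x = g from hx1] at hx2
  exact hG (Set.countable_univ_iff.mp this)

/-- Generic refinement: process a list of monotone, achievable constraints. -/
theorem refine_list {G : Type*} [TopologicalSpace G] {ι : Type*}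
    (cs : List ((ι → Set G) → Prop))
    (hach : ∀ Q ∈ cs, ∀ O : ι → Set G, (∀ t, IsOpen (O t)) → (∀ t, (O t).Nonempty) →
      ∃ O' : ι → Set G, (∀ t, IsOpen (O' t)) ∧ (∀ t, (O' t).Nonempty) ∧
        (∀ t, O' t ⊆ O t) ∧ Q O')
    (hmono : ∀ Q ∈ cs, ∀ O O' : ι → Set G, (∀ t, O' t ⊆ O t) → Q O → Q O') :
    ∀ O : ι → Set G, (∀ t, IsOpen (O t)) → (∀ t, (O t).Nonempty) →
      ∃ O' : ι → Set G, (∀ t, IsOpen (O' t)) ∧ (∀ t, (O' t).Nonempty) ∧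
        (∀ t, O' t ⊆ O t) ∧ ∀ Q ∈ cs, Q O' := by
  induction cs with
  | nil => intro O h1 h2; exact ⟨O, h1, h2, fun t => subset_rfl, by simp⟩
  | cons Q cs ih =>
    intro O h1 h2
    obtain ⟨O1, hO1o, hO1n, hO1s, hQ⟩ := hach Q (by simp) O h1 h2
    obtain ⟨O2, hO2o, hO2n, hO2s, hall⟩ := ih (fun Q hQ => hach Q (by simp [hQ]))
      (fun Q hQ => hmono Q (by simp [hQ])) O1 hO1o hO1n
    refine ⟨O2, hO2o, hO2n, fun t => (hO2s t).trans (hO1s t), ?_⟩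
    intro Q' hQ'
    rcases List.mem_cons.mp hQ' with rfl | h
    · exact hmono Q' (by simp) O1 O2 hO2s hQ
    · exact hall Q' h

section Step
variable {G : Type*} [Group G] [MetricSpace G] [IsTopologicalGroup G]

omit [Group G] [IsTopologicalGroup G] in
theorem achieve_pair {ι : Type*} [DecidableEq ι]
    (htp : ∀ U : Set G, IsOpen U → U.Nonempty → ∃ a ∈ U, ∃ b ∈ U, a ≠ b)
    (t t' : ι) (O : ι → Set G) (hOo : ∀ s, IsOpen (O s)) (hOn : ∀ s, (O s).Nonempty) :
    ∃ O' : ι → Set G, (∀ s, IsOpen (O' s)) ∧ (∀ s, (O' s).Nonempty) ∧ (∀ s, O' s ⊆ O s) ∧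
      (t ≠ t' → Disjoint (closure (O' t)) (closure (O' t'))) := by
  classical
  by_cases h : t = t'
  · exact ⟨O, hOo, hOn, fun s => subset_rfl, fun hc => absurd h hc⟩
  obtain ⟨a, ha⟩ := hOn t
  obtain ⟨u, hu, v, hv, huv⟩ := htp (O t') (hOo t') (hOn t')
  set b := if u = a then v else u with hb
  have hbO : b ∈ O t' := by rw [hb]; split <;> assumption
  have hba : b ≠ a := by
    rw [hb]; split
    · rename_i h'; rw [← h']; exact (huv).symm
    · assumption
  have hd : 0 < dist a b := dist_pos.mpr (Ne.symm hba)
  set O' : ι → Set G := fun s =>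
    if s = t then O t ∩ ball a (dist a b / 3)
    else if s = t' then O t' ∩ ball b (dist a b / 3) else O s with hO'
  have hOt : O' t = O t ∩ ball a (dist a b / 3) := by simp [hO']
  have hOt' : O' t' = O t' ∩ ball b (dist a b / 3) := by simp [hO', Ne.symm h]
  refine ⟨O', ?_, ?_, ?_, ?_⟩
  · intro s; rw [hO']; dsimp only; split
    · exact (hOo t).inter isOpen_ball
    · split
      · exact (hOo t').inter isOpen_ball
      · exact hOo s
  · intro s; rw [hO']; dsimp only; split
    · exact ⟨a, ha, mem_ball_self (by linarith)⟩
    · split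
      · exact ⟨b, hbO, mem_ball_self (by linarith)⟩
      · exact hOn s
  · intro s; rw [hO']; dsimp only; split
    · rename_i hs; rw [hs]; exact inter_subset_left
    · split
      · rename_i hs; rw [hs]; exact inter_subset_left
      · exact subset_rfl
  · intro _
    rw [hOt, hOt']
    have h1 : closure (O t ∩ ball a (dist a b / 3)) ⊆ closedBall a (dist a b / 3) :=
      (closure_mono inter_subset_right).trans closure_ball_subset_closedBall
    have h2 : closure (O t' ∩ ball b (dist a b / 3)) ⊆ closedBall b (dist a b / 3) :=
      (closure_mono inter_subset_right).trans closure_ball_subset_closedBall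
    refine Set.disjoint_left.mpr fun x hx hx' => ?_
    have e1 := mem_closedBall.mp (h1 hx)
    have e2 := mem_closedBall.mp (h2 hx')
    have := dist_triangle a x b
    rw [dist_comm a x] at this
    linarith

theorem achieve_av {ι : Type*} [DecidableEq ι] [Finite ι]
    (htp : ∀ U : Set G, IsOpen U → U.Nonempty → ∃ a ∈ U, ∃ b ∈ U, a ≠ b)
    (L : List ℤ) (t₀ t₁ : ι) (τ : Fin L.length → ι)
    (O : ι → Set G) (hOo : ∀ s, IsOpen (O s)) (hOn : ∀ s, (O s).Nonempty) :
    ∃ O' : ι → Set G, (∀ s, IsOpen (O' s)) ∧ (∀ s, (O' s).Nonempty) ∧ (∀ s, O' s ⊆ O s) ∧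
      (t₀ ≠ t₁ → (∀ i, t₀ ≠ τ i) → ∀ g₀ ∈ O' t₀, ∀ g₁ ∈ O' t₁, ∀ h : ℕ → G,
        (∀ i : Fin L.length, h i.val ∈ O' (τ i)) → g₀ ≠ g₁ * wprod L h) := by
  classical
  by_cases hcond : t₀ ≠ t₁ ∧ ∀ i, t₀ ≠ τ i
  swap
  · exact ⟨O, hOo, hOn, fun s => subset_rfl, fun c1 c2 => absurd ⟨c1, c2⟩ hcond⟩
  obtain ⟨hne01, hneτ⟩ := hcond
  set p : ι → G := fun s => (hOn s).some with hp
  have hpO : ∀ s, p s ∈ O s := fun s => (hOn s).some_mem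
  set nd : Option (Option (Fin L.length)) → ι :=
    fun r => Option.elim r t₀ (fun r' => Option.elim r' t₁ τ) with hnd
  set zr : ℕ → Option (Option (Fin L.length)) :=
    fun i => if h : i < L.length then some (some ⟨i, h⟩) else none with hzr
  set c := p t₁ * wprod L (fun i => p (nd (zr i))) with hc
  obtain ⟨u, hu, w', hw', huw⟩ := htp (O t₀) (hOo t₀) (hOn t₀)
  set q := if u = c then w' else u with hq
  have hqO : q ∈ O t₀ := by rw [hq]; split <;> assumption
  have hqc : q ≠ c := by
    rw [hq]; split
    · rename_i h'; rw [← h']; exact huw.symm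
    · assumption
  set v : ι → G := Function.update p t₀ q with hv
  set Θ : (Option (Option (Fin L.length)) → G) → G :=
    fun w => (w none)⁻¹ * (w (some none) * wprod L (fun i => w (zr i))) with hΘ
  have hΘc : Continuous Θ := by
    rw [hΘ]
    exact ((continuous_apply (none : Option (Option (Fin L.length)))).inv).mul
      ((continuous_apply (some none : Option (Option (Fin L.length)))).mul
        (continuous_wprod L zr))
  set w₀ : Option (Option (Fin L.length)) → G := fun r => v (nd r) with hw₀
  have hvt₁ : v t₁ = p t₁ := Function.update_of_ne (Ne.symm hne01) _ _
  have hvτ : ∀ i, v (τ i) = p (τ i) := fun i => Function.update_of_ne (Ne.symm (hneτ i)) _ _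
  have e2 : w₀ none = q := by
    simp only [hw₀, hnd, Option.elim, hv]; exact Function.update_self _ _ _
  have e3 : w₀ (some none) = p t₁ := by
    simp only [hw₀, hnd, Option.elim]; exact hvt₁
  have e1 : wprod L (fun i => w₀ (zr i)) = wprod L (fun i => p (nd (zr i))) := by
    apply wprod_congr
    intro i hi
    simp only [hw₀, hzr, dif_pos hi, hnd, Option.elim]
    exact hvτ ⟨i, hi⟩
  have hΘw₀ : Θ w₀ ≠ 1 := by
    intro hone
    apply hqc
    rw [hΘ] at hone
    simp only at hone
    rw [e1, e2, e3, ← hc] at hone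
    exact inv_mul_eq_one.mp hone
  have hw₀mem : w₀ ∈ Θ ⁻¹' ({(1:G)}ᶜ) := hΘw₀
  have hSopen : IsOpen (Θ ⁻¹' ({(1:G)}ᶜ)) := hΘc.isOpen_preimage _ isOpen_compl_singleton
  obtain ⟨I, uu, huu, hsub⟩ := isOpen_pi_iff.mp hSopen w₀ hw₀mem
  set U : Option (Option (Fin L.length)) → Set G := fun r => if r ∈ I then uu r else univ
    with hU
  have hUopen : ∀ r, IsOpen (U r) := by
    intro r; rw [hU]; dsimp only; split
    · exact (huu r (by assumption)).1
    · exact isOpen_univ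
  have hw₀U : ∀ r, w₀ r ∈ U r := by
    intro r; rw [hU]; dsimp only; split
    · exact (huu r (by assumption)).2
    · trivial
  have key : ∀ w : Option (Option (Fin L.length)) → G, (∀ r, w r ∈ U r) → Θ w ≠ 1 := by
    intro w hw
    refine hsub ?_
    intro r hr
    have h3 : w r ∈ (if r ∈ I then uu r else univ) := hw r
    rwa [if_pos (Finset.mem_coe.mp hr)] at h3
  set O' : ι → Set G := fun s =>
    O s ∩ ⋂ (r : Option (Option (Fin L.length))) (_ : nd r = s), U r with hO'
  have hO'sub : ∀ s, O' s ⊆ O s := fun s => inter_subset_left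
  have hO'U : ∀ s r, nd r = s → O' s ⊆ U r := by
    intro s r hr
    refine inter_subset_right.trans ?_
    exact iInter₂_subset r hr
  refine ⟨O', ?_, ?_, hO'sub, ?_⟩
  · intro s
    exact (hOo s).inter (isOpen_iInter_of_finite fun r =>
      isOpen_iInter_of_finite fun _ => hUopen r)
  · intro s
    refine ⟨v s, ?_, ?_⟩
    · by_cases hs : s = t₀
      · rw [hs, hv]; rw [Function.update_self]; exact hqO
      · rw [hv, Function.update_of_ne hs]; exact hpO s
    · refine mem_iInter₂.mpr fun r hr => ?_
      have h2 : v (nd r) ∈ U r := hw₀U r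
      rwa [hr] at h2
  · intro _ _ g₀ hg₀ g₁ hg₁ h hh
    set w : Option (Option (Fin L.length)) → G :=
      fun r => Option.elim r g₀ (fun r' => Option.elim r' g₁ (fun i => h i.val)) with hwdef
    have hwU : ∀ r, w r ∈ U r := by
      intro r
      match r with
      | none => exact hO'U t₀ none rfl hg₀
      | some none => exact hO'U t₁ (some none) rfl hg₁
      | some (some i) => exact hO'U (τ i) (some (some i)) rfl (hh i)
    have hθ := key w hwU
    intro heq
    apply hθ
    have ew : wprod L (fun i => w (zr i)) = wprod L h := by
      apply wprod_congr
      intro i hi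
      simp only [hwdef, hzr]
      rw [dif_pos hi]
      rfl
    show (w none)⁻¹ * (w (some none) * wprod L fun i => w (zr i)) = 1
    rw [ew]
    show g₀⁻¹ * (g₁ * wprod L h) = 1
    rw [← heq]
    exact inv_mul_cancel g₀
end Step
section Step
variable {G : Type*} [Group G] [MetricSpace G] [IsTopologicalGroup G]

/-- Agreement of two branches below level `m`. -/
def Agree (m : ℕ) (x y : ℕ → Bool) : Prop := ∀ i < m, x i = y i

/-- Enumeration of all integer lists. -/
def eSeq (j : ℕ) : List ℤ := Denumerable.ofNat (List ℤ) j

def GoodStage (n : ℕ) (E : (ℕ → Bool) → Set G) : Prop :=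
  (∀ x y, Agree n x y → E x = E y) ∧ (∀ x, IsOpen (E x)) ∧ (∀ x, (E x).Nonempty) ∧
  (∀ x, Bornology.IsBounded (E x)) ∧ (∀ x, Metric.diam (E x) ≤ (1/2 : ℝ)^n)

def Avoid (L : List ℤ) (m : ℕ) (E' : (ℕ → Bool) → Set G) : Prop :=
  ∀ x y : ℕ → Bool, ∀ z : ℕ → ℕ → Bool, (¬ Agree m x y) → (∀ i < L.length, ¬ Agree m x (z i)) →
  ∀ g₀ ∈ E' x, ∀ g₁ ∈ E' y, ∀ h : ℕ → G, (∀ i < L.length, h i ∈ E' (z i)) →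
  g₀ ≠ g₁ * wprod L h

def GoodStep (n : ℕ) (E E' : (ℕ → Bool) → Set G) : Prop :=
  (∀ x, closure (E' x) ⊆ E x) ∧
  (∀ x y, Agree n x y → x n ≠ y n → Disjoint (closure (E' x)) (closure (E' y))) ∧
  (∀ j ≤ n, Avoid (eSeq j) (n+1) E')

theorem exists_step
    (htp : ∀ U : Set G, IsOpen U → U.Nonempty → ∃ a ∈ U, ∃ b ∈ U, a ≠ b)
    (n : ℕ) (E : (ℕ → Bool) → Set G) (hE : GoodStage n E) :
    ∃ E' : (ℕ → Bool) → Set G, GoodStage (n+1) E' ∧ GoodStep n E E' := by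
  classical
  obtain ⟨hinv, hopn, hne, hbd, hdm⟩ := hE
  set res : (ℕ → Bool) → (Fin (n+1) → Bool) := fun x i => x i.val with hres
  set ext : (Fin (n+1) → Bool) → (ℕ → Bool) :=
    fun t i => if h : i < n+1 then t ⟨i, h⟩ else false with hext
  have hagr : ∀ x, Agree n (ext (res x)) x := by
    intro x i hi
    simp only [hext, hres]
    rw [dif_pos (by omega : i < n+1)]
  set O₀ : (Fin (n+1) → Bool) → Set G := fun t => E (ext t) with hO₀
  -- constraints
  set cs : List (((Fin (n+1) → Bool) → Set G) → Prop) :=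
    ((Finset.univ :
        Finset ((Fin (n+1) → Bool) × (Fin (n+1) → Bool))).toList.map
      (fun pr => fun O => pr.1 ≠ pr.2 → Disjoint (closure (O pr.1)) (closure (O pr.2))))
    ++ ((Finset.univ :
        Finset (Σ j : Fin (n+1), ((Fin (n+1) → Bool) × (Fin (n+1) → Bool)) ×
          (Fin (eSeq j.val).length → (Fin (n+1) → Bool)))).toList.map
      (fun c => fun O => c.2.1.1 ≠ c.2.1.2 → (∀ i, c.2.1.1 ≠ c.2.2 i) →
        ∀ g₀ ∈ O c.2.1.1, ∀ g₁ ∈ O c.2.1.2, ∀ h : ℕ → G,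
          (∀ i : Fin (eSeq c.1.val).length, h i.val ∈ O (c.2.2 i)) →
          g₀ ≠ g₁ * wprod (eSeq c.1.val) h)) with hcs
  have hach : ∀ Q ∈ cs, ∀ O : (Fin (n+1) → Bool) → Set G,
      (∀ t, IsOpen (O t)) → (∀ t, (O t).Nonempty) →
      ∃ O', (∀ t, IsOpen (O' t)) ∧ (∀ t, (O' t).Nonempty) ∧ (∀ t, O' t ⊆ O t) ∧ Q O' := by
    intro Q hQ O h1 h2
    rcases List.mem_append.mp hQ with hQ | hQ
    · obtain ⟨pr, _, rfl⟩ := List.mem_map.mp hQ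
      exact achieve_pair htp pr.1 pr.2 O h1 h2
    · obtain ⟨c, _, rfl⟩ := List.mem_map.mp hQ
      exact achieve_av htp (eSeq c.1.val) c.2.1.1 c.2.1.2 c.2.2 O h1 h2
  have hmono : ∀ Q ∈ cs, ∀ O O' : (Fin (n+1) → Bool) → Set G,
      (∀ t, O' t ⊆ O t) → Q O → Q O' := by
    intro Q hQ O O' hsub hO
    rcases List.mem_append.mp hQ with hQ | hQ
    · obtain ⟨pr, _, rfl⟩ := List.mem_map.mp hQ
      intro hne'
      exact (hO hne').mono (closure_mono (hsub _)) (closure_mono (hsub _))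
    · obtain ⟨c, _, rfl⟩ := List.mem_map.mp hQ
      intro h1 h2 g₀ hg₀ g₁ hg₁ h hh
      exact hO h1 h2 g₀ (hsub _ hg₀) g₁ (hsub _ hg₁) h (fun i => hsub _ (hh i))
  obtain ⟨Of, hOfo, hOfn, hOfs, hall⟩ :=
    refine_list cs hach hmono O₀ (fun t => hopn _) (fun t => hne _)
  have hallpair : ∀ t t', t ≠ t' → Disjoint (closure (Of t)) (closure (Of t')) := by
    intro t t'
    exact hall _ (List.mem_append.mpr (Or.inl (List.mem_map.mpr
      ⟨(t, t'), Finset.mem_toList.mpr (Finset.mem_univ _), rfl⟩)))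
  have hallav : ∀ (j : Fin (n+1)) (t₀ t₁ : Fin (n+1) → Bool)
      (τ : Fin (eSeq j.val).length → (Fin (n+1) → Bool)),
      t₀ ≠ t₁ → (∀ i, t₀ ≠ τ i) → ∀ g₀ ∈ Of t₀, ∀ g₁ ∈ Of t₁, ∀ h : ℕ → G,
        (∀ i : Fin (eSeq j.val).length, h i.val ∈ Of (τ i)) →
        g₀ ≠ g₁ * wprod (eSeq j.val) h := by
    intro j t₀ t₁ τ
    exact hall _ (List.mem_append.mpr (Or.inr (List.mem_map.mpr
      ⟨⟨j, (t₀, t₁), τ⟩, Finset.mem_toList.mpr (Finset.mem_univ _), rfl⟩)))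
  -- final shrinking to small balls
  have hball : ∀ t : Fin (n+1) → Bool, ∃ B : Set G, IsOpen B ∧ B.Nonempty ∧
      closure B ⊆ Of t ∧ Bornology.IsBounded B ∧ Metric.diam B ≤ (1/2 : ℝ)^(n+1) := by
    intro t
    obtain ⟨pt, hpt⟩ := hOfn t
    obtain ⟨ε, hε, hsb⟩ := Metric.isOpen_iff.mp (hOfo t) pt hpt
    set r : ℝ := min (ε/2) ((1/2 : ℝ)^(n+1)/2) with hr
    have hr0 : 0 < r := by
      apply lt_min (by linarith)
      positivity
    refine ⟨ball pt r, isOpen_ball, ⟨pt, mem_ball_self hr0⟩, ?_, isBounded_ball, ?_⟩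
    · refine closure_ball_subset_closedBall.trans ((closedBall_subset_ball ?_).trans hsb)
      have : r ≤ ε/2 := min_le_left _ _
      linarith
    · have h1 := Metric.diam_ball (x := pt) hr0.le
      have h2 : r ≤ (1/2 : ℝ)^(n+1)/2 := min_le_right _ _
      linarith
  choose B hBo hBn hBcl hBbd hBdm using hball
  have hBOf : ∀ t, B t ⊆ Of t := fun t => subset_closure.trans (hBcl t)
  refine ⟨fun x => B (res x), ⟨?_, fun x => hBo _, fun x => hBn _, fun x => hBbd _,
    fun x => hBdm _⟩, ?_, ?_, ?_⟩
  · -- invariance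
    intro x y hxy
    have h' : res x = res y := funext fun i => hxy i.val i.isLt
    show B (res x) = B (res y)
    rw [h']
  · -- nest
    intro x
    refine (hBcl (res x)).trans ((hOfs (res x)).trans ?_)
    have : O₀ (res x) = E x := hinv _ _ (hagr x)
    rw [← this]
  · -- disjointness
    intro x y hxy hxyn
    have hne' : res x ≠ res y := by
      intro hcon
      exact hxyn (congrFun hcon ⟨n, by omega⟩)
    exact (hallpair _ _ hne').mono (closure_mono (hBOf _)) (closure_mono (hBOf _))
  · -- avoidance
    intro j hj x y z hxy hxz g₀ hg₀ g₁ hg₁ h hh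
    have hL : eSeq ((⟨j, by omega⟩ : Fin (n+1)) : Fin (n+1)).val = eSeq j := rfl
    refine hallav ⟨j, by omega⟩ (res x) (res y) (fun i => res (z i.val)) ?_ ?_ g₀
      (hBOf _ hg₀) g₁ (hBOf _ hg₁) h (fun i => hBOf _ (hh i.val i.isLt)) 
    · intro hcon
      exact hxy (fun i hi => congrFun hcon ⟨i, hi⟩)
    · intro i hcon
      exact hxz i.val i.isLt (fun k hk => congrFun hcon ⟨k, hk⟩)

/-- The base stage. -/
theorem base_good : GoodStage 0 (fun _ : ℕ → Bool => (ball (1:G) (1/2) : Set G)) := by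
  refine ⟨fun _ _ _ => rfl, fun _ => isOpen_ball, fun _ => ⟨1, mem_ball_self (by norm_num)⟩,
    fun _ => isBounded_ball, fun _ => ?_⟩
  have := Metric.diam_ball (x := (1:G)) (r := 1/2) (by norm_num)
  simpa using this

noncomputable def chain
    (htp : ∀ U : Set G, IsOpen U → U.Nonempty → ∃ a ∈ U, ∃ b ∈ U, a ≠ b) :
    ∀ n : ℕ, {E : (ℕ → Bool) → Set G // GoodStage n E}
  | 0 => ⟨_, base_good⟩
  | n+1 => ⟨(exists_step htp n (chain htp n).1 (chain htp n).2).choose,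
      (exists_step htp n (chain htp n).1 (chain htp n).2).choose_spec.1⟩

theorem chain_step (htp : ∀ U : Set G, IsOpen U → U.Nonempty → ∃ a ∈ U, ∃ b ∈ U, a ≠ b)
    (n : ℕ) : GoodStep n (chain htp n).1 (chain htp (n+1)).1 := by
  have h := (exists_step htp n (chain htp n).1 (chain htp n).2).choose_spec.2
  rw [chain]
  exact h

end Step
section Step
variable {G : Type*} [Group G] [MetricSpace G] [IsTopologicalGroup G]

/-- From a full scheme, produce the limit map with all its properties. -/
theorem exists_limit_map [CompleteSpace G]
    (E : ℕ → (ℕ → Bool) → Set G)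
    (hst : ∀ n, GoodStage n (E n))
    (hsp : ∀ n, GoodStep n (E n) (E (n+1))) :
    ∃ f : (ℕ → Bool) → G, Continuous f ∧ Function.Injective f ∧
      (∀ n x, f x ∈ E n x) ∧
      (∀ n (j : ℕ), j ≤ n → ∀ x y : ℕ → Bool, ∀ z : ℕ → ℕ → Bool,
        (¬ Agree (n+1) x y) → (∀ i < (eSeq j).length, ¬ Agree (n+1) x (z i)) →
        ∀ h : ℕ → G, (∀ i < (eSeq j).length, h i ∈ E (n+1) (z i)) →
        f x ≠ f y * wprod (eSeq j) h) := by
  classical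
  have hnest : ∀ n x, E (n+1) x ⊆ E n x := fun n x =>
    subset_closure.trans ((hsp n).1 x)
  have hmono : ∀ n k, n ≤ k → ∀ x, E k x ⊆ E n x := by
    intro n k hnk
    induction k, hnk using Nat.le_induction with
    | base => exact fun x => subset_rfl
    | succ k hk ih => exact fun x => (hnest k x).trans (ih x)
  set u : ℕ → (ℕ → Bool) → G := fun n x => ((hst n).2.2.1 x).some with hu
  have humem : ∀ n x, u n x ∈ E n x := fun n x => ((hst n).2.2.1 x).some_mem
  have hcauchy : ∀ x, CauchySeq (fun n => u n x) := by
    intro x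
    rw [Metric.cauchySeq_iff]
    intro ε hε
    obtain ⟨N, hN⟩ := exists_pow_lt_of_lt_one hε (by norm_num : (1/2 : ℝ) < 1)
    refine ⟨N, fun m hm k hk => ?_⟩
    have h1 : u m x ∈ E N x := hmono N m hm x (humem m x)
    have h2 : u k x ∈ E N x := hmono N k hk x (humem k x)
    calc dist (u m x) (u k x) ≤ Metric.diam (E N x) :=
          Metric.dist_le_diam_of_mem ((hst N).2.2.2.1 x) h1 h2
      _ ≤ (1/2 : ℝ)^N := (hst N).2.2.2.2 x
      _ < ε := hN
  have hex : ∀ x : ℕ → Bool, ∃ l : G, Filter.Tendsto (fun n => u n x) Filter.atTop (nhds l) :=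
    fun x => cauchySeq_tendsto_of_complete (hcauchy x)
  choose f hf using hex
  have hfcl : ∀ n x, f x ∈ closure (E n x) := by
    intro n x
    refine mem_closure_of_tendsto (hf x) ?_
    filter_upwards [Filter.eventually_ge_atTop n] with k hk
    exact hmono n k hk x (humem k x)
  have hfmem : ∀ n x, f x ∈ E n x := fun n x => (hsp n).1 x (hfcl (n+1) x)
  have hEeq : ∀ n (x y : ℕ → Bool), Agree n x y → E n x = E n y := fun n => (hst n).1
  refine ⟨f, ?_, ?_, hfmem, ?_⟩
  · -- continuity
    rw [continuous_iff_continuousAt]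
    intro x
    rw [ContinuousAt, Metric.tendsto_nhds]
    intro ε hε
    obtain ⟨N, hN⟩ := exists_pow_lt_of_lt_one hε (by norm_num : (1/2 : ℝ) < 1)
    have hV : IsOpen {y : ℕ → Bool | ∀ i < N, y i = x i} := by
      have : {y : ℕ → Bool | ∀ i < N, y i = x i}
          = ⋂ i ∈ Finset.range N, {y : ℕ → Bool | y i = x i} := by
        ext y; simp
      rw [this]
      refine isOpen_biInter_finset fun i _ => ?_
      have : {y : ℕ → Bool | y i = x i} = (fun y : ℕ → Bool => y i) ⁻¹' ({x i} : Set Bool) := by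
        ext y; simp
      rw [this]
      exact (continuous_apply i).isOpen_preimage _ (isOpen_discrete _)
    have hVx : x ∈ {y : ℕ → Bool | ∀ i < N, y i = x i} := fun i _ => rfl
    filter_upwards [hV.mem_nhds hVx] with y hy
    have hEq : E N y = E N x := hEeq N y x hy
    have h1 : f y ∈ E N x := hEq ▸ hfmem N y
    calc dist (f y) (f x) ≤ Metric.diam (E N x) :=
          Metric.dist_le_diam_of_mem ((hst N).2.2.2.1 x) h1 (hfmem N x)
      _ ≤ (1/2 : ℝ)^N := (hst N).2.2.2.2 x
      _ < ε := hN
  · -- injectivity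
    intro x y hxy
    by_contra hne
    have hex' : ∃ k, x k ≠ y k := by
      by_contra hcon
      push_neg at hcon
      exact hne (funext hcon)
    set k := Nat.find hex' with hk
    have hkdiff : x k ≠ y k := Nat.find_spec hex'
    have hagree : Agree k x y := fun i hi => by
      have := Nat.find_min hex' hi
      push_neg at this
      exact this
    have hdisj := (hsp k).2.1 x y hagree hkdiff
    exact (Set.disjoint_left.mp hdisj (hfcl (k+1) x)) (hxy ▸ hfcl (k+1) y)
  · -- avoidance
    intro n j hj x y z hxy hxz h hh
    exact (hsp n).2.2 j hj x y z hxy hxz (f x) (hfmem (n+1) x) (f y) (hfmem (n+1) y) h hh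

end Step

end AuxM
open Pointwise in
/-- Every uncountable Polish group has an uncountable Borel subgroup of uncountable index. -/
theorem exists_uncountable_borel_subgroup_uncountable_index {G : Type*} [Group G]
    [TopologicalSpace G] [IsTopologicalGroup G] [PolishSpace G] (hG : ¬ Countable G) :
    ∃ H : Subgroup G, @MeasurableSet G (borel G) (H : Set G) ∧
      ¬ Countable (H : Set G) ∧ ¬ Countable (G ⧸ H) := by
  classical
  have htp0 := two_point_of_uncountable hG
  letI := TopologicalSpace.upgradeIsCompletelyMetrizable G
  have htp : ∀ U : Set G, IsOpen U → U.Nonempty → ∃ a ∈ U, ∃ b ∈ U, a ≠ b := htp0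
  obtain ⟨f, hcont, hinj, hmem, havoid⟩ :=
    exists_limit_map (fun n => (chain htp n).1) (fun n => (chain htp n).2) (chain_step htp)
  set T : Set (ℕ → Bool) := {x | x 0 = true} with hT
  set A : Set G := f '' T with hA
  set H : Subgroup G := Subgroup.closure A with hHdef
  set S : Set G := A ∪ A⁻¹ with hS
  set cons : Bool → (ℕ → Bool) → (ℕ → Bool) := fun b x i => match i with
    | 0 => b
    | k+1 => x k with hcons
  have hconsinj : ∀ b, Function.Injective (cons b) := by
    intro b x y hxy
    funext k
    exact congrFun hxy (k+1)
  have hconsT : ∀ x, cons true x ∈ T := fun x => rfl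
  -- the carrier of H is the union of the powers of S
  have hSH : S ⊆ (H : Set G) := by
    intro g hg
    rcases hg with hg | hg
    · exact Subgroup.subset_closure hg
    · have h1 : g⁻¹ ∈ A := Set.mem_inv.mp hg
      have h2 := H.inv_mem (Subgroup.subset_closure h1)
      rwa [inv_inv] at h2
  have hpow_sub : ∀ n : ℕ, S ^ n ⊆ (H : Set G) := by
    intro n; induction n with
    | zero =>
      intro g hg
      rw [pow_zero] at hg
      rw [Set.mem_one.mp hg]
      exact H.one_mem
    | succ n ih =>
      rw [pow_succ]
      intro g hg
      rcases Set.mem_mul.mp hg with ⟨a, ha, b, hb, rfl⟩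
      exact H.mul_mem (ih ha) (hSH hb)
  have hlistpow : ∀ l : List G, (∀ g ∈ l, g ∈ S) → l.prod ∈ S ^ l.length := by
    intro l
    induction l with
    | nil =>
      intro _
      rw [List.prod_nil, List.length_nil, pow_zero]
      exact Set.mem_one.mpr rfl
    | cons a l ih =>
      intro hl
      rw [List.prod_cons, List.length_cons, pow_succ']
      exact Set.mul_mem_mul (hl a (by simp)) (ih (fun g hg => hl g (by simp [hg])))
  have hmemlist : ∀ g : G, g ∈ H → ∃ l : List G, (∀ y ∈ l, y ∈ S) ∧ l.prod = g := by
    intro g hg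
    have h1 : g ∈ Submonoid.closure (A ∪ A⁻¹) := by
      rw [← Subgroup.closure_toSubmonoid]
      exact hg
    exact Submonoid.exists_list_of_mem_closure h1
  have hcar : (H : Set G) = ⋃ n : ℕ, S ^ n := by
    ext g; constructor
    · intro hg
      obtain ⟨l, hl, rfl⟩ := hmemlist g hg
      exact Set.mem_iUnion.mpr ⟨l.length, hlistpow l hl⟩
    · intro hg
      obtain ⟨n, hn⟩ := Set.mem_iUnion.mp hg
      exact hpow_sub n hn
  -- compactness of the powers of S
  have hTc : IsCompact T := by
    have h1 : IsClosed T := by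
      have h2 : T = (fun y : ℕ → Bool => y 0) ⁻¹' ({true} : Set Bool) := by ext y; simp [hT]
      rw [h2]
      exact IsClosed.preimage (continuous_apply 0) (isClosed_discrete _)
    exact h1.isCompact
  have hAc : IsCompact A := hTc.image hcont
  have hScomp : IsCompact S := hAc.union hAc.inv
  have hSnc : ∀ n : ℕ, IsCompact (S ^ n) := by
    intro n; induction n with
    | zero =>
      rw [pow_zero]
      have : (1 : Set G) = {1} := rfl
      rw [this]
      exact isCompact_singleton
    | succ n ih =>
      rw [pow_succ]
      exact ih.mul hScomp
  refine ⟨H, ?_, ?_, ?_⟩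
  · -- Borel measurability
    rw [hcar]
    refine MeasurableSet.iUnion (fun n => ?_)
    have h1 : @MeasurableSet G (borel G) ((S ^ n)ᶜ) :=
      MeasurableSpace.measurableSet_generateFrom (hSnc n).isClosed.isOpen_compl
    simpa using h1.compl
  · -- H is uncountable
    intro hc
    have hcount : (H : Set G).Countable := Set.countable_coe_iff.mp hc
    have hAcount : A.Countable := hcount.mono Subgroup.subset_closure
    haveI : Countable ↥A := Set.countable_coe_iff.mpr hAcount
    have hinj2 : Function.Injective
        (fun x : ℕ → Bool => (⟨f (cons true x), Set.mem_image_of_mem f (hconsT x)⟩ : ↥A)) := by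
      intro x y hxy
      have h1 : f (cons true x) = f (cons true y) := congrArg Subtype.val hxy
      exact hconsinj true (hinj h1)
    exact (not_countable_iff.mpr uncountable_nat_bool) hinj2.countable
  · -- the quotient is uncountable
    intro hc
    -- convert a product of elements of S into a word in values of f on T
    have hword : ∀ l : List G, (∀ g ∈ l, g ∈ S) → ∃ (L : List ℤ) (z : ℕ → (ℕ → Bool)),
        (∀ i < L.length, z i 0 = true) ∧ wprod L (fun i => f (z i)) = l.prod := by
      intro l
      induction l with
      | nil =>
        intro _
        exact ⟨[], fun _ _ => true, fun i hi => absurd hi (Nat.not_lt_zero i), by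
          rw [List.prod_nil]; rfl⟩
      | cons g l ih =>
        intro hl
        obtain ⟨L, z, hz, hw⟩ := ih (fun g' hg' => hl g' (by simp [hg']))
        rcases hl g (by simp) with hg | hg
        · obtain ⟨w, hwT, rfl⟩ := hg
          refine ⟨1 :: L, fun i => match i with | 0 => w | k+1 => z k, ?_, ?_⟩
          · intro i hi
            match i with
            | 0 => exact hwT
            | k+1 => exact hz k (by simpa using hi)
          · rw [List.prod_cons]
            show f w ^ (1:ℤ) * wprod L (fun i => f (z i)) = _
            rw [zpow_one, hw]
        · have h1 : g⁻¹ ∈ A := Set.mem_inv.mp hg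
          obtain ⟨w, hwT, hwg⟩ := h1
          have hgw : g = f w ^ (-1 : ℤ) := by rw [zpow_neg_one, hwg, inv_inv]
          refine ⟨(-1) :: L, fun i => match i with | 0 => w | k+1 => z k, ?_, ?_⟩
          · intro i hi
            match i with
            | 0 => exact hwT
            | k+1 => exact hz k (by simpa using hi)
          · rw [List.prod_cons]
            show f w ^ (-1:ℤ) * wprod L (fun i => f (z i)) = _
            rw [hw, ← hgw]
    have hcoset : Function.Injective
        (fun x : ℕ → Bool => (QuotientGroup.mk (f (cons false x)) : G ⧸ H)) := by
      intro x y hxyq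
      by_contra hne
      have hd : ∃ d, x d ≠ y d := by
        by_contra hcd
        push_neg at hcd
        exact hne (funext hcd)
      obtain ⟨d, hd⟩ := hd
      have hmemH : (f (cons false x))⁻¹ * f (cons false y) ∈ H := QuotientGroup.eq.mp hxyq
      obtain ⟨l, hl, hprod⟩ := hmemlist _ hmemH
      obtain ⟨L, z, hzT, hwL⟩ := hword l hl
      have heq : f (cons false y) = f (cons false x) * wprod L (fun i => f (z i)) := by
        rw [hwL, hprod, mul_inv_cancel_left]
      have hLe : eSeq (Encodable.encode L) = L := Denumerable.ofNat_encode L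
      set n := max (Encodable.encode L) (d+1) with hn
      have hYX : ¬ Agree (n+1) (cons false y) (cons false x) := by
        intro hag
        have h1 := hag (d+1) (by
          have := le_max_right (Encodable.encode L) (d+1)
          omega)
        exact hd (show x d = y d from h1.symm)
      have hYz : ∀ i < (eSeq (Encodable.encode L)).length, ¬ Agree (n+1) (cons false y) (z i) := by
        intro i hi hag
        have h0 := hag 0 (Nat.succ_pos n)
        rw [hLe] at hi
        have h1 : z i 0 = true := hzT i hi
        rw [h1] at h0
        exact Bool.false_ne_true h0
      exact havoid n (Encodable.encode L) (le_max_left _ _) (cons false y) (cons false x) z hYX hYz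
        (fun i => f (z i)) (fun i _ => hmem (n+1) (z i)) (by rw [hLe]; exact heq)
    exact (not_countable_iff.mpr uncountable_nat_bool) hcoset.countable
end

section
/- Assume the Continuum Hypothesis. Let G be an uncountable abelian Polish group. Then there exists a set X ⊆ G such that both X and its complement G \ X are naively Haar meager. In particular, the naively Haar meager subsets of G do not form an ideal. -/
/-- A set `X` in an abelian Polish group `G` is *naively Haar meager* if there are a nonempty
compact metrizable space `K` and a continuous map `f : K → G` such that `f ⁻¹' (x + X)` is
meager in `K` for every `x ∈ G`. -/
def IsNaivelyAddHaarMeager {G : Type*} [AddGroup G] [TopologicalSpace G] (X : Set G) : Prop :=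
  ∃ (K : Type) (tK : TopologicalSpace K),
    @CompactSpace K tK ∧ @TopologicalSpace.MetrizableSpace K tK ∧ Nonempty K ∧
    ∃ f : K → G, @Continuous K G tK _ f ∧
      ∀ x : G, @IsMeagre K tK (f ⁻¹' ((fun b => x + b) '' X))

open TopologicalSpace Metric Filter

section MeagreAux

lemma nhm_singleton_interior_empty (k : ℕ → Bool) :
    interior ({k} : Set (ℕ → Bool)) = ∅ := by
  by_contra h
  obtain ⟨k', hk'⟩ := Set.nonempty_iff_ne_empty.mpr h
  have hkk : k' ∈ ({k} : Set (ℕ → Bool)) := interior_subset hk'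
  rw [Set.mem_singleton_iff] at hkk
  subst hkk
  have hnb : ({k'} : Set (ℕ → Bool)) ∈ nhds k' := mem_interior_iff_mem_nhds.mp hk'
  obtain ⟨U, hUsub, hUopen, hkU⟩ := mem_nhds_iff.mp hnb
  obtain ⟨I, u, hu, hsub⟩ := isOpen_pi_iff.mp hUopen k' hkU
  obtain ⟨m, hm⟩ := I.exists_notMem
  have hk2mem : Function.update k' m (!(k' m)) ∈ (I : Set ℕ).pi u := by
    intro i hi
    have hne : i ≠ m := fun h => hm (h ▸ hi)
    rw [Function.update_of_ne hne]
    exact (hu i hi).2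
  have h2 : Function.update k' m (!(k' m)) ∈ ({k'} : Set (ℕ → Bool)) := hUsub (hsub hk2mem)
  rw [Set.mem_singleton_iff] at h2
  have := congrFun h2 m
  rw [Function.update_self] at this
  exact (Bool.not_ne_self (k' m)) this

lemma nhm_subsingleton_isMeagre {S : Set (ℕ → Bool)} (h : S.Subsingleton) : IsMeagre S := by
  rcases S.eq_empty_or_nonempty with rfl | ⟨k, hk⟩
  · exact IsMeagre.empty
  · have : S = {k} := h.eq_singleton_of_mem hk
    subst this
    rw [IsMeagre]
    apply residual_of_dense_open
    · exact isClosed_singleton.isOpen_compl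
    · rw [← interior_eq_empty_iff_dense_compl]
      exact nhm_singleton_interior_empty k

lemma nhm_isMeagre_iUnion {X : Type*} [TopologicalSpace X] {ι : Type*} [Countable ι]
    {s : ι → Set X} (hs : ∀ i, IsMeagre (s i)) : IsMeagre (⋃ i, s i) := by
  rw [IsMeagre, Set.compl_iUnion]
  exact countable_iInter_mem.mpr hs

lemma nhm_isMeagre_biUnion {X : Type*} [TopologicalSpace X] {α : Type*} {T : Set α}
    (hT : T.Countable) {s : α → Set X} (hs : ∀ i ∈ T, IsMeagre (s i)) :
    IsMeagre (⋃ i ∈ T, s i) := by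
  haveI := hT.to_subtype
  rw [Set.biUnion_eq_iUnion]
  exact nhm_isMeagre_iUnion (fun i => hs i i.2)

end MeagreAux

section GroupAux

variable {G : Type*} [AddCommGroup G] [TopologicalSpace G]

lemma nhm_open_infinite [IsTopologicalAddGroup G] [SeparableSpace G] [T1Space G] (hG : ¬ Countable G)
    {U : Set G} (hU : IsOpen U) (hne : U.Nonempty) : U.Infinite := by
  by_contra hfin
  rw [Set.not_infinite] at hfin
  obtain ⟨u, hu⟩ := hne
  have hopen : IsOpen ({u} : Set G) := by
    have : ({u} : Set G) = U \ (U \ {u}) := by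
      ext z; simp only [Set.mem_diff, Set.mem_singleton_iff]
      constructor
      · rintro rfl; exact ⟨hu, fun h => h.2 rfl⟩
      · rintro ⟨hz, h2⟩
        by_contra hne'
        exact h2 ⟨hz, hne'⟩
    rw [this]
    exact hU.sdiff ((hfin.subset Set.diff_subset).isClosed)
  have hall : ∀ g : G, IsOpen ({g} : Set G) := by
    intro g
    have hc : Continuous (fun x : G => u - g + x) := continuous_const.add continuous_id
    have : ((fun x : G => u - g + x) ⁻¹' {u}) = {g} := by
      ext z
      simp only [Set.mem_preimage, Set.mem_singleton_iff]
      constructor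
      · intro h; have : u - g + z - (u - g) = u - (u - g) := by rw [h]
        simpa [add_sub_cancel_left, sub_sub_cancel] using by
          rw [add_comm] at this; simpa [add_sub_cancel_right] using this
      · rintro rfl; abel
    rw [← this]
    exact hopen.preimage hc
  haveI : DiscreteTopology G := by
    rw [discreteTopology_iff_isOpen_singleton] at *; exact hall
  refine hG ?_
  obtain ⟨s, hsc, hsd⟩ := ‹SeparableSpace G›.exists_countable_dense
  have : s = Set.univ := by
    have := hsd.closure_eq
    rwa [closure_discrete] at this
  rw [this] at hsc
  exact Set.countable_univ_iff.mp hsc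

omit [AddCommGroup G] in
lemma nhm_mk_le_continuum [SecondCountableTopology G] [T1Space G] :
    Cardinal.mk G ≤ Cardinal.continuum := by
  classical
  set B := countableBasis G
  have hbasis := isBasis_countableBasis G
  set f : G → Set B := fun x => {s : B | x ∈ (s : Set G)} with hf
  have hinj : Function.Injective f := by
    intro x y hxy
    by_contra hne
    obtain ⟨v, hvB, hxv, hvsub⟩ := hbasis.exists_subset_of_mem_open
      (Set.mem_compl_singleton_iff.mpr hne) (isOpen_compl_singleton)
    have h1 : (⟨v, hvB⟩ : B) ∈ f x := hxv
    rw [hxy] at h1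
    have : y ∈ v := h1
    exact (hvsub this) rfl
  calc Cardinal.mk G ≤ Cardinal.mk (Set B) := Cardinal.mk_le_of_injective hinj
    _ = 2 ^ Cardinal.mk B := Cardinal.mk_set
    _ ≤ 2 ^ Cardinal.aleph0 := by
        apply Cardinal.power_le_power_left (by norm_num)
        exact Cardinal.mk_le_aleph0
    _ = Cardinal.continuum := Cardinal.two_power_aleph0

lemma nhm_exists_good_points {ι : Type*} [DecidableEq ι]
    (hinf : ∀ U : Set G, IsOpen U → U.Nonempty → U.Infinite)
    (U : ι → Set G) (hUo : ∀ i, IsOpen (U i)) (hUne : ∀ i, (U i).Nonempty) (s : Finset ι) :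
    ∃ y : ι → G, (∀ i ∈ s, y i ∈ U i) ∧
      (∀ i ∈ s, ∀ j ∈ s, i ≠ j → y i ≠ y j) ∧
      (∀ a ∈ s, ∀ b ∈ s, ∀ c ∈ s, ∀ e ∈ s,
        a ≠ b → a ≠ c → a ≠ e → b ≠ c → b ≠ e → c ≠ e →
        y a + y b ≠ y c + y e) := by
  classical
  induction s using Finset.induction_on with
  | empty => exact ⟨fun _ => 0, by simp, by simp, by simp⟩
  | @insert i₀ s hi₀ ih =>
    obtain ⟨y, hy1, hy2, hy3⟩ := ih
    have hne0 : ∀ m, m ∈ s → m ≠ i₀ := by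
      intro m hm h; subst h; exact hi₀ hm
    set Bad : Finset G :=
      (s.image y) ∪ ((s ×ˢ (s ×ˢ s)).image (fun p => y p.2.1 + y p.2.2 - y p.1)) with hBad
    obtain ⟨z, hzU, hzB⟩ :=
      (hinf (U i₀) (hUo i₀) (hUne i₀)).exists_notMem_finset Bad
    have hz_ne : ∀ m ∈ s, z ≠ y m := by
      intro m hm h
      exact hzB (Finset.mem_union_left _ (Finset.mem_image.mpr ⟨m, hm, h.symm⟩))
    have hz_ne3 : ∀ u ∈ s, ∀ v ∈ s, ∀ w ∈ s, z ≠ y v + y w - y u := by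
      intro u hu v hv w hw h
      refine hzB (Finset.mem_union_right _ (Finset.mem_image.mpr ?_))
      exact ⟨(u, v, w), by simp [Finset.mem_product, hu, hv, hw], h.symm⟩
    have hmem : ∀ m, m ∈ insert i₀ s → m ≠ i₀ → m ∈ s := by
      intro m hm hne
      rcases Finset.mem_insert.mp hm with rfl | h
      · exact absurd rfl hne
      · exact h
    refine ⟨Function.update y i₀ z, ?_, ?_, ?_⟩
    · intro i hi
      rcases Finset.mem_insert.mp hi with rfl | hi
      · rwa [Function.update_self]
      · rw [Function.update_of_ne (hne0 i hi)]
        exact hy1 i hi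
    · intro i hi j hj hij
      by_cases hi0 : i = i₀
      · subst hi0
        have hj' := hmem j hj (fun h => hij h.symm)
        rw [Function.update_self, Function.update_of_ne (hne0 j hj')]
        exact hz_ne j hj'
      by_cases hj0 : j = i₀
      · subst hj0
        have hi' := hmem i hi hi0
        rw [Function.update_self, Function.update_of_ne (hne0 i hi')]
        exact fun h => hz_ne i hi' h.symm
      · have hi' := hmem i hi hi0
        have hj' := hmem j hj hj0
        rw [Function.update_of_ne (hne0 i hi'), Function.update_of_ne (hne0 j hj')]
        exact hy2 i hi' j hj' hij
    · intro a ha b hb c hc e he hab hac hae hbc hbe hce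
      by_cases ha0 : a = i₀
      · subst ha0
        have hb' := hmem b hb (fun h => hab h.symm)
        have hc' := hmem c hc (fun h => hac h.symm)
        have he' := hmem e he (fun h => hae h.symm)
        rw [Function.update_self, Function.update_of_ne (hne0 b hb'),
          Function.update_of_ne (hne0 c hc'), Function.update_of_ne (hne0 e he')]
        intro h
        exact hz_ne3 b hb' c hc' e he' (eq_sub_of_add_eq h)
      by_cases hb0 : b = i₀
      · subst hb0
        have ha' := hmem a ha ha0
        have hc' := hmem c hc (fun h => hbc h.symm)
        have he' := hmem e he (fun h => hbe h.symm)
        rw [Function.update_self, Function.update_of_ne (hne0 a ha'),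
          Function.update_of_ne (hne0 c hc'), Function.update_of_ne (hne0 e he')]
        intro h
        rw [add_comm] at h
        exact hz_ne3 a ha' c hc' e he' (eq_sub_of_add_eq h)
      by_cases hc0 : c = i₀
      · subst hc0
        have ha' := hmem a ha ha0
        have hb' := hmem b hb hb0
        have he' := hmem e he (fun h => hce h.symm)
        rw [Function.update_self, Function.update_of_ne (hne0 a ha'),
          Function.update_of_ne (hne0 b hb'), Function.update_of_ne (hne0 e he')]
        intro h
        exact hz_ne3 e he' a ha' b hb' (eq_sub_of_add_eq h.symm)
      by_cases he0 : e = i₀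
      · subst he0
        have ha' := hmem a ha ha0
        have hb' := hmem b hb hb0
        have hc' := hmem c hc hc0
        rw [Function.update_self, Function.update_of_ne (hne0 a ha'),
          Function.update_of_ne (hne0 b hb'), Function.update_of_ne (hne0 c hc')]
        intro h
        rw [add_comm (y c) z] at h
        exact hz_ne3 c hc' a ha' b hb' (eq_sub_of_add_eq h.symm)
      · have ha' := hmem a ha ha0
        have hb' := hmem b hb hb0
        have hc' := hmem c hc hc0
        have he' := hmem e he he0
        rw [Function.update_of_ne (hne0 a ha'), Function.update_of_ne (hne0 b hb'),
          Function.update_of_ne (hne0 c hc'), Function.update_of_ne (hne0 e he')]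
        exact hy3 a ha' b hb' c hc' e he' hab hac hae hbc hbe hce

end GroupAux

section Scheme
variable {H : Type*} [AddCommGroup H] [MetricSpace H]

def SchemeInv (n : ℕ) (d : (Fin n → Bool) → H × ℝ) : Prop :=
  (∀ s, 0 < (d s).2) ∧ (∀ s, (d s).2 ≤ (1/2)^n) ∧
  (∀ a b, a ≠ b → Disjoint (closedBall (d a).1 (d a).2) (closedBall (d b).1 (d b).2)) ∧
  (∀ a b c e, a ≠ b → a ≠ c → a ≠ e → b ≠ c → b ≠ e → c ≠ e →
    ∀ p ∈ closedBall (d a).1 (d a).2, ∀ q ∈ closedBall (d b).1 (d b).2,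
    ∀ p' ∈ closedBall (d c).1 (d c).2, ∀ q' ∈ closedBall (d e).1 (d e).2,
      p + q ≠ p' + q')

def schemeRes {n : ℕ} (t : Fin (n+1) → Bool) : Fin n → Bool := fun i => t i.castSucc

def SchemeLink {n : ℕ} (d : (Fin n → Bool) → H × ℝ) (d' : (Fin (n+1) → Bool) → H × ℝ) : Prop :=
  ∀ t, closedBall (d' t).1 (d' t).2 ⊆ closedBall (d (schemeRes t)).1 (d (schemeRes t)).2

lemma scheme_step [IsTopologicalAddGroup H]
    (hinf : ∀ U : Set H, IsOpen U → U.Nonempty → U.Infinite)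
    (n : ℕ) (d : (Fin n → Bool) → H × ℝ) (hd : SchemeInv n d) :
    ∃ d' : (Fin (n+1) → Bool) → H × ℝ, SchemeInv (n+1) d' ∧ SchemeLink d d' := by
  classical
  obtain ⟨hpos, _hsize, _hdisj, hsidon⟩ := hd
  set U : (Fin (n+1) → Bool) → Set H := fun t => ball (d (schemeRes t)).1 (d (schemeRes t)).2
    with hU
  have hUo : ∀ t, IsOpen (U t) := fun t => isOpen_ball
  have hUne : ∀ t, (U t).Nonempty := fun t => ⟨(d (schemeRes t)).1, mem_ball_self (hpos _)⟩
  obtain ⟨y, hy1, hy2, hy3⟩ := nhm_exists_good_points hinf U hUo hUne Finset.univ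
  simp only [Finset.mem_univ, forall_true_left, true_implies] at hy1 hy2 hy3
  have Epos : ∀ᶠ ε in nhdsWithin (0:ℝ) (Set.Ioi 0), (0:ℝ) < ε := by
    filter_upwards [self_mem_nhdsWithin] with ε hε using hε
  have Ele : ∀ c : ℝ, 0 < c → ∀ᶠ ε in nhdsWithin (0:ℝ) (Set.Ioi 0), ε ≤ c := by
    intro c hc
    exact (Filter.eventually_of_mem (Iic_mem_nhds hc) (fun x hx => hx)).filter_mono
      nhdsWithin_le_nhds
  have Elt : ∀ c : ℝ, 0 < c → ∀ᶠ ε in nhdsWithin (0:ℝ) (Set.Ioi 0), ε < c := by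
    intro c hc
    exact (Filter.eventually_of_mem (Iio_mem_nhds hc) (fun x hx => hx)).filter_mono
      nhdsWithin_le_nhds
  have E2 : ∀ᶠ ε in nhdsWithin (0:ℝ) (Set.Ioi 0), ε ≤ (1/2:ℝ)^(n+1) :=
    Ele _ (by positivity)
  have E3 : ∀ᶠ ε in nhdsWithin (0:ℝ) (Set.Ioi 0), ∀ t, closedBall (y t) ε ⊆ U t := by
    rw [eventually_all]
    intro t
    obtain ⟨δ, hδpos, hδ⟩ := (Metric.nhds_basis_closedBall.mem_iff).1
      ((hUo t).mem_nhds (hy1 t))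
    exact (Ele δ hδpos).mono (fun ε hε => (closedBall_subset_closedBall hε).trans hδ)
  have E4 : ∀ᶠ ε in nhdsWithin (0:ℝ) (Set.Ioi 0), ∀ a b, a ≠ b →
      Disjoint (closedBall (y a) ε) (closedBall (y b) ε) := by
    rw [eventually_all]
    intro a
    rw [eventually_all]
    intro b
    by_cases hab : a = b
    · exact Filter.Eventually.of_forall (fun ε h => absurd hab h)
    · have hne : y a ≠ y b := hy2 a b hab
      have hpos' : 0 < dist (y a) (y b) / 2 := by
        have := dist_pos.2 hne; linarith
      exact (Elt _ hpos').mono (fun ε hε _ =>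
        closedBall_disjoint_closedBall (by linarith [hε]))
  have E5 : ∀ᶠ ε in nhdsWithin (0:ℝ) (Set.Ioi 0), ∀ a b c e,
      a ≠ b → a ≠ c → a ≠ e → b ≠ c → b ≠ e → c ≠ e →
      ∀ p ∈ closedBall (y a) ε, ∀ q ∈ closedBall (y b) ε,
      ∀ p' ∈ closedBall (y c) ε, ∀ q' ∈ closedBall (y e) ε, p + q ≠ p' + q' := by
    rw [eventually_all]; intro a
    rw [eventually_all]; intro b
    rw [eventually_all]; intro c
    rw [eventually_all]; intro e
    by_cases hd : a ≠ b ∧ a ≠ c ∧ a ≠ e ∧ b ≠ c ∧ b ≠ e ∧ c ≠ e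
    · obtain ⟨hab, hac, hae, hbc, hbe, hce⟩ := hd
      have hne : y a + y b ≠ y c + y e := hy3 a b c e hab hac hae hbc hbe hce
      obtain ⟨V₁, V₂, hV₁, hV₂, hm₁, hm₂, hVd⟩ := t2_separation hne
      have hc1 : ((fun p : H × H => p.1 + p.2) ⁻¹' V₁) ∈ nhds ((y a, y b)) :=
        (continuous_add.continuousAt).preimage_mem_nhds (hV₁.mem_nhds hm₁)
      have hc2 : ((fun p : H × H => p.1 + p.2) ⁻¹' V₂) ∈ nhds ((y c, y e)) :=
        (continuous_add.continuousAt).preimage_mem_nhds (hV₂.mem_nhds hm₂)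
      obtain ⟨δ₁, hδ₁pos, hδ₁⟩ := Metric.mem_nhds_iff.1 hc1
      obtain ⟨δ₂, hδ₂pos, hδ₂⟩ := Metric.mem_nhds_iff.1 hc2
      refine (Elt (min δ₁ δ₂) (lt_min hδ₁pos hδ₂pos)).mono ?_
      intro ε hε _ _ _ _ _ _ p hp q hq p' hp' q' hq'
      have hpq : (p, q) ∈ ball (y a) δ₁ ×ˢ ball (y b) δ₁ :=
        Set.mem_prod.mpr ⟨closedBall_subset_ball (lt_of_lt_of_le hε (min_le_left _ _)) hp,
          closedBall_subset_ball (lt_of_lt_of_le hε (min_le_left _ _)) hq⟩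
      have h1 : p + q ∈ V₁ := hδ₁ (by rwa [ball_prod_same] at hpq)
      have hpq' : (p', q') ∈ ball (y c) δ₂ ×ˢ ball (y e) δ₂ :=
        Set.mem_prod.mpr ⟨closedBall_subset_ball (lt_of_lt_of_le hε (min_le_right _ _)) hp',
          closedBall_subset_ball (lt_of_lt_of_le hε (min_le_right _ _)) hq'⟩
      have h2 : p' + q' ∈ V₂ := hδ₂ (by rwa [ball_prod_same] at hpq')
      intro heq
      exact (Set.disjoint_left.1 hVd) h1 (heq ▸ h2)
    · refine Filter.Eventually.of_forall (fun ε => ?_)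
      intro hab hac hae hbc hbe hce
      exact absurd ⟨hab, hac, hae, hbc, hbe, hce⟩ hd
  obtain ⟨ε, hεpos, hε2, hε3, hε4, hε5⟩ :=
    (Epos.and (E2.and (E3.and (E4.and E5)))).exists
  refine ⟨fun t => (y t, ε), ⟨fun _ => hεpos, fun _ => hε2, hε4, hε5⟩, ?_⟩
  intro t
  exact (hε3 t).trans ball_subset_closedBall

lemma schemeInv_zero : SchemeInv (H := H) 0 (fun _ => ((0:H), (1:ℝ))) := by
  refine ⟨fun _ => one_pos, fun _ => by norm_num, ?_, ?_⟩
  · intro a b hab; exact absurd (Subsingleton.elim a b) hab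
  · intro a b c e hab _ _ _ _ _; exact absurd (Subsingleton.elim a b) hab

variable [IsTopologicalAddGroup H]

noncomputable def schemeD (hinf : ∀ U : Set H, IsOpen U → U.Nonempty → U.Infinite) :
    ∀ n : ℕ, {d : (Fin n → Bool) → H × ℝ // SchemeInv n d}
  | 0 => ⟨fun _ => ((0:H), (1:ℝ)), schemeInv_zero⟩
  | (n+1) => ⟨(scheme_step hinf n (schemeD hinf n).1 (schemeD hinf n).2).choose,
      (scheme_step hinf n (schemeD hinf n).1 (schemeD hinf n).2).choose_spec.1⟩

lemma schemeD_link (hinf : ∀ U : Set H, IsOpen U → U.Nonempty → U.Infinite) (n : ℕ) :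
    SchemeLink (schemeD hinf n).1 (schemeD hinf (n+1)).1 :=
  (scheme_step hinf n (schemeD hinf n).1 (schemeD hinf n).2).choose_spec.2

lemma exists_sidon_embedding [CompleteSpace H]
    (hinf : ∀ U : Set H, IsOpen U → U.Nonempty → U.Infinite) :
    ∃ φ : (ℕ → Bool) → H, Continuous φ ∧ Function.Injective φ ∧
      ∀ k1 k2 k3 k4 : ℕ → Bool, k1 ≠ k2 → k1 ≠ k3 → k1 ≠ k4 → k2 ≠ k3 → k2 ≠ k4 → k3 ≠ k4 →
        φ k1 + φ k2 ≠ φ k3 + φ k4 := by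
  classical
  set D := schemeD hinf with hD
  set c : ℕ → (ℕ → Bool) → H := fun n k => ((D n).1 (fun i : Fin n => k ↑i)).1 with hc
  set r : ℕ → (ℕ → Bool) → ℝ := fun n k => ((D n).1 (fun i : Fin n => k ↑i)).2 with hr
  set B : ℕ → (ℕ → Bool) → Set H := fun n k => closedBall (c n k) (r n k) with hB
  have hrpos : ∀ n k, 0 < r n k := fun n k => (D n).2.1 _
  have hrle : ∀ n k, r n k ≤ (1/2)^n := fun n k => (D n).2.2.1 _
  have hres : ∀ (k : ℕ → Bool) (n : ℕ),
      schemeRes (fun i : Fin (n+1) => k ↑i) = fun i : Fin n => k ↑i := by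
    intro k n; funext i; simp [schemeRes]
  have hstep : ∀ n k, B (n+1) k ⊆ B n k := by
    intro n k
    have h := schemeD_link hinf n (fun i : Fin (n+1) => k ↑i)
    rwa [hres] at h
  have hmono : ∀ n m, n ≤ m → ∀ k, B m k ⊆ B n k := by
    intro n m hnm
    induction hnm with
    | refl => exact fun k => le_refl _
    | step h ih => exact fun k => (hstep _ k).trans (ih k)
  have hcmem : ∀ n k, c n k ∈ B n k := fun n k => mem_closedBall_self (hrpos n k).le
  have hcstep : ∀ n k, dist (c n k) (c (n+1) k) ≤ 1 * (1/2)^n := by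
    intro n k
    have h1 : c (n+1) k ∈ B n k := hstep n k (hcmem (n+1) k)
    rw [hB] at h1
    rw [mem_closedBall] at h1
    rw [one_mul, dist_comm]
    exact h1.trans (hrle n k)
  have hcauchy : ∀ k, ∃ a, Tendsto (fun n => c n k) atTop (nhds a) := by
    intro k
    apply cauchySeq_tendsto_of_complete
    exact cauchySeq_of_le_geometric (1/2) 1 (by norm_num) (fun n => hcstep n k)
  choose φ hφ using hcauchy
  have hφmem : ∀ n k, φ k ∈ B n k := by
    intro n k
    apply Metric.isClosed_closedBall.mem_of_tendsto (hφ k)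
    exact eventually_atTop.mpr ⟨n, fun m hm => hmono n m hm k (hcmem m k)⟩
  have hrestrict_ne : ∀ (k k' : ℕ → Bool) (i : ℕ), k i ≠ k' i → ∀ n, i < n →
      (fun j : Fin n => k ↑j) ≠ (fun j : Fin n => k' ↑j) := by
    intro k k' i hne n hi h
    exact hne (congrFun h ⟨i, hi⟩)
  have hBrw : ∀ n k, B n k = closedBall ((D n).1 (fun i : Fin n => k ↑i)).1
      ((D n).1 (fun i : Fin n => k ↑i)).2 := fun n k => rfl
  have hinj : Function.Injective φ := by
    intro k k' h
    by_contra hne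
    obtain ⟨i, hi⟩ := Function.ne_iff.mp hne
    have hd := (D (i+1)).2.2.2.1 _ _ (hrestrict_ne k k' i hi (i+1) (Nat.lt_succ_self i))
    rw [← hBrw (i+1) k, ← hBrw (i+1) k'] at hd
    exact Set.disjoint_left.mp hd (hφmem (i+1) k) (h ▸ hφmem (i+1) k')
  refine ⟨φ, ?_, hinj, ?_⟩
  · rw [continuous_iff_continuousAt]
    intro k
    rw [ContinuousAt, Metric.tendsto_nhds]
    intro ε hε
    obtain ⟨n, hn⟩ : ∃ n : ℕ, 2*(1/2:ℝ)^n < ε := by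
      obtain ⟨n, hn⟩ := exists_pow_lt_of_lt_one (show (0:ℝ) < ε/2 by linarith)
        (show (1/2:ℝ) < 1 by norm_num)
      exact ⟨n, by linarith⟩
    have hVopen : IsOpen {k' : ℕ → Bool | ∀ i : Fin n, k' ↑i = k ↑i} := by
      have heq : {k' : ℕ → Bool | ∀ i : Fin n, k' ↑i = k ↑i}
          = ⋂ i : Fin n, (fun k' : ℕ → Bool => k' ↑i) ⁻¹' {k ↑i} := by
        ext k'; simp [Set.mem_iInter]
      rw [heq]
      exact isOpen_iInter_of_finite fun i =>
        (continuous_apply (↑i : ℕ)).isOpen_preimage _ (isOpen_discrete _)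
    filter_upwards [hVopen.mem_nhds (fun i => rfl)] with k' hk'
    have hBeq : B n k' = B n k := by
      have hre : (fun i : Fin n => k' ↑i) = fun i : Fin n => k ↑i := funext fun j => hk' j
      rw [hBrw, hBrw, hre]
    have h1 : dist (φ k') (c n k) ≤ r n k := by
      have := hφmem n k'
      rw [hBeq, hB, mem_closedBall] at this
      exact this
    have h2 : dist (φ k) (c n k) ≤ r n k := by
      have := hφmem n k
      rw [hB, mem_closedBall] at this
      exact this
    calc dist (φ k') (φ k) ≤ dist (φ k') (c n k) + dist (φ k) (c n k) :=
        dist_triangle_right _ _ _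
      _ ≤ r n k + r n k := add_le_add h1 h2
      _ ≤ (1/2)^n + (1/2)^n := add_le_add (hrle n k) (hrle n k)
      _ < ε := by linarith
  · intro k1 k2 k3 k4 h12 h13 h14 h23 h24 h34
    obtain ⟨i12, hi12⟩ := Function.ne_iff.mp h12
    obtain ⟨i13, hi13⟩ := Function.ne_iff.mp h13
    obtain ⟨i14, hi14⟩ := Function.ne_iff.mp h14
    obtain ⟨i23, hi23⟩ := Function.ne_iff.mp h23
    obtain ⟨i24, hi24⟩ := Function.ne_iff.mp h24
    obtain ⟨i34, hi34⟩ := Function.ne_iff.mp h34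
    set N := (max i12 (max i13 (max i14 (max i23 (max i24 i34))))) + 1 with hN
    have hlt : i12 < N ∧ i13 < N ∧ i14 < N ∧ i23 < N ∧ i24 < N ∧ i34 < N := by
      refine ⟨?_, ?_, ?_, ?_, ?_, ?_⟩ <;> · rw [hN]; omega
    have d12 := hrestrict_ne k1 k2 i12 hi12 N hlt.1
    have d13 := hrestrict_ne k1 k3 i13 hi13 N hlt.2.1
    have d14 := hrestrict_ne k1 k4 i14 hi14 N hlt.2.2.1
    have d23 := hrestrict_ne k2 k3 i23 hi23 N hlt.2.2.2.1
    have d24 := hrestrict_ne k2 k4 i24 hi24 N hlt.2.2.2.2.1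
    have d34 := hrestrict_ne k3 k4 i34 hi34 N hlt.2.2.2.2.2
    exact (D N).2.2.2.2 _ _ _ _ d12 d13 d14 d23 d24 d34
      _ (hφmem N k1) _ (hφmem N k2) _ (hφmem N k3) _ (hφmem N k4)

end Scheme

/-- Under CH, every uncountable abelian Polish group can be split into a naively Haar meager
set and its complement which is also naively Haar meager; in particular, the naively Haar
meager sets do not form an ideal. -/
theorem exists_naivelyHaarMeager_with_naivelyHaarMeager_complement
    (hCH : Cardinal.continuum.{0} = Cardinal.aleph 1)
    {G : Type*} [AddCommGroup G] [TopologicalSpace G] [IsTopologicalAddGroup G] [PolishSpace G]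
    (hG : ¬ Countable G) :
    (∃ X : Set G, IsNaivelyAddHaarMeager X ∧ IsNaivelyAddHaarMeager Xᶜ) ∧
    ¬ ∀ X Y : Set G, IsNaivelyAddHaarMeager X → IsNaivelyAddHaarMeager Y →
        IsNaivelyAddHaarMeager (X ∪ Y) := by
  classical
  letI := upgradeIsCompletelyMetrizable G
  -- Step 0: nonempty open sets are infinite
  have hinf : ∀ U : Set G, IsOpen U → U.Nonempty → U.Infinite := fun U hU hne =>
    nhm_open_infinite hG hU hne
  -- Step 1: the Sidon Cantor map
  obtain ⟨φ, hφc, hφi, hφs⟩ := exists_sidon_embedding hinf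
  -- prepend maps
  set e : Bool → (ℕ → Bool) → (ℕ → Bool) := fun b k n => Nat.casesOn n b k with he
  have heC : ∀ b, Continuous (e b) := by
    intro b
    apply continuous_pi
    intro n
    cases n with
    | zero => exact continuous_const
    | succ m => exact continuous_apply m
  have heI : ∀ b, Function.Injective (e b) := by
    intro b k k' h
    funext m
    exact congrFun h (m+1)
  have heD : ∀ k k', e false k ≠ e true k' := by
    intro k k' h
    have h0 := congrFun h 0
    simp only [he] at h0
    exact Bool.false_ne_true h0
  set f0 : (ℕ → Bool) → G := fun k => φ (e false k) with hf0
  set f1 : (ℕ → Bool) → G := fun k => φ (e true k) with hf1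
  have hf0i : Function.Injective f0 := fun k k' h => heI false (hφi h)
  have hf1i : Function.Injective f1 := fun k k' h => heI true (hφi h)
  set C0 : Set G := Set.range f0 with hC0
  set C1 : Set G := Set.range f1 with hC1
  -- the key cross lemma
  have hcross : ∀ (a c b d : ℕ → Bool), f0 a - f0 c = f1 b - f1 d → a = c := by
    intro a c b d h
    by_contra hac
    have hbd : b ≠ d := by
      intro hbd; subst hbd
      rw [sub_self, sub_eq_zero] at h
      exact hac (hf0i h)
    have heq : φ (e false a) + φ (e true d) = φ (e false c) + φ (e true b) := by
      rw [sub_eq_sub_iff_add_eq_add] at h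
      exact h.trans (add_comm _ _)
    exact hφs (e false a) (e true d) (e false c) (e true b)
      (heD a d)
      (fun hh => hac (heI false hh))
      (heD a b)
      ((heD c d).symm)
      (fun hh => hbd ((heI true hh).symm))
      (heD c b)
      heq
  -- translates
  set T0 : G → Set G := fun h => (fun b => h + b) '' C0 with hT0
  set T1 : G → Set G := fun h => (fun b => h + b) '' C1 with hT1
  have hsubsing : ∀ g h : G, (T0 g ∩ T1 h).Subsingleton := by
    intro g h u hu v hv
    obtain ⟨⟨a, ha, hau⟩, ⟨b, hb, hbu⟩⟩ := hu
    obtain ⟨⟨a', ha', hav⟩, ⟨b', hb', hbv⟩⟩ := hv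
    obtain ⟨ka, rfl⟩ := ha
    obtain ⟨ka', rfl⟩ := ha'
    obtain ⟨kb, rfl⟩ := hb
    obtain ⟨kb', rfl⟩ := hb'
    have h1 : u - v = f0 ka - f0 ka' := by
      rw [← hau, ← hav]; beta_reduce; abel
    have h2 : u - v = f1 kb - f1 kb' := by
      rw [← hbu, ← hbv]; beta_reduce; abel
    have := hcross ka ka' kb kb' (h1.symm.trans h2)
    subst this
    rw [← hau, ← hav]
  -- cardinality and the injection into ω₁
  have hCH' : Cardinal.continuum.{u_1} = Cardinal.aleph 1 := by
    have := congrArg (Cardinal.lift.{u_1, 0}) hCH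
    rwa [Cardinal.lift_continuum, Cardinal.lift_aleph, Ordinal.lift_one] at this
  have hcard : Cardinal.mk G ≤ Cardinal.aleph 1 := by
    have h1 : Cardinal.mk G ≤ Cardinal.continuum := nhm_mk_le_continuum
    rwa [hCH'] at h1
  have hcard2 : Cardinal.mk G ≤ Cardinal.mk ((Cardinal.aleph 1).ord.ToType) := by
    rwa [Cardinal.mk_ord_toType]
  obtain ⟨ι⟩ := (Cardinal.le_def _ _).mp hcard2
  have hseg : ∀ g : G, {h : G | ι h ≤ ι g}.Countable := by
    intro g
    have hIic : (Set.Iic (ι g)).Countable := by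
      have h1 : (Set.Iio (ι g)).Countable := by
        rw [Cardinal.countable_iff_lt_aleph_one]
        exact Cardinal.mk_Iio_ord_toType (ι g)
      have hsub : Set.Iic (ι g) ⊆ insert (ι g) (Set.Iio (ι g)) := by
        intro y hy
        rcases lt_or_eq_of_le (show y ≤ ι g from hy) with h | h
        · exact Set.mem_insert_of_mem _ h
        · exact h ▸ Set.mem_insert _ _
      exact ((h1.insert _).mono hsub)
    have : {h : G | ι h ≤ ι g} = ι ⁻¹' (Set.Iic (ι g)) := rfl
    rw [this]
    exact hIic.preimage ι.injective
  -- the set X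
  set X : Set G := ⋃ h : G, (T1 h \ ⋃ h' ∈ {h' : G | ι h' ≤ ι h}, T0 h') with hX
  have claimA : ∀ g : G, X ∩ T0 g ⊆ ⋃ h ∈ {h : G | ι h ≤ ι g}, (T0 g ∩ T1 h) := by
    intro g x hx
    obtain ⟨hxX, hxT0⟩ := hx
    obtain ⟨h, hx1⟩ := Set.mem_iUnion.mp hxX
    obtain ⟨hx2, hx3⟩ := hx1
    have hlt : ι h ≤ ι g := by
      by_contra hcon
      push_neg at hcon
      exact hx3 (Set.mem_biUnion (le_of_lt hcon) hxT0)
    exact Set.mem_biUnion hlt ⟨hxT0, hx2⟩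
  have claimB : ∀ g : G, T1 g \ X ⊆ ⋃ h ∈ {h : G | ι h ≤ ι g}, (T0 h ∩ T1 g) := by
    intro g x hx
    obtain ⟨hx1, hx2⟩ := hx
    have hmem : x ∈ ⋃ h' ∈ {h' : G | ι h' ≤ ι g}, T0 h' := by
      by_contra hcon
      exact hx2 (Set.mem_iUnion.mpr ⟨g, hx1, hcon⟩)
    obtain ⟨h, hh, hx0⟩ := Set.mem_iUnion₂.mp hmem
    exact Set.mem_biUnion hh ⟨hx0, hx1⟩
  -- X is naively Haar meager via f0
  have hXmeager : IsNaivelyAddHaarMeager X := by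
    refine ⟨(ℕ → Bool), inferInstance, inferInstance, inferInstance, inferInstance,
      f0, hφc.comp (heC false), ?_⟩
    intro x
    have hsub0 : f0 ⁻¹' ((fun b => x + b) '' X) ⊆
        ⋃ h ∈ {h : G | ι h ≤ ι (-x)}, f0 ⁻¹' ((fun b => x + b) '' (T0 (-x) ∩ T1 h)) := by
      intro k hk
      obtain ⟨w, hwX, hwx⟩ := hk
      have hw : w = -x + f0 k := by rw [← hwx]; rw [neg_add_cancel_left]
      have hw0 : w ∈ T0 (-x) := ⟨f0 k, Set.mem_range_self k, hw.symm⟩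
      have := claimA (-x) ⟨hwX, hw0⟩
      obtain ⟨h, hh, hw1⟩ := Set.mem_iUnion₂.mp this
      exact Set.mem_biUnion hh ⟨w, hw1, hwx⟩
    refine IsMeagre.mono hsub0 ?_
    apply nhm_isMeagre_biUnion (hseg (-x))
    intro h _
    apply nhm_subsingleton_isMeagre
    apply Set.Subsingleton.preimage _ hf0i
    exact (hsubsing (-x) h).image _
  -- Xᶜ is naively Haar meager via f1
  have hXcmeager : IsNaivelyAddHaarMeager Xᶜ := by
    refine ⟨(ℕ → Bool), inferInstance, inferInstance, inferInstance, inferInstance,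
      f1, hφc.comp (heC true), ?_⟩
    intro x
    have hsub1 : f1 ⁻¹' ((fun b => x + b) '' Xᶜ) ⊆
        ⋃ h ∈ {h : G | ι h ≤ ι (-x)}, f1 ⁻¹' ((fun b => x + b) '' (T0 h ∩ T1 (-x))) := by
      intro k hk
      obtain ⟨w, hwX, hwx⟩ := hk
      have hw : w = -x + f1 k := by rw [← hwx]; rw [neg_add_cancel_left]
      have hw1 : w ∈ T1 (-x) := ⟨f1 k, Set.mem_range_self k, hw.symm⟩
      have := claimB (-x) ⟨hw1, hwX⟩
      obtain ⟨h, hh, hw2⟩ := Set.mem_iUnion₂.mp this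
      exact Set.mem_biUnion hh ⟨w, hw2, hwx⟩
    refine IsMeagre.mono hsub1 ?_
    apply nhm_isMeagre_biUnion (hseg (-x))
    intro h _
    apply nhm_subsingleton_isMeagre
    apply Set.Subsingleton.preimage _ hf1i
    exact (hsubsing h (-x)).image _
  refine ⟨⟨X, hXmeager, hXcmeager⟩, ?_⟩
  intro hIdeal
  have huniv := hIdeal X Xᶜ hXmeager hXcmeager
  rw [Set.union_compl_self] at huniv
  obtain ⟨K, tK, hcomp, hmetr, hne, f, hf, hmeager⟩ := huniv
  have h0 := hmeager 0
  have himg : (fun b => (0:G) + b) '' (Set.univ : Set G) = Set.univ := by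
    simp
  rw [himg, Set.preimage_univ] at h0
  letI := tK
  haveI := hcomp
  haveI := hmetr
  haveI := hne
  letI : MetricSpace K := TopologicalSpace.metrizableSpaceMetric K
  haveI : CompleteSpace K := complete_of_compact
  rw [IsMeagre, Set.compl_univ] at h0
  exact Set.not_nonempty_empty ((dense_of_mem_residual h0).nonempty)
end

section
/- Let G be a Polish group and let H be an uncountable closed subgroup of G which is contained in the center of G. Suppose that H (viewed as an abelian Polish group with the subspace topology) is the union of a set which is Haar null in H and a set which is Haar meager in H. Then G is the union of a set which is Haar null in G and a set which is Haar meager in G. -/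
/-- A set `A` in a Polish group `G` is *Haar null* if there are a Borel set `B ⊇ A` and a
Borel probability measure `μ` on `G` such that `μ (g • B • h) = 0` for all `g, h ∈ G`. -/
def IsHaarNull {G : Type*} [Group G] [TopologicalSpace G] (A : Set G) : Prop :=
  ∃ B : Set G, A ⊆ B ∧ @MeasurableSet G (borel G) B ∧
    ∃ μ : @MeasureTheory.Measure G (borel G),
      @MeasureTheory.IsProbabilityMeasure G (borel G) μ ∧
      ∀ g h : G, μ ((fun b => g * b * h) '' B) = 0

section AuxHaarDecomp

open Set Metric MeasureTheory Filter Topology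

namespace HaarDecomp

variable {G : Type*} [MetricSpace G]

open scoped Classical in
noncomputable def sel (u : ℕ → G) (k : ℕ) (T : Set G) : ℕ :=
  if h : ∃ n, (T ∩ Metric.ball (u n) ((2:ℝ)⁻¹ ^ k)).Nonempty then Nat.find h else 0

noncomputable def DD (u : ℕ → G) : ℕ → Set G → Set G
  | 0, S => S
  | k+1, S => DD u k S ∩ Metric.ball (u (sel u k (DD u k S))) ((2:ℝ)⁻¹ ^ k)

lemma sel_spec {u : ℕ → G} (hu : DenseRange u) {T : Set G} (hT : T.Nonempty) (k : ℕ) :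
    (T ∩ Metric.ball (u (sel u k T)) ((2:ℝ)⁻¹ ^ k)).Nonempty := by
  classical
  obtain ⟨y, hy⟩ := hT
  obtain ⟨n, hn⟩ := hu.exists_dist_lt y (by positivity : (0:ℝ) < (2:ℝ)⁻¹ ^ k)
  have h : ∃ n, (T ∩ Metric.ball (u n) ((2:ℝ)⁻¹ ^ k)).Nonempty :=
    ⟨n, y, hy, by simpa [Metric.mem_ball] using hn⟩
  rw [sel, dif_pos h]
  exact Nat.find_spec h

lemma DD_subset (u : ℕ → G) (S : Set G) : ∀ k, DD u k S ⊆ S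
  | 0 => subset_rfl
  | k+1 => Set.inter_subset_left.trans (DD_subset u S k)

lemma DD_nonempty {u : ℕ → G} (hu : DenseRange u) {S : Set G} (hS : S.Nonempty) :
    ∀ k, (DD u k S).Nonempty
  | 0 => hS
  | k+1 => sel_spec hu (DD_nonempty hu hS k) k

lemma DD_succ_subset (u : ℕ → G) (S : Set G) (k : ℕ) :
    DD u (k+1) S ⊆ Metric.ball (u (sel u k (DD u k S))) ((2:ℝ)⁻¹ ^ k) :=
  Set.inter_subset_right

lemma DD_anti (u : ℕ → G) (S : Set G) : ∀ {j k}, j ≤ k → DD u k S ⊆ DD u j S := by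
  intro j k h
  induction k with
  | zero => rw [Nat.le_zero.1 h]
  | succ k ih =>
    rcases Nat.lt_or_ge j (k+1) with h' | h'
    · exact Set.inter_subset_left.trans (ih (Nat.lt_succ_iff.1 h'))
    · rw [Nat.le_antisymm h h']

open scoped Classical in
noncomputable def yseq (u : ℕ → G) (S : Set G) [Nonempty G] (k : ℕ) : G :=
  if h : (DD u k S).Nonempty then h.some else Classical.arbitrary G

lemma yseq_mem {u : ℕ → G} {S : Set G} [Nonempty G] {k : ℕ} (h : (DD u k S).Nonempty) :
    yseq u S k ∈ DD u k S := by
  rw [yseq, dif_pos h]; exact h.some_mem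

noncomputable def rho (u : ℕ → G) (S : Set G) [Nonempty G] : G :=
  limUnder atTop (yseq u S)

lemma yseq_mem_ball {u : ℕ → G} (hu : DenseRange u) {S : Set G} (hS : S.Nonempty) [Nonempty G]
    {k m : ℕ} (hm : k + 1 ≤ m) :
    yseq u S m ∈ Metric.ball (u (sel u k (DD u k S))) ((2:ℝ)⁻¹ ^ k) :=
  DD_succ_subset u S k (DD_anti u S hm (yseq_mem (DD_nonempty hu hS m)))

lemma rho_tendsto {u : ℕ → G} (hu : DenseRange u) {S : Set G} (hS : S.Nonempty)
    [Nonempty G] [CompleteSpace G] :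
    Tendsto (yseq u S) atTop (𝓝 (rho u S)) := by
  have hcauchy : CauchySeq (yseq u S) := by
    rw [Metric.cauchySeq_iff']
    intro ε hε
    obtain ⟨k, hk⟩ : ∃ k, ((2:ℝ)⁻¹) ^ k < ε / 2 :=
      exists_pow_lt_of_lt_one (by linarith) (by norm_num)
    refine ⟨k + 1, fun n hn => ?_⟩
    have h1 := Metric.mem_ball.1 (yseq_mem_ball hu hS hn)
    have h2 := Metric.mem_ball.1 (yseq_mem_ball hu hS (le_refl (k+1)))
    calc dist (yseq u S n) (yseq u S (k+1))
        ≤ dist (yseq u S n) (u (sel u k (DD u k S)))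
          + dist (yseq u S (k+1)) (u (sel u k (DD u k S))) := dist_triangle_right _ _ _
      _ < (2:ℝ)⁻¹ ^ k + (2:ℝ)⁻¹ ^ k := add_lt_add h1 h2
      _ < ε := by linarith
  obtain ⟨x, hx⟩ := cauchySeq_tendsto_of_complete hcauchy
  rwa [rho, hx.limUnder_eq]

lemma rho_mem_closure {u : ℕ → G} (hu : DenseRange u) {S : Set G} (hS : S.Nonempty)
    [Nonempty G] [CompleteSpace G] : rho u S ∈ closure S :=
  mem_closure_of_tendsto (rho_tendsto hu hS)
    (Filter.Eventually.of_forall fun k => DD_subset u S k (yseq_mem (DD_nonempty hu hS k)))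

lemma rho_dist {u : ℕ → G} (hu : DenseRange u) {S : Set G} (hS : S.Nonempty)
    [Nonempty G] [CompleteSpace G] (k : ℕ) :
    dist (rho u S) (u (sel u k (DD u k S))) ≤ (2:ℝ)⁻¹ ^ k := by
  refine le_of_tendsto ((rho_tendsto hu hS).dist tendsto_const_nhds) ?_
  refine Filter.eventually_atTop.2 ⟨k + 1, fun m hm => ?_⟩
  exact le_of_lt (Metric.mem_ball.1 (yseq_mem_ball hu hS hm))

end HaarDecomp

namespace HaarDecomp

theorem exists_tau {G : Type*} [Group G] [TopologicalSpace G] [IsTopologicalGroup G]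
    [PolishSpace G] (H : Subgroup G) (hclosed : IsClosed (H : Set G)) :
    ∃ τ : G → G, @Measurable G G (borel G) (borel G) τ ∧ (∀ g, τ g ∈ H) ∧
      ∀ g x : G, x ∈ H → τ (g * x) = τ g * x := by
  classical
  letI := TopologicalSpace.upgradeIsCompletelyMetrizable G
  haveI : Nonempty G := ⟨1⟩
  obtain ⟨u, hu⟩ := TopologicalSpace.exists_dense_seq G
  set C : G → Set G := fun g => {x | g⁻¹ * x ∈ H} with hC
  have hCg : ∀ g, g ∈ C g := fun g => by
    simp only [hC, mem_setOf_eq, inv_mul_cancel]; exact H.one_mem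
  have hCne : ∀ g, (C g).Nonempty := fun g => ⟨g, hCg g⟩
  have hCclosed : ∀ g, IsClosed (C g) := fun g =>
    hclosed.preimage (continuous_const.mul continuous_id)
  have hCcoset : ∀ g x, x ∈ H → C (g * x) = C g := by
    intro g x hx
    ext y
    simp only [hC, mem_setOf_eq]
    rw [show (g * x)⁻¹ * y = x⁻¹ * (g⁻¹ * y) by group]
    exact H.mul_mem_cancel_left (H.inv_mem hx)
  set N : ℕ → G → ℕ := fun k g => sel u k (DD u k (C g)) with hN
  set ρ : G → G := fun g => rho u (C g) with hρ
  have hρ_dist : ∀ g k, dist (ρ g) (u (N k g)) ≤ (2:ℝ)⁻¹ ^ k := fun g k =>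
    rho_dist hu (hCne g) k
  have hρ_mem : ∀ g, ρ g ∈ C g := fun g => by
    have := rho_mem_closure hu (hCne g)
    rwa [(hCclosed g).closure_eq] at this
  letI mb : MeasurableSpace G := borel G
  haveI : BorelSpace G := ⟨rfl⟩
  have hmeet : ∀ W : Set G, IsOpen W → MeasurableSet {g | (C g ∩ W).Nonempty} := by
    intro W hW
    have heq : {g | (C g ∩ W).Nonempty} = ⋃ h ∈ (H : Set G), (fun w => w * h⁻¹) '' W := by
      ext g
      simp only [mem_setOf_eq, mem_iUnion, Set.mem_image, exists_prop]
      constructor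
      · rintro ⟨x, hx, hxW⟩
        exact ⟨g⁻¹ * x, hx, x, hxW, by group⟩
      · rintro ⟨h, hh, w, hwW, rfl⟩
        refine ⟨w, ?_, hwW⟩
        show (w * h⁻¹)⁻¹ * w ∈ H
        rw [show (w * h⁻¹)⁻¹ * w = h by group]
        exact hh
    rw [heq]
    exact (isOpen_biUnion fun h _ => isOpenMap_mul_right h⁻¹ W hW).measurableSet
  have hDD_eq : ∀ k g, DD u k (C g) =
      C g ∩ ⋂ j : Fin k, Metric.ball (u (N j g)) ((2:ℝ)⁻¹ ^ (j:ℕ)) := by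
    intro k
    induction k with
    | zero => intro g; simp [DD]
    | succ k ih =>
      intro g
      have : DD u (k+1) (C g) =
          DD u k (C g) ∩ Metric.ball (u (sel u k (DD u k (C g)))) ((2:ℝ)⁻¹ ^ k) := rfl
      have hsel : sel u k (DD u k (C g)) = N k g := rfl
      rw [this, hsel, ih g]
      ext x
      simp only [mem_inter_iff, mem_iInter, Fin.forall_fin_succ', Fin.coe_castSucc,
        Fin.val_last]
      tauto
  have hNex : ∀ (k : ℕ) (g : G),
      ∃ n, (DD u k (C g) ∩ Metric.ball (u n) ((2:ℝ)⁻¹ ^ k)).Nonempty := by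
    intro k g
    obtain ⟨y, hy⟩ := DD_nonempty hu (hCne g) k
    obtain ⟨n, hn⟩ := hu.exists_dist_lt y (by positivity : (0:ℝ) < (2:ℝ)⁻¹ ^ k)
    exact ⟨n, y, hy, by simpa [Metric.mem_ball] using hn⟩
  have hNfind : ∀ k g, N k g = Nat.find (hNex k g) := by
    intro k g
    show sel u k (DD u k (C g)) = _
    rw [sel, dif_pos (hNex k g)]
  have hNmeas : ∀ k, Measurable (N k) := by
    intro k
    induction k using Nat.strong_induction_on with
    | _ k ih =>
      have hE : ∀ n, MeasurableSet
          {g | (DD u k (C g) ∩ Metric.ball (u n) ((2:ℝ)⁻¹ ^ k)).Nonempty} := by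
        intro n
        have heq : {g | (DD u k (C g) ∩ Metric.ball (u n) ((2:ℝ)⁻¹ ^ k)).Nonempty}
            = ⋃ v : Fin k → ℕ, ((⋂ j : Fin k, {g | N j g = v j}) ∩
              {g | (C g ∩ ((⋂ j : Fin k, Metric.ball (u (v j)) ((2:ℝ)⁻¹ ^ (j:ℕ))) ∩
                Metric.ball (u n) ((2:ℝ)⁻¹ ^ k))).Nonempty}) := by
          ext g
          simp only [mem_setOf_eq, mem_iUnion, mem_inter_iff, mem_iInter]
          constructor
          · intro hne
            refine ⟨fun j => N j g, fun j => rfl, ?_⟩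
            rw [hDD_eq k g] at hne
            rwa [inter_assoc] at hne
          · rintro ⟨v, hv, hne⟩
            rw [hDD_eq k g, inter_assoc]
            simp only [hv]
            exact hne
        rw [heq]
        refine MeasurableSet.iUnion fun v => MeasurableSet.inter ?_ ?_
        · exact MeasurableSet.iInter fun j =>
            (ih j j.2) (measurableSet_singleton (v j))
        · exact hmeet _ (((isOpen_iInter_of_finite fun j => Metric.isOpen_ball).inter
            Metric.isOpen_ball))
      have : N k = fun g => Nat.find (hNex k g) := funext (hNfind k)
      rw [this]
      exact measurable_find _ hE
  have hρmeas : Measurable ρ := by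
    refine measurable_of_tendsto_metrizable
      (f := fun k g => u (N k g)) (fun k => measurable_from_nat.comp (hNmeas k)) ?_
    rw [tendsto_pi_nhds]
    intro g
    rw [tendsto_iff_dist_tendsto_zero]
    refine squeeze_zero (g := fun k => (2:ℝ)⁻¹ ^ k) (fun k => dist_nonneg) (fun k => ?_) ?_
    · rw [dist_comm]; exact hρ_dist g k
    · exact tendsto_pow_atTop_nhds_zero_of_lt_one (by norm_num) (by norm_num)
  refine ⟨fun g => (ρ g)⁻¹ * g, ?_, ?_, ?_⟩
  · have hcont : Continuous fun p : G × G => p.1⁻¹ * p.2 :=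
      (continuous_fst.inv).mul continuous_snd
    exact hcont.measurable.comp (hρmeas.prodMk measurable_id)
  · intro g
    have h1 : g⁻¹ * ρ g ∈ H := hρ_mem g
    have h2 := H.inv_mem h1
    rwa [mul_inv_rev, inv_inv] at h2
  · intro g x hx
    have hρeq : ρ (g * x) = ρ g := by
      show rho u (C (g * x)) = rho u (C g)
      rw [hCcoset g x hx]
    show (ρ (g * x))⁻¹ * (g * x) = (ρ g)⁻¹ * g * x
    rw [hρeq, mul_assoc]

end HaarDecomp

end AuxHaarDecomp

/-- If `H` is an uncountable closed central subgroup of a Polish group `G` and `H` (as a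
Polish group with the subspace topology) is the union of a Haar null set and a Haar meager
set, then so is `G`. -/
theorem union_haarNull_haarMeager_of_central_subgroup {G : Type*} [Group G]
    [TopologicalSpace G] [IsTopologicalGroup G] [PolishSpace G]
    (H : Subgroup G) (hclosed : IsClosed (H : Set G)) (hcentral : H ≤ Subgroup.center G)
    (huncount : ¬ Countable ↥H)
    (hH : ∃ A B : Set ↥H, IsHaarNull A ∧ IsHaarMeager B ∧ A ∪ B = Set.univ) :
    ∃ A B : Set G, IsHaarNull A ∧ IsHaarMeager B ∧ A ∪ B = Set.univ := by
  classical
  obtain ⟨τ, hτmeas, hτmem, hτeq⟩ := HaarDecomp.exists_tau H hclosed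
  letI mG : MeasurableSpace G := borel G
  haveI : BorelSpace G := ⟨rfl⟩
  haveI hPH : PolishSpace ↥H := IsClosed.polishSpace hclosed
  letI mH : MeasurableSpace ↥H := borel ↥H
  haveI : BorelSpace ↥H := ⟨rfl⟩
  obtain ⟨A₀, B₀, hA₀, hB₀, hun⟩ := hH
  obtain ⟨BA, hABA, hBAm, μ, hμprob, hμ⟩ := hA₀
  obtain ⟨BB, hBBB, hBBm, K, tK, hKc, hKm, hKne, f, hfc, hmg⟩ := hB₀
  haveI := hμprob
  have hιemb : MeasurableEmbedding (Subtype.val : ↥H → G) :=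
    continuous_subtype_val.measurableEmbedding Subtype.val_injective
  set τ' : G → ↥H := fun g => ⟨τ g, hτmem g⟩ with hτ'def
  have hτ'meas : Measurable τ' := by
    refine measurable_generateFrom ?_
    intro t ht
    obtain ⟨U, hU, rfl⟩ := isOpen_induced_iff.1 (ht : IsOpen t)
    exact hτmeas hU.measurableSet
  set SA : Set G := τ' ⁻¹' BA with hSA
  set SB : Set G := τ' ⁻¹' BB with hSB
  have hSAm : MeasurableSet SA := hτ'meas hBAm
  have hSBm : MeasurableSet SB := hτ'meas hBBm
  have himg : ∀ (g h : G) (S : Set G),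
      (fun b => g * b * h) '' S = (fun y => g⁻¹ * y * h⁻¹) ⁻¹' S := by
    intro g h S
    ext y
    simp only [Set.mem_image, Set.mem_preimage]
    constructor
    · rintro ⟨b, hb, rfl⟩
      rwa [show g⁻¹ * (g * b * h) * h⁻¹ = b by group]
    · intro hy
      exact ⟨g⁻¹ * y * h⁻¹, hy, by group⟩
  have key : ∀ (g h : G) (E : Set ↥H),
      (Subtype.val : ↥H → G) ⁻¹' ((fun y => g⁻¹ * y * h⁻¹) ⁻¹' (τ' ⁻¹' E))
      = (fun b => (⟨τ (g⁻¹ * h⁻¹), hτmem _⟩ : ↥H)⁻¹ * b * 1) '' E := by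
    intro g h E
    ext x
    set c : ↥H := ⟨τ (g⁻¹ * h⁻¹), hτmem _⟩ with hc
    have hcomm : h⁻¹ * (x : G) = (x : G) * h⁻¹ :=
      Subgroup.mem_center_iff.1 (hcentral x.2) h⁻¹
    have harg : g⁻¹ * (x : G) * h⁻¹ = (g⁻¹ * h⁻¹) * (x : G) := by
      rw [mul_assoc, ← hcomm, ← mul_assoc]
    have hτval : τ (g⁻¹ * (x : G) * h⁻¹) = τ (g⁻¹ * h⁻¹) * (x : G) := by
      rw [harg]; exact hτeq _ _ x.2
    have hτ'arg : τ' (g⁻¹ * (x : G) * h⁻¹) = c * x := Subtype.ext (by simpa using hτval)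
    simp only [Set.mem_preimage, Set.mem_image]
    rw [hτ'arg]
    constructor
    · intro hx
      exact ⟨c * x, hx, by group⟩
    · rintro ⟨b, hb, rfl⟩
      rwa [show c * (c⁻¹ * b * 1) = b by group]
  refine ⟨SA, SB, ⟨SA, subset_rfl, hSAm, MeasureTheory.Measure.map Subtype.val μ, ?_, ?_⟩,
    ⟨SB, subset_rfl, hSBm, K, tK, hKc, hKm, hKne, Subtype.val ∘ f,
      continuous_subtype_val.comp hfc, ?_⟩, ?_⟩
  · exact MeasureTheory.Measure.isProbabilityMeasure_map hιemb.measurable.aemeasurable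
  · intro g h
    rw [himg g h SA]
    have hm : Measurable fun y : G => g⁻¹ * y * h⁻¹ :=
      ((continuous_const.mul continuous_id).mul continuous_const).measurable
    rw [MeasureTheory.Measure.map_apply hιemb.measurable (hm hSAm)]
    rw [hSA, key g h BA]
    exact hμ _ 1
  · intro g h
    rw [himg g h SB]
    have : (Subtype.val ∘ f) ⁻¹' ((fun y => g⁻¹ * y * h⁻¹) ⁻¹' SB)
        = f ⁻¹' ((fun b => (⟨τ (g⁻¹ * h⁻¹), hτmem _⟩ : ↥H)⁻¹ * b * 1) '' BB) := by
      rw [Set.preimage_comp, hSB, key g h BB]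
    rw [this]
    exact hmg _ 1
  · ext g
    simp only [Set.mem_union, Set.mem_univ, iff_true]
    have hg : τ' g ∈ A₀ ∪ B₀ := hun ▸ Set.mem_univ _
    rcases hg with h | h
    · exact Or.inl (hABA h)
    · exact Or.inr (hBBB h)
end

section
/- Every nontrivial separable real Banach space X, regarded as an additive Polish group, is the union of a Haar null set and a Haar meager set: there exist A, B ⊆ X with A Haar null, B Haar meager, and A ∪ B = X. -/
open Set MeasureTheory Topology

-- helper: preimage of nowhere dense set under inclusion Icc 0 1 → ℝ is nowhere dense
lemma nwd_preimage {t : Set ℝ} (ht : IsNowhereDense t) :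
    IsNowhereDense ((Subtype.val : (Icc (0:ℝ) 1) → ℝ) ⁻¹' t) := by
  rw [IsNowhereDense, eq_empty_iff_forall_notMem]
  intro a ha
  have hsub : closure ((Subtype.val : (Icc (0:ℝ) 1) → ℝ) ⁻¹' t)
      ⊆ Subtype.val ⁻¹' (closure t) := continuous_subtype_val.closure_preimage_subset t
  have h1 : Subtype.val ⁻¹' (closure t) ∈ 𝓝 a :=
    Filter.mem_of_superset (mem_interior_iff_mem_nhds.1 ha) hsub
  rw [nhds_induced] at h1
  obtain ⟨V, hV, hVsub⟩ := h1
  obtain ⟨ε, hε, hball⟩ := Metric.mem_nhds_iff.1 hV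
  set p : ℝ := (a : ℝ)
  have hp : p ∈ Icc (0:ℝ) 1 := a.2
  -- the open interval
  set l := max (p - ε) 0
  set r := min (p + ε) 1
  have hlr : l < r := by
    simp only [l, r, max_lt_iff, lt_min_iff]
    refine ⟨⟨?_, ?_⟩, ?_, ?_⟩ <;> linarith [hp.1, hp.2, hε]
  have hIoo : Ioo l r ⊆ closure t := by
    intro q hq
    have hqV : q ∈ V := by
      apply hball
      rw [Metric.mem_ball, Real.dist_eq, abs_lt]
      constructor
      · have := hq.1; have : l ≤ p - ε ∨ True := Or.inr trivial
        have := le_max_left (p - ε) 0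
        nlinarith [hq.1, le_max_left (p - ε) 0]
      · nlinarith [hq.2, min_le_left (p + ε) 1]
    have hqI : q ∈ Icc (0:ℝ) 1 :=
      ⟨le_of_lt (lt_of_le_of_lt (le_max_right _ _) hq.1),
       le_of_lt (lt_of_lt_of_le hq.2 (min_le_right _ _))⟩
    exact hVsub (show (⟨q, hqI⟩ : Icc (0:ℝ) 1) ∈ Subtype.val ⁻¹' V from hqV)
  have : (Ioo l r).Nonempty := nonempty_Ioo.2 hlr
  obtain ⟨q, hq⟩ := this
  have : q ∈ interior (closure t) :=
    interior_maximal hIoo isOpen_Ioo hq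
  rw [ht] at this
  exact this

lemma meagre_preimage {S : Set ℝ} (hS : IsMeagre S) :
    IsMeagre ((Subtype.val : (Icc (0:ℝ) 1) → ℝ) ⁻¹' S) := by
  rw [isMeagre_iff_countable_union_isNowhereDense] at hS ⊢
  obtain ⟨T, hTnwd, hTct, hsub⟩ := hS
  refine ⟨(fun t => Subtype.val ⁻¹' t) '' T, ?_, hTct.image _, ?_⟩
  · rintro _ ⟨t, ht, rfl⟩; exact nwd_preimage (hTnwd t ht)
  · intro a ha
    obtain ⟨t, ht, hat⟩ := hsub (ha : (a : ℝ) ∈ S)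
    exact ⟨Subtype.val ⁻¹' t, ⟨t, ht, rfl⟩, hat⟩

/-- A set `A` in an abelian Polish group `G` is *Haar meager* if there are a Borel set `B ⊇ A`,
a nonempty compact metrizable space `K` and a continuous map `f : K → G` such that
`f ⁻¹' (x + B)` is meager in `K` for every `x ∈ G`. -/
def IsAddHaarMeager {G : Type*} [AddGroup G] [TopologicalSpace G] (A : Set G) : Prop :=
  ∃ B : Set G, A ⊆ B ∧ @MeasurableSet G (borel G) B ∧
    ∃ (K : Type) (tK : TopologicalSpace K),
      @CompactSpace K tK ∧ @TopologicalSpace.MetrizableSpace K tK ∧ Nonempty K ∧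
      ∃ f : K → G, @Continuous K G tK _ f ∧
        ∀ x : G, @IsMeagre K tK (f ⁻¹' ((fun b => x + b) '' B))

/-- A set `A` in an abelian Polish group `G` is *Haar null* if there are a Borel set `B ⊇ A`
and a Borel probability measure `μ` on `G` such that `μ (x + B) = 0` for every `x ∈ G`. -/
def IsAddHaarNull {G : Type*} [AddGroup G] [TopologicalSpace G] (A : Set G) : Prop :=
  ∃ B : Set G, A ⊆ B ∧ @MeasurableSet G (borel G) B ∧
    ∃ μ : @MeasureTheory.Measure G (borel G),
      @MeasureTheory.IsProbabilityMeasure G (borel G) μ ∧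
      ∀ x : G, μ ((fun b => x + b) '' B) = 0

/-- Every nontrivial separable real Banach space, as an additive Polish group, is the union
of a Haar null set and a Haar meager set. -/
theorem banach_union_haarNull_haarMeager {X : Type*} [NormedAddCommGroup X]
    [NormedSpace ℝ X] [CompleteSpace X] [TopologicalSpace.SeparableSpace X] [Nontrivial X] :
    ∃ A B : Set X, IsAddHaarNull A ∧ IsAddHaarMeager B ∧ A ∪ B = Set.univ := by
  letI : MeasurableSpace X := borel X
  haveI : BorelSpace X := ⟨rfl⟩
  obtain ⟨u, hu⟩ := exists_ne (0 : X)
  obtain ⟨g, _hg1, hgu⟩ := exists_dual_vector ℝ u (norm_ne_zero_iff.2 hu)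
  have hnu : (‖u‖ : ℝ) ≠ 0 := norm_ne_zero_iff.2 hu
  obtain ⟨v, hv⟩ : ∃ v : X, g v = 1 :=
    ⟨‖u‖⁻¹ • u, by rw [g.map_smul, smul_eq_mul, hgu]; exact inv_mul_cancel₀ hnu⟩
  set N : Set ℝ := {x : ℝ | Liouville x} with hN_def
  have hNmeas : MeasurableSet N := IsGδ.setOf_liouville.measurableSet
  set A : Set X := ⇑g ⁻¹' N with hA_def
  set B : Set X := ⇑g ⁻¹' Nᶜ with hB_def
  have hgm : Measurable (⇑g) := g.continuous.measurable
  have hAmeas : MeasurableSet A := hgm hNmeas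
  have hBmeas : MeasurableSet B := hgm hNmeas.compl
  have hfmeas : Measurable (fun t : ℝ => t • v) :=
    (continuous_id.smul continuous_const).measurable
  refine ⟨A, B, ?_, ?_, ?_⟩
  · -- Haar null
    refine ⟨A, subset_rfl, hAmeas,
      Measure.map (fun t : ℝ => t • v) (volume.restrict (Icc 0 1)), ?_, ?_⟩
    · constructor
      rw [Measure.map_apply hfmeas MeasurableSet.univ, preimage_univ,
        Measure.restrict_apply MeasurableSet.univ, univ_inter, Real.volume_Icc]
      norm_num
    · intro x
      have himg : (fun b => x + b) '' A = (fun b => -x + b) ⁻¹' A := Set.image_add_left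
      rw [himg]
      have hmeasS : MeasurableSet ((fun b : X => -x + b) ⁻¹' A) :=
        (measurable_const_add (-x)) hAmeas
      rw [Measure.map_apply hfmeas hmeasS]
      have hpre : (fun t : ℝ => t • v) ⁻¹' ((fun b : X => -x + b) ⁻¹' A)
          = (fun t : ℝ => -g x + t) ⁻¹' N := by
        ext t
        simp only [hA_def, mem_preimage, map_add, map_neg, g.map_smul, smul_eq_mul, hv, mul_one]
      rw [Measure.restrict_apply (by rw [hpre]; exact (measurable_const_add _) hNmeas)]
      refine measure_mono_null inter_subset_left ?_
      rw [hpre, measure_preimage_add]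
      exact volume_setOf_liouville
  · -- Haar meager
    refine ⟨B, subset_rfl, hBmeas, ↥(Icc (0:ℝ) 1), inferInstance, inferInstance, inferInstance,
      ⟨⟨0, by norm_num⟩⟩, fun k => (k : ℝ) • v, continuous_subtype_val.smul continuous_const, ?_⟩
    intro x
    have himg : (fun b => x + b) '' B = (fun b => -x + b) ⁻¹' B := Set.image_add_left
    have hpre : (fun k : Icc (0:ℝ) 1 => (k : ℝ) • v) ⁻¹' ((fun b : X => -x + b) ⁻¹' B)
        = Subtype.val ⁻¹' ((fun t : ℝ => -g x + t) ⁻¹' Nᶜ) := by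
      ext k
      simp only [hB_def, mem_preimage, map_add, map_neg, g.map_smul, smul_eq_mul, hv, mul_one]
    rw [himg, hpre]
    apply meagre_preimage
    have hM : IsMeagre (Nᶜ : Set ℝ) := by
      rw [IsMeagre, compl_compl]
      exact eventually_residual_liouville
    exact hM.preimage_of_isOpenMap ((Homeomorph.addLeft (-g x)).continuous) (Homeomorph.addLeft (-g x)).isOpenMap
  · ext y
    simp [hA_def, hB_def, em]
end

section
/- The additive Polish group ℤ^ℕ (integer sequences with coordinatewise addition and the product topology) is the union of a Haar null set and a Haar meager set: there exist A, B ⊆ ℤ^ℕ with A Haar null, B Haar meager, and A ∪ B = ℤ^ℕ. -/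
open MeasureTheory Topology TopologicalSpace

instance (n : ℕ) : IsTopologicalAddGroup (ZMod n) where
  continuous_add := continuous_of_discreteTopology
  continuous_neg := continuous_of_discreteTopology
instance (n : ℕ) : MeasurableSpace (ZMod n) := ⊤
instance (n : ℕ) : BorelSpace (ZMod n) := ⟨borel_eq_top_of_discrete.symm⟩

/-- The compact group `Π n, ZMod (2^n)`. -/
abbrev HD.G0 : Type := ∀ n : ℕ, ZMod (2 ^ n)

namespace HD

/-- The canonical Haar probability measure on `G0`. -/
noncomputable abbrev nu : Measure G0 := Measure.addHaarMeasure ⊤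

lemma nu_univ : nu Set.univ = 1 := by
  have := Measure.addHaarMeasure_self (K₀ := (⊤ : PositiveCompacts G0))
  simpa using this

instance : IsProbabilityMeasure nu := ⟨nu_univ⟩

/-- The embedding of `G0` into `ℤ^ℕ` via `val`. -/
def g : G0 → (ℕ → ℤ) := fun w n => ((w n).val : ℤ)

lemma continuous_g : Continuous g := by
  apply continuous_pi
  intro n
  exact (continuous_of_discreteTopology (α := ZMod (2^n))
    (f := fun z => (z.val : ℤ))).comp (continuous_apply n)

lemma measurable_g : Measurable g := continuous_g.measurable

/-- Key divisibility fact. -/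
lemma dvd_iff_eq (n : ℕ) (k : ZMod (2^n)) (c : ℤ) :
    ((2:ℤ)^n ∣ (k.val : ℤ) - c) ↔ k = (c : ZMod (2^n)) := by
  have h2 : ((2:ℤ)^n) = (((2^n : ℕ) : ℤ)) := by push_cast; ring
  rw [h2, ← ZMod.intCast_zmod_eq_zero_iff_dvd]
  push_cast
  rw [sub_eq_zero]
  constructor
  · intro h
    rw [← ZMod.natCast_rightInverse k, ← h]
  · intro h
    rw [ZMod.natCast_rightInverse k, h]

/-- The fibers of a coordinate all have measure `(2^m)⁻¹`. -/
lemma nu_fiber (m : ℕ) (a : ZMod (2^m)) :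
    nu ((fun w : G0 => w m) ⁻¹' {a}) = ((2:ENNReal)^m)⁻¹ := by
  set S : ZMod (2^m) → Set G0 := fun b => (fun w : G0 => w m) ⁻¹' {b} with hS
  have hmeas : ∀ b, MeasurableSet (S b) :=
    fun b => (measurable_pi_apply m) (measurableSet_singleton b)
  have hconst : ∀ b, nu (S b) = nu (S a) := by
    intro b
    have hset : S b = (fun w : G0 => (Function.update (0 : G0) m (a - b)) + w) ⁻¹' (S a) := by
      ext w
      simp only [S, Set.mem_preimage, Set.mem_singleton_iff, Pi.add_apply,
        Function.update_self]
      constructor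
      · intro h; rw [h]; ring
      · intro h; linear_combination h
    rw [hset, measure_preimage_add]
  have hdisj : Pairwise (Function.onFun Disjoint S) := by
    intro b c hbc
    refine Set.disjoint_left.mpr (fun w hw hw' => hbc ?_)
    simp only [S, Set.mem_preimage, Set.mem_singleton_iff] at hw hw'
    rw [← hw, ← hw']
  have hunion : (⋃ b, S b) = Set.univ := by
    ext w; simp [S]
  have h1 : (1 : ENNReal) = ∑' b : ZMod (2^m), nu (S b) := by
    rw [← measure_iUnion hdisj hmeas, hunion, nu_univ]
  rw [tsum_fintype] at h1
  simp only [hconst] at h1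
  rw [Finset.sum_const, Finset.card_univ, ZMod.card] at h1
  have h2 : ((2:ENNReal)^m) ≠ 0 := by positivity
  have h3 : ((2:ENNReal)^m) ≠ ⊤ := (ENNReal.pow_lt_top (n := m) (by norm_num)).ne
  have h4 : ((2^m : ℕ) : ENNReal) = (2:ENNReal)^m := by push_cast; ring
  rw [nsmul_eq_mul, h4] at h1
  calc nu (S a) = ((2:ENNReal)^m)⁻¹ * ((2:ENNReal)^m * nu (S a)) := by
        rw [← mul_assoc, ENNReal.inv_mul_cancel h2 h3, one_mul]
    _ = ((2:ENNReal)^m)⁻¹ := by rw [← h1, mul_one]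

/-- The Borel set: sequences divisible by `2^n` at infinitely many coordinates `n`. -/
def A : Set (ℕ → ℤ) := {y | ∀ N, ∃ n, N ≤ n ∧ (2:ℤ)^n ∣ y n}

def E (x : ℕ → ℤ) (n : ℕ) : Set (ℕ → ℤ) := {z | (2:ℤ)^n ∣ z n - x n}

lemma measurableSet_E (x : ℕ → ℤ) (n : ℕ) : MeasurableSet (E x n) := by
  have h : E x n = (fun z : ℕ → ℤ => z n) ⁻¹' {t : ℤ | (2:ℤ)^n ∣ t - x n} := rfl
  rw [h]
  exact (measurable_pi_apply n) ((Set.to_countable _).measurableSet)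

lemma measurableSet_A : MeasurableSet A := by
  have h : A = ⋂ N, ⋃ n, ⋃ (_ : N ≤ n), (fun y : ℕ → ℤ => y n) ⁻¹' {t | (2:ℤ)^n ∣ t} := by
    ext y; simp [A]
  rw [h]
  exact MeasurableSet.iInter fun N => MeasurableSet.iUnion fun n =>
    MeasurableSet.iUnion fun _ => (measurable_pi_apply n) ((Set.to_countable _).measurableSet)

lemma image_add (x : ℕ → ℤ) (T : Set (ℕ → ℤ)) :
    (fun b => x + b) '' T = {z | z - x ∈ T} := by
  ext z
  constructor
  · rintro ⟨b, hb, rfl⟩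
    simpa [add_sub_cancel_left] using hb
  · intro hz
    exact ⟨z - x, hz, by ring⟩

lemma tsum_inv_pow_two : ∑' n : ℕ, ((2:ENNReal)^n)⁻¹ = 2 := by
  have h : ∀ n : ℕ, ((2:ENNReal)^n)⁻¹ = ((2:ENNReal)⁻¹)^n := fun n => ENNReal.inv_pow
  simp_rw [h]
  rw [ENNReal.tsum_geometric, ENNReal.one_sub_inv_two]
  simp

lemma tendsto_aux : Filter.Tendsto (fun N : ℕ => (2:ENNReal) * ((2:ENNReal)^N)⁻¹)
    Filter.atTop (𝓝 0) := by
  have h : Filter.Tendsto (fun N : ℕ => ((2:ENNReal)⁻¹)^N) Filter.atTop (𝓝 0) :=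
    ENNReal.tendsto_pow_atTop_nhds_zero_of_lt_one (by norm_num)
  have h2 := ENNReal.Tendsto.const_mul (a := (2:ENNReal)) h (Or.inr (by norm_num))
  rw [mul_zero] at h2
  have h3 : ∀ N : ℕ, (2:ENNReal) * ((2:ENNReal)⁻¹)^N = 2 * ((2:ENNReal)^N)⁻¹ := by
    intro N; rw [← ENNReal.inv_pow]
  simpa [h3] using h2

lemma g_preimage_E (x : ℕ → ℤ) (m : ℕ) :
    g ⁻¹' (E x m) = (fun w : G0 => w m) ⁻¹' {((x m : ZMod (2^m)))} := by
  ext w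
  simp only [Set.mem_preimage, Set.mem_singleton_iff, E, Set.mem_setOf_eq, g]
  exact dvd_iff_eq m (w m) (x m)

/-- The pushforward measure kills every translate of `A`. -/
lemma map_null (x : ℕ → ℤ) : (Measure.map g nu) ((fun b => x + b) '' A) = 0 := by
  have hEbound : ∀ m, (Measure.map g nu) (E x m) = ((2:ENNReal)^m)⁻¹ := by
    intro m
    rw [Measure.map_apply measurable_g (measurableSet_E x m), g_preimage_E, nu_fiber]
  have hsub : ∀ N : ℕ, ((fun b => x + b) '' A) ⊆ ⋃ n, E x (N + n) := by
    intro N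
    rw [image_add]
    intro z hz
    obtain ⟨n, hn, hd⟩ := hz N
    refine Set.mem_iUnion.mpr ⟨n - N, ?_⟩
    have hNn : N + (n - N) = n := by omega
    simp only [E, Set.mem_setOf_eq, hNn]
    simpa [Pi.sub_apply] using hd
  have hN : ∀ N : ℕ, (Measure.map g nu) ((fun b => x + b) '' A)
      ≤ (2:ENNReal) * ((2:ENNReal)^N)⁻¹ := by
    intro N
    calc (Measure.map g nu) ((fun b => x + b) '' A)
        ≤ (Measure.map g nu) (⋃ n, E x (N + n)) := measure_mono (hsub N)
      _ ≤ ∑' n, (Measure.map g nu) (E x (N + n)) := measure_iUnion_le _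
      _ = ∑' n : ℕ, ((2:ENNReal)^(N+n))⁻¹ := by simp_rw [hEbound]
      _ = ((2:ENNReal)^N)⁻¹ * ∑' n : ℕ, ((2:ENNReal)^n)⁻¹ := by
          rw [← ENNReal.tsum_mul_left]
          congr 1
          ext n
          rw [pow_add, ENNReal.mul_inv (Or.inl (by positivity))
            (Or.inl (ENNReal.pow_lt_top (n := N) (by norm_num)).ne)]
      _ = ((2:ENNReal)^N)⁻¹ * 2 := by rw [tsum_inv_pow_two]
      _ = (2:ENNReal) * ((2:ENNReal)^N)⁻¹ := by ring
  have hle : (Measure.map g nu) ((fun b => x + b) '' A) ≤ 0 := ge_of_tendsto' tendsto_aux hN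
  exact le_antisymm hle (zero_le)

/-- The closed sets witnessing meagerness. -/
def C (x : ℕ → ℤ) (N : ℕ) : Set G0 := {k | ∀ n, N ≤ n → k n ≠ ((x n : ZMod (2^n)))}

lemma isClosed_C (x : ℕ → ℤ) (N : ℕ) : IsClosed (C x N) := by
  have h : C x N = ⋂ n, ⋂ (_ : N ≤ n),
      (fun k : G0 => k n) ⁻¹' ({((x n : ZMod (2^n)))}ᶜ) := by
    ext k; simp [C]
  rw [h]
  exact isClosed_iInter fun n => isClosed_iInter fun _ =>
    IsClosed.preimage (continuous_apply n) (isClosed_discrete _)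

lemma dense_compl_C (x : ℕ → ℤ) (N : ℕ) : Dense ((C x N)ᶜ) := by
  rw [dense_iff_inter_open]
  intro U hU hUne
  obtain ⟨k, hk⟩ := hUne
  obtain ⟨F, u, hFu, hsub⟩ := isOpen_pi_iff.mp hU k hk
  set n0 : ℕ := N + (F.sup id) + 1 with hn0
  have hn0N : N ≤ n0 := by omega
  have hn0F : n0 ∉ F := by
    intro h
    have := Finset.le_sup (f := id) h
    simp only [id] at this
    omega
  refine ⟨Function.update k n0 ((x n0 : ZMod (2^n0))), ?_, ?_⟩
  · apply hsub
    intro i hi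
    rw [Function.update_of_ne (by rintro rfl; exact hn0F hi)]
    exact (hFu i hi).2
  · simp only [Set.mem_compl_iff, C, Set.mem_setOf_eq, not_forall]
    exact ⟨n0, hn0N, by simp [Function.update_self]⟩

lemma isMeagre_C (x : ℕ → ℤ) (N : ℕ) : IsMeagre (C x N) :=
  residual_of_dense_open (isClosed_C x N).isOpen_compl (dense_compl_C x N)

lemma preimage_compl (x : ℕ → ℤ) :
    g ⁻¹' ((fun b => x + b) '' Aᶜ) = ⋃ N, C x N := by
  rw [image_add]
  ext w
  simp only [Set.mem_preimage, Set.mem_setOf_eq, Set.mem_compl_iff, A, Set.mem_iUnion,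
    not_forall, C]
  constructor
  · rintro ⟨N, hN⟩
    push_neg at hN
    refine ⟨N, fun n hn => ?_⟩
    have h1 := hN n hn
    intro he
    exact h1 (by simpa [g, Pi.sub_apply] using (dvd_iff_eq n (w n) (x n)).mpr he)
  · rintro ⟨N, hN⟩
    refine ⟨N, ?_⟩
    push_neg
    intro n hn hd
    exact hN n hn ((dvd_iff_eq n (w n) (x n)).mp (by simpa [g, Pi.sub_apply] using hd))

lemma isMeagre_preimage (x : ℕ → ℤ) : IsMeagre (g ⁻¹' ((fun b => x + b) '' Aᶜ)) := by
  rw [preimage_compl]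
  exact isMeagre_iUnion (fun N => isMeagre_C x N)

end HD

/-- The additive Polish group `ℤ^ℕ` is the union of a Haar null set and a Haar meager set. -/
theorem intSeq_union_haarNull_haarMeager :
    ∃ A B : Set (ℕ → ℤ), IsAddHaarNull A ∧ IsAddHaarMeager B ∧ A ∪ B = Set.univ := by
  have hbor : borel (ℕ → ℤ) = (inferInstance : MeasurableSpace (ℕ → ℤ)) :=
    BorelSpace.measurable_eq.symm
  refine ⟨HD.A, HD.Aᶜ, ?_, ?_, Set.union_compl_self _⟩
  · rw [IsAddHaarNull, hbor]
    exact ⟨HD.A, subset_rfl, HD.measurableSet_A, MeasureTheory.Measure.map HD.g HD.nu,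
      MeasureTheory.Measure.isProbabilityMeasure_map HD.measurable_g.aemeasurable, HD.map_null⟩
  · rw [IsAddHaarMeager, hbor]
    exact ⟨HD.Aᶜ, subset_rfl, HD.measurableSet_A.compl, HD.G0, inferInstance,
      inferInstance, inferInstance, inferInstance, HD.g, HD.continuous_g,
      HD.isMeagre_preimage⟩
end
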